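/- arXiv:1208.3566 — 13 statements merged into one kernel-verified Lean document; each statement's English description precedes it below -/
import Mathlib

section
/- Let G be a finite group such that the index [G : [G,G]] of the commutator subgroup of G in G is odd (G is 2-perfect). Then no Sylow 2-subgroup of G is of GK type. -/
/-- A finite `p`-group is of Gorenstein-Kulkarni (GK) type if the set of its elements of
non-maximal order is the underlying set of a maximal subgroup. -/
def IsGKType (P : Type*) [Group P] : Prop :=
  ∃ K : Subgroup P, IsCoatom K ∧ (K : Set P) = {x : P | orderOf x < Monoid.exponent P}

open MulAction Subgroup Function MonoidHom

theorem stmt_1 (G : Type*) [Group G] [Finite G]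
    (hodd : Odd (commutator G).index) :
    ∀ P : Sylow 2 G, ¬ IsGKType (P : Subgroup G) := by
  haveI : Fact (Nat.Prime 2) := ⟨Nat.prime_two⟩
  intro P hGK
  set H : Subgroup G := (P : Subgroup G) with hHdef
  obtain ⟨K, hKco, hKset⟩ := hGK
  -- membership characterization
  have hmem : ∀ z : H, z ∈ K ↔ orderOf z < Monoid.exponent H := by
    intro z
    constructor
    · intro hz
      have : z ∈ (K : Set H) := hz
      rw [hKset] at this
      exact this
    · intro hz
      have : z ∈ (K : Set H) := by rw [hKset]; exact hz
      exact this
  have hexp1 : 1 < Monoid.exponent H := by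
    have := (hmem 1).mp K.one_mem
    simpa using this
  have hP2 : IsPGroup 2 H := P.isPGroup'
  -- exponent is a power of two
  obtain ⟨n, hn⟩ := hP2.exists_card_eq
  letI : Fintype H := Fintype.ofFinite H
  have hdvd : Monoid.exponent H ∣ 2 ^ n := by
    rw [← hn, Nat.card_eq_fintype_card]
    exact Group.exponent_dvd_card
  obtain ⟨e, _, hexp⟩ := (Nat.dvd_prime_pow Nat.prime_two).mp hdvd
  have hepos : 0 < e := by
    by_contra h
    push_neg at h
    interval_cases e
    simp [hexp] at hexp1
  -- an element of maximal order
  obtain ⟨x, hx⟩ : ∃ x : H, x ∉ K := by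
    by_contra h
    push_neg at h
    exact hKco.1 ((Subgroup.eq_top_iff' K).mpr h)
  have hxo : orderOf x = Monoid.exponent H :=
    le_antisymm (Nat.le_of_dvd (lt_trans one_pos hexp1) (Monoid.order_dvd_exponent x))
      (le_of_not_gt fun h => hx ((hmem x).mpr h))
  set g : G := (x : G) with hgdef
  have hg : orderOf g = 2 ^ e := by
    rw [hgdef, Subgroup.orderOf_coe, hxo, hexp]
  have hmemK : ∀ w : H, orderOf (w : G) < 2 ^ e → w ∈ K := by
    intro w hw
    refine (hmem w).mpr ?_
    rwa [Subgroup.orderOf_coe w, ← hexp] at hw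
  have hnotK : ∀ w : H, orderOf (w : G) = 2 ^ e → w ∉ K := by
    intro w hw hwK
    have := (hmem w).mp hwK
    rw [← Subgroup.orderOf_coe w, hw, hexp] at this
    exact lt_irrefl _ this
  have hlt : 2 ^ (e - 1) < 2 ^ e := Nat.pow_lt_pow_right one_lt_two (Nat.sub_lt hepos one_pos)
  have hsmall : ∀ m : ℕ, 2 ∣ m → orderOf (g ^ m) ≤ 2 ^ (e - 1) := by
    intro m ⟨j, hj⟩
    have h1 : (g ^ m) ^ 2 ^ (e - 1) = 1 := by
      rw [← pow_mul]
      have hme : m * 2 ^ (e - 1) = orderOf g * j := by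
        rw [hg, hj]
        have : e - 1 + 1 = e := Nat.succ_pred_eq_of_pos hepos
        calc 2 * j * 2 ^ (e - 1) = (2 ^ (e - 1) * 2) * j := by ring
          _ = 2 ^ e * j := by rw [← pow_succ, this]
      rw [hme, pow_mul, pow_orderOf_eq_one, one_pow]
    exact Nat.le_of_dvd (Nat.pow_pos two_pos) (orderOf_dvd_of_pow_eq_one h1)
  -- normality of K
  haveI : Group.IsNilpotent ↥H := hP2.isNilpotent
  haveI : K.Normal :=
    NormalizerCondition.normal_of_coatom K normalizerCondition_of_isNilpotent hKco
  set t : ↥H ⧸ K := QuotientGroup.mk x with htdef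
  have ht1 : t ≠ 1 := fun h => hx ((QuotientGroup.eq_one_iff x).mp h)
  have hx2 : x ^ 2 ∈ K := by
    apply hmemK
    have : ((x ^ 2 : H) : G) = g ^ 2 := rfl
    rw [this]
    exact lt_of_le_of_lt (hsmall 2 ⟨1, rfl⟩) hlt
  have ht2 : t ^ 2 = 1 := by
    rw [htdef, ← QuotientGroup.mk_pow]
    exact (QuotientGroup.eq_one_iff _).mpr hx2
  -- every element of the quotient is a power of t
  have hgen : ∀ q : ↥H ⧸ K, q ∈ Subgroup.zpowers t := by
    have hle : K ≤ Subgroup.comap (QuotientGroup.mk' K) (Subgroup.zpowers t) := by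
      intro z hz
      have : (QuotientGroup.mk' K) z = 1 := (QuotientGroup.eq_one_iff z).mpr hz
      rw [Subgroup.mem_comap, this]
      exact Subgroup.one_mem _
    have hne : K ≠ Subgroup.comap (QuotientGroup.mk' K) (Subgroup.zpowers t) := by
      intro h
      apply hx
      rw [h, Subgroup.mem_comap]
      exact Subgroup.mem_zpowers _
    have htop := hKco.2 _ (lt_of_le_of_ne hle hne)
    intro q
    obtain ⟨z, rfl⟩ := QuotientGroup.mk'_surjective K q
    have : z ∈ Subgroup.comap (QuotientGroup.mk' K) (Subgroup.zpowers t) := by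
      rw [htop]; trivial
    exact this
  have hC : ∀ c : ↥H ⧸ K, c ≠ 1 → c = t := by
    intro c hc
    obtain ⟨m, hm⟩ := Subgroup.mem_zpowers_iff.mp (hgen c)
    have h2z : t ^ (2 : ℤ) = 1 := by
      rw [show (2 : ℤ) = ((2 : ℕ) : ℤ) from rfl, zpow_natCast, ht2]
    rcases Int.even_or_odd m with ⟨j, hj⟩ | ⟨j, hj⟩
    · exfalso
      apply hc
      rw [← hm, hj, ← two_mul, zpow_mul, h2z, one_zpow]
    · rw [← hm, hj, zpow_add, zpow_one, zpow_mul, h2z, one_zpow, one_mul]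
  have htodd : ∀ m : ℕ, Odd m → t ^ m = t := by
    intro m ⟨j, hj⟩
    rw [hj, pow_add, pow_mul, ht2, one_pow, pow_one, one_mul]
  have hteven : ∀ m : ℕ, 2 ∣ m → t ^ m = 1 := by
    intro m ⟨j, hj⟩
    rw [hj, pow_mul, ht2, one_pow]
  -- commutative group structure on the quotient
  haveI : IsCyclic (↥H ⧸ K) := ⟨⟨t, hgen⟩⟩
  letI : CommGroup (↥H ⧸ K) := IsCyclic.commGroup
  -- key computation of each transfer factor
  have key : ∀ (w : ↥H) (m : ℕ), orderOf (w : G) = orderOf (g ^ m) →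
      (QuotientGroup.mk' K) w = t ^ m := by
    intro w m hw
    rcases Nat.even_or_odd m with hm | hm
    · have hwK : w ∈ K := by
        apply hmemK
        rw [hw]
        exact lt_of_le_of_lt (hsmall m hm.two_dvd) hlt
      have h1 : (QuotientGroup.mk' K) w = 1 := (QuotientGroup.eq_one_iff w).mpr hwK
      rw [h1, hteven m hm.two_dvd]
    · have hcop : (orderOf g).Coprime m := by
        rw [hg]
        exact Nat.Coprime.pow_left _
          ((Nat.Prime.coprime_iff_not_dvd Nat.prime_two).mpr
            (by intro h; obtain ⟨c, hc⟩ := h; obtain ⟨d, hd⟩ := hm; omega))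
      have hwo : orderOf (w : G) = 2 ^ e := by
        rw [hw, hcop.orderOf_pow, hg]
      have hne1 : (QuotientGroup.mk' K) w ≠ 1 := fun h =>
        hnotK w hwo ((QuotientGroup.eq_one_iff w).mp h)
      rw [hC _ hne1, htodd m hm]
  -- the transfer evaluation
  haveI : H.FiniteIndex := inferInstance
  letI : Fintype (Quotient (orbitRel (Subgroup.zpowers g) (G ⧸ H))) := Fintype.ofFinite _
  have hsum : ∑ q : Quotient (orbitRel (Subgroup.zpowers g) (G ⧸ H)),
      minimalPeriod (g • ·) q.out = H.index := by
    classical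
    letI := H.fintypeQuotientOfFiniteIndex
    rw [index_eq_card, Nat.card_eq_fintype_card,
      Fintype.card_congr (selfEquivSigmaOrbits (Subgroup.zpowers g) (G ⧸ H)),
      Fintype.card_sigma]
    refine Finset.sum_congr rfl fun q _ => ?_
    rw [minimalPeriod_eq_card]
    exact Fintype.card_congr (Equiv.refl _)
  have hindexodd : Odd H.index := by
    have hnd : ¬ 2 ∣ H.index := P.not_dvd_index
    rcases Nat.even_or_odd H.index with ⟨r, hr⟩ | h
    · exact absurd ⟨r, by omega⟩ hnd
    · exact h
  have htr : transfer (QuotientGroup.mk' K) g = t := by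
    rw [transfer_eq_prod_quotient_orbitRel_zpowers_quot]
    calc (∏ q : Quotient (orbitRel (Subgroup.zpowers g) (G ⧸ H)),
          (QuotientGroup.mk' K) ⟨q.out.out⁻¹ * g ^ minimalPeriod (g • ·) q.out * q.out.out,
            QuotientGroup.out_conj_pow_minimalPeriod_mem H g q.out⟩)
        = ∏ q : Quotient (orbitRel (Subgroup.zpowers g) (G ⧸ H)),
            t ^ minimalPeriod (g • ·) q.out := by
          refine Finset.prod_congr rfl fun q _ => ?_
          refine key _ _ ?_
          have hsc : SemiconjBy (q.out.out)⁻¹ (g ^ minimalPeriod (g • ·) q.out)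
              ((q.out.out)⁻¹ * g ^ minimalPeriod (g • ·) q.out * q.out.out) := by
            unfold SemiconjBy
            group
          exact (SemiconjBy.orderOf_eq _ hsc).symm
      _ = t ^ ∑ q : Quotient (orbitRel (Subgroup.zpowers g) (G ⧸ H)),
            minimalPeriod (g • ·) q.out := Finset.prod_pow_eq_pow_sum _ _ _
      _ = t ^ H.index := by rw [hsum]
      _ = t := htodd _ hindexodd
  -- conclude
  have hmemc : g ^ (commutator G).index ∈ commutator G :=
    Subgroup.pow_index_mem (commutator G) g
  have h1 : transfer (QuotientGroup.mk' K) (g ^ (commutator G).index) = 1 :=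
    Abelianization.commutator_subset_ker _ hmemc
  rw [map_pow, htr] at h1
  have hot : orderOf t = 2 := orderOf_eq_prime ht2 ht1
  have h2d : 2 ∣ (commutator G).index := hot ▸ orderOf_dvd_of_pow_eq_one h1
  obtain ⟨k, hk⟩ := hodd
  obtain ⟨l, hl⟩ := h2d
  omega
end

section
/- Let p be a prime and G a finite p-group of exponent p^e with e ≥ 1. Assume G is powerful, i.e. [G,G] ≤ G^p if p is odd, and [G,G] ≤ G^4 if p = 2, where for m ∈ ℕ, G^m denotes the subgroup of G generated by all m-th powers. Then the map G → G, x ↦ x^(p^(e-1)), is a group homomorphism; consequently the set 𝒦(G) := {x ∈ G : orderOf x < p^e} of elements of non-maximal order is a normal subgroup of G containing [G,G], so that G/𝒦(G) is abelian, i.e. G has the maximum exponent property. -/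
/-- For a group `G` and `m : ℕ`, `powSubgroup G m` is the subgroup of `G` generated by
all `m`-th powers of elements of `G`. -/
def powSubgroup (G : Type*) [Group G] (m : ℕ) : Subgroup G :=
  Subgroup.closure (Set.range fun x : G => x ^ m)


universe u

open scoped commutatorElement

section helpers

variable {G : Type u} [Group G] {H : Type u} [Group H]

lemma pow_mem_powSubgroup (g : G) (m : ℕ) : g ^ m ∈ powSubgroup G m :=
  Subgroup.subset_closure ⟨g, rfl⟩

lemma powSubgroup_le {m : ℕ} {K : Subgroup G} (h : ∀ g : G, g ^ m ∈ K) :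
    powSubgroup G m ≤ K := by
  rw [powSubgroup, Subgroup.closure_le]
  rintro _ ⟨g, rfl⟩
  exact h g

lemma powSubgroup_mul_le (m k : ℕ) : powSubgroup G (k * m) ≤ powSubgroup G m := by
  refine powSubgroup_le fun g => ?_
  rw [mul_comm, pow_mul]
  exact Subgroup.pow_mem _ (pow_mem_powSubgroup g m) k

lemma map_powSubgroup (f : G →* H) (hf : Function.Surjective f) (m : ℕ) :
    (powSubgroup G m).map f = powSubgroup H m := by
  rw [powSubgroup, MonoidHom.map_closure]
  congr 1
  ext y
  constructor
  · rintro ⟨_, ⟨x, rfl⟩, rfl⟩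
    exact ⟨f x, (map_pow f x m).symm⟩
  · rintro ⟨x, rfl⟩
    obtain ⟨g, rfl⟩ := hf x
    exact ⟨g ^ m, ⟨g, rfl⟩, map_pow f g m⟩

lemma mem_powSubgroup_map (f : G →* H) {g : G} {m : ℕ} (hg : g ∈ powSubgroup G m) :
    f g ∈ powSubgroup H m := by
  have := Subgroup.mem_map_of_mem f hg
  rw [powSubgroup, MonoidHom.map_closure] at this
  refine Subgroup.closure_mono ?_ this
  rintro _ ⟨_, ⟨x, rfl⟩, rfl⟩
  exact ⟨f x, (map_pow f x m).symm⟩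

instance powSubgroup_normal (m : ℕ) : (powSubgroup G m).Normal := by
  constructor
  intro x hx g
  have : (MulAut.conj g).toMonoidHom x ∈ powSubgroup G m :=
    mem_powSubgroup_map _ hx
  simpa [MulAut.conj] using this

lemma commutator_le_powSubgroup_map (f : G →* H) (hf : Function.Surjective f) (m : ℕ)
    (h : commutator G ≤ powSubgroup G m) : commutator H ≤ powSubgroup H m := by
  rw [commutator_def, ← Subgroup.map_top_of_surjective f hf, ← Subgroup.map_commutator,
    ← commutator_def, ← map_powSubgroup f hf m]
  exact Subgroup.map_mono h

end helpers

section identities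

variable {G : Type u} [Group G]

lemma central_pow_swap {d : G} (hd : ∀ t : G, d * t = t * d) (j : ℕ) (t : G) :
    d ^ j * t = t * d ^ j := by
  induction j with
  | zero => simp
  | succ j ihj => rw [pow_succ, mul_assoc, hd, ← mul_assoc, ihj, mul_assoc]

lemma comm_swap_pow {a b d : G} (hd : ∀ t : G, d * t = t * d)
    (hba : b * a = d * (a * b)) (k : ℕ) : b ^ k * a = d ^ k * (a * b ^ k) := by
  have sw := central_pow_swap hd
  induction k with
  | zero => simp
  | succ k ih =>
    rw [pow_succ' b, mul_assoc, ih, ← mul_assoc b, ← sw k b, mul_assoc, ← mul_assoc b a, hba]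
    group

lemma central_collect {a b d : G} (hd : ∀ t : G, d * t = t * d)
    (hba : b * a = d * (a * b)) (k : ℕ) :
    (a * b) ^ k = a ^ k * b ^ k * d ^ (k.choose 2) := by
  have sw := central_pow_swap hd
  induction k with
  | zero => simp
  | succ k ih =>
    have hc : (k+1).choose 2 = k.choose 2 + k := by
      rw [Nat.choose_succ_succ k 1, Nat.choose_one_right, Nat.add_comm]
    rw [pow_succ (a*b), ih, hc, mul_assoc (a^k*b^k) (d^(k.choose 2)) (a*b),
      sw (k.choose 2) (a*b)]
    have e1 : a^k*b^k*(a*b*d^(k.choose 2)) = a^k * (b^k*a) * (b*d^(k.choose 2)) := by group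
    rw [e1, comm_swap_pow hd hba k]
    have e2 : a^k * (d^k*(a*b^k)) * (b*d^(k.choose 2))
        = a^k * (d^k * (a*b^k*(b*d^(k.choose 2)))) := by group
    rw [e2, sw k (a*b^k*(b*d^(k.choose 2))), pow_add]
    group

lemma commutator_pow_left_collect {c y v z : G} (hv : v = ⁅c, y⁆) (hz : z = ⁅c, v⁆)
    (hzc : ∀ t : G, z * t = t * z) (k : ℕ) :
    ⁅c ^ k, y⁆ = v ^ k * z ^ (k.choose 2) := by
  have sw := central_pow_swap hzc
  have hcv : c * v * c⁻¹ = z * v := by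
    rw [hz, commutatorElement_def]; group
  have hpow : ∀ k : ℕ, c * v ^ k * c⁻¹ = z ^ k * v ^ k := by
    intro k
    induction k with
    | zero => simp
    | succ k ih2 =>
      have e0 : c * v ^ (k+1) * c⁻¹ = (c * v ^ k * c⁻¹) * (c * v * c⁻¹) := by
        rw [pow_succ]; group
      rw [e0, ih2, hcv]
      have e1 : z ^ k * v ^ k * (z * v) = z ^ k * (v ^ k * z) * v := by group
      rw [e1, ← hzc (v^k)]
      group
  induction k with
  | zero => simp
  | succ k ih =>
    have hc : (k+1).choose 2 = k.choose 2 + k := by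
      rw [Nat.choose_succ_succ k 1, Nat.choose_one_right, Nat.add_comm]
    have step : ⁅c ^ (k+1), y⁆ = c * ⁅c ^ k, y⁆ * c⁻¹ * v := by
      rw [hv]; simp only [commutatorElement_def]; group
    rw [step, ih, hc]
    have e1 : c * (v ^ k * z ^ (k.choose 2)) * c⁻¹ * v
        = (c * v ^ k * c⁻¹) * (c * (z ^ (k.choose 2) * c⁻¹) * v) := by group
    rw [e1, hpow k, sw (k.choose 2) c⁻¹]
    have e2 : z ^ k * v ^ k * (c * (c⁻¹ * z ^ (k.choose 2)) * v)
        = z ^ k * (v ^ k * (z ^ (k.choose 2) * v)) := by group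
    rw [e2, sw k (v ^ k * (z ^ (k.choose 2) * v)), sw (k.choose 2) v, pow_add]
    group

end identities

section central

variable {G : Type u} [Group G]

lemma exists_central_of_order {p : ℕ} (hp : p.Prime) [Finite G] [Nontrivial G]
    (hG : IsPGroup p G) : ∃ z : G, z ∈ Subgroup.center G ∧ orderOf z = p := by
  have : Fact p.Prime := ⟨hp⟩
  have hcnt : Nontrivial (Subgroup.center G) := hG.center_nontrivial
  have hcp : IsPGroup p (Subgroup.center G) := hG.to_subgroup _
  obtain ⟨n, hn0, hn⟩ := hcp.nontrivial_iff_card.mp hcnt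
  obtain ⟨z, hz⟩ := exists_prime_orderOf_dvd_card' (G := Subgroup.center G) p
    (hn ▸ dvd_pow_self _ hn0.ne')
  refine ⟨(z : G), z.2, ?_⟩
  rw [← hz]
  exact (Subgroup.orderOf_coe z).symm ▸ rfl

end central

section mainodd

lemma choose_two_prime_odd {p : ℕ} (hp : p.Prime) (hodd : Odd p) :
    p.choose 2 = p * ((p - 1) / 2) := by
  rw [Nat.choose_two_right, Nat.mul_div_assoc]
  obtain ⟨k, hk⟩ := hodd
  omega

theorem A_odd (p : ℕ) (hp : p.Prime) (hodd : Odd p) :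
    ∀ n N : ℕ, ∀ (G : Type u) [Group G] [Finite G], Nat.card G ≤ N →
      commutator G ≤ powSubgroup G p → (∀ g : G, g ^ p ^ (n + 1) = 1) →
      ∀ x y : G, ⁅x ^ p ^ n, y⁆ = 1 := by
  intro n
  induction n with
  | zero =>
    intro N G _ _ _ hpow hexp x y
    simp only [pow_zero, pow_one]
    have hbot : powSubgroup G p = ⊥ := by
      rw [eq_bot_iff]
      refine powSubgroup_le fun g => ?_
      rw [Subgroup.mem_bot]
      simpa using hexp g
    have : ⁅x, y⁆ ∈ (⊥ : Subgroup G) := by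
      rw [← hbot]
      exact hpow (Subgroup.commutator_mem_commutator (Subgroup.mem_top x) (Subgroup.mem_top y))
    simpa [Subgroup.mem_bot] using this
  | succ n ihn =>
    intro N
    induction N with
    | zero =>
      intro G _ _ hcard
      have : 0 < Nat.card G := Nat.card_pos
      omega
    | succ N ihN =>
      intro G _ _ hcard hpow hexp x y
      by_cases hnt : Nontrivial G
      · -- get central element of order p
        have hPG : IsPGroup p G := fun g => ⟨n + 2, hexp g⟩
        obtain ⟨z, hzc, hzo⟩ := exists_central_of_order hp hPG
        set Z : Subgroup G := Subgroup.zpowers z with hZdef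
        have hZle : Z ≤ Subgroup.center G := Subgroup.zpowers_le.mpr hzc
        have hZnormal : Z.Normal := by
          refine ⟨fun a ha g => ?_⟩
          have hc := (Subgroup.mem_center_iff.mp (hZle ha)) g
          rw [hc, mul_assoc, mul_inv_cancel, mul_one]
          exact ha
        have hZp : ∀ a ∈ Z, a ^ p = 1 := by
          intro a ha
          obtain ⟨k, rfl⟩ := Subgroup.mem_zpowers_iff.mp ha
          rw [← zpow_natCast, ← zpow_mul, mul_comm, zpow_mul, zpow_natCast, ← hzo,
            pow_orderOf_eq_one z, one_zpow]
        have hZc : ∀ a ∈ Z, ∀ t : G, a * t = t * a := fun a ha t =>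
          ((Subgroup.mem_center_iff.mp (hZle ha)) t).symm
        -- quotient by Z
        let Q := G ⧸ Z
        let π : G →* Q := QuotientGroup.mk' Z
        have hπsurj : Function.Surjective π := QuotientGroup.mk'_surjective Z
        have hkerπ : ∀ w : G, π w = 1 ↔ w ∈ Z := by
          intro w
          rw [← MonoidHom.mem_ker, QuotientGroup.ker_mk']
        have hcardQ : Nat.card Q ≤ N := by
          have hmul := Subgroup.card_eq_card_quotient_mul_card_subgroup Z
          have hZ2 : 2 ≤ Nat.card Z := by
            have : Nontrivial Z := by
              refine ⟨⟨1, ⟨z, Subgroup.mem_zpowers z⟩, ?_⟩⟩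
              intro h
              have : (1 : G) = z := congrArg Subtype.val h
              rw [← this] at hzo
              rw [orderOf_one] at hzo
              exact hp.one_lt.ne hzo
            exact Finite.one_lt_card
          have hQpos : 0 < Nat.card Q := Nat.card_pos
          nlinarith [hmul, hcard]
        have hQexp : ∀ q : Q, q ^ p ^ (n + 1 + 1) = 1 := by
          intro q
          obtain ⟨g, rfl⟩ := hπsurj q
          rw [← map_pow, hexp g, map_one]
        have hQpow : commutator Q ≤ powSubgroup Q p :=
          commutator_le_powSubgroup_map π hπsurj p hpow
        have hQ : ∀ a b : Q, ⁅a ^ p ^ (n + 1), b⁆ = 1 := ihN Q hcardQ hQpow hQexp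
        have hNZ : ∀ a g : G, ⁅a ^ p ^ (n + 1), g⁆ ∈ Z := by
          intro a g
          rw [← hkerπ]
          rw [map_commutatorElement, map_pow]
          exact hQ (π a) (π g)
        -- the subgroup T
        let T : Subgroup G :=
          { carrier := {w : G | (∀ g : G, ⁅w, g⁆ ∈ Z) ∧ w ^ p = 1}
            one_mem' := ⟨fun g => by
              have h1 : ⁅(1 : G), g⁆ = 1 := by simp [commutatorElement_def]
              rw [h1]; exact Z.one_mem, one_pow p⟩
            mul_mem' := by
              rintro u w ⟨hu1, hu2⟩ ⟨hw1, hw2⟩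
              constructor
              · intro g
                have hid : ⁅u * w, g⁆ = u * ⁅w, g⁆ * u⁻¹ * ⁅u, g⁆ := by
                  simp only [commutatorElement_def]; group
                have hcen : u * ⁅w, g⁆ * u⁻¹ = ⁅w, g⁆ := by
                  rw [← hZc _ (hw1 g) u, mul_assoc, mul_inv_cancel, mul_one]
                rw [hid, hcen]
                exact Z.mul_mem (hw1 g) (hu1 g)
              · have hba : w * u = ⁅w, u⁆ * (u * w) := by
                  simp only [commutatorElement_def]; group
                have hd : ∀ t : G, ⁅w, u⁆ * t = t * ⁅w, u⁆ := hZc _ (hw1 u)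
                rw [central_collect hd hba p, hu2, hw2,
                  choose_two_prime_odd hp hodd, pow_mul, hZp _ (hw1 u), one_pow,
                  one_mul, one_mul]
            inv_mem' := by
              rintro u ⟨hu1, hu2⟩
              constructor
              · intro g
                have hid : ⁅u⁻¹, g⁆ = u⁻¹ * ⁅u, g⁆⁻¹ * u := by
                  simp only [commutatorElement_def]; group
                have hcen : u⁻¹ * ⁅u, g⁆⁻¹ * u = ⁅u, g⁆⁻¹ := by
                  rw [← hZc _ (Z.inv_mem (hu1 g)) u⁻¹, mul_assoc, inv_mul_cancel, mul_one]
                rw [hid, hcen]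
                exact Z.inv_mem (hu1 g)
              · rw [inv_pow, hu2, inv_one] }
        have hNT : powSubgroup G (p ^ (n + 1)) ≤ T := by
          refine powSubgroup_le fun g => ?_
          refine ⟨fun t => hNZ g t, ?_⟩
          rw [← pow_mul, ← pow_succ]
          exact hexp g
        -- quotient by the power subgroup
        set Npow : Subgroup G := powSubgroup G (p ^ (n + 1)) with hNdef
        let πN : G →* G ⧸ Npow := QuotientGroup.mk' Npow
        have hπNsurj : Function.Surjective πN := QuotientGroup.mk'_surjective Npow
        have hNexp : ∀ q : G ⧸ Npow, q ^ p ^ (n + 1) = 1 := by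
          intro q
          obtain ⟨g, rfl⟩ := hπNsurj q
          rw [← map_pow, ← MonoidHom.mem_ker, QuotientGroup.ker_mk']
          exact pow_mem_powSubgroup g _
        have hNpow : commutator (G ⧸ Npow) ≤ powSubgroup (G ⧸ Npow) p :=
          commutator_le_powSubgroup_map πN hπNsurj p hpow
        have hAq := ihn (Nat.card (G ⧸ Npow)) (G ⧸ Npow) le_rfl hNpow hNexp
        set c : G := x ^ p ^ n with hcdef
        set v : G := ⁅c, y⁆ with hvdef
        have hvN : v ∈ Npow := by
          rw [← QuotientGroup.ker_mk' Npow, MonoidHom.mem_ker]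
          show πN ⁅c, y⁆ = 1
          rw [map_commutatorElement]
          have : πN c = (πN x) ^ p ^ n := by rw [hcdef, map_pow]
          rw [this]
          exact hAq (πN x) (πN y)
        have hvT : (∀ g : G, ⁅v, g⁆ ∈ Z) ∧ v ^ p = 1 := hNT hvN
        have hzZ : ⁅c, v⁆ ∈ Z := by
          have : ⁅c, v⁆ = ⁅v, c⁆⁻¹ := by rw [commutatorElement_inv]
          rw [this]
          exact Z.inv_mem (hvT.1 c)
        have hzc : ∀ t : G, ⁅c, v⁆ * t = t * ⁅c, v⁆ := hZc _ hzZ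
        have hkey := commutator_pow_left_collect (rfl : v = ⁅c, y⁆) (rfl : ⁅c, v⁆ = ⁅c, v⁆) hzc p
        have hxc : x ^ p ^ (n + 1) = c ^ p := by rw [hcdef, ← pow_mul, pow_succ]
        rw [hxc, hkey, hvT.2, choose_two_prime_odd hp hodd, pow_mul, hZp _ hzZ, one_pow, one_mul]
      · have : Subsingleton G := not_nontrivial_iff_subsingleton.mp hnt
        exact Subsingleton.elim _ _

end mainodd

theorem B_odd (p : ℕ) (hp : p.Prime) (hodd : Odd p) :
    ∀ n : ℕ, ∀ (G : Type u) [Group G] [Finite G],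
      commutator G ≤ powSubgroup G p → (∀ g : G, g ^ p ^ (n + 1) = 1) →
      ∀ x y : G, (x * y) ^ p ^ n = x ^ p ^ n * y ^ p ^ n := by
  intro n
  induction n with
  | zero => intro G _ _ _ _ x y; simp
  | succ n ihn =>
    intro G _ _ hpow hexp x y
    have hA : ∀ a b : G, ⁅a ^ p ^ (n + 1), b⁆ = 1 :=
      A_odd p hp hodd (n + 1) (Nat.card G) G le_rfl hpow hexp
    set Npow : Subgroup G := powSubgroup G (p ^ (n + 1)) with hNdef
    have hNcen : ∀ w ∈ Npow, w ∈ Subgroup.center G := by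
      intro w hw
      refine powSubgroup_le (fun g => ?_) hw
      rw [Subgroup.mem_center_iff]
      intro t
      exact (commutatorElement_eq_one_iff_mul_comm.mp (hA g t)).symm
    have hNS : ∀ w ∈ Npow, w ∈ Subgroup.center G ∧ w ^ p = 1 := by
      intro w hw
      refine ⟨hNcen w hw, ?_⟩
      set S : Subgroup G :=
        { carrier := {u : G | u ∈ Subgroup.center G ∧ u ^ p = 1}
          one_mem' := ⟨Subgroup.one_mem _, one_pow p⟩
          mul_mem' := by
            rintro u u' ⟨hu1, hu2⟩ ⟨hw1, hw2⟩
            refine ⟨Subgroup.mul_mem _ hu1 hw1, ?_⟩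
            have hcomm : Commute u u' := Subgroup.mem_center_iff.mp hu1 u' |>.symm
            rw [hcomm.mul_pow, hu2, hw2, one_mul]
          inv_mem' := by
            rintro u ⟨hu1, hu2⟩
            exact ⟨Subgroup.inv_mem _ hu1, by rw [inv_pow, hu2, inv_one]⟩ } with hSdef
      have hle : Npow ≤ S := by
        refine powSubgroup_le fun g => ?_
        refine ⟨hNcen _ (pow_mem_powSubgroup g _), ?_⟩
        rw [← pow_mul, ← pow_succ]
        exact hexp g
      exact (hle hw).2
    let πN : G →* G ⧸ Npow := QuotientGroup.mk' Npow
    have hπNsurj : Function.Surjective πN := QuotientGroup.mk'_surjective Npow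
    have hNexp : ∀ q : G ⧸ Npow, q ^ p ^ (n + 1) = 1 := by
      intro q
      obtain ⟨g, rfl⟩ := hπNsurj q
      rw [← map_pow, ← MonoidHom.mem_ker, QuotientGroup.ker_mk']
      exact pow_mem_powSubgroup g _
    have hNpow : commutator (G ⧸ Npow) ≤ powSubgroup (G ⧸ Npow) p :=
      commutator_le_powSubgroup_map πN hπNsurj p hpow
    set q : ℕ := p ^ n with hqdef
    have hw : (x ^ q * y ^ q)⁻¹ * (x * y) ^ q ∈ Npow := by
      rw [← QuotientGroup.ker_mk' Npow, MonoidHom.mem_ker]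
      have hb := ihn (G ⧸ Npow) hNpow hNexp (πN x) (πN y)
      rw [map_mul, map_inv, map_mul, map_pow, map_pow, map_pow, map_mul, hb]
      exact inv_mul_cancel _
    set w : G := (x ^ q * y ^ q)⁻¹ * (x * y) ^ q with hwdef
    have hxyq : (x * y) ^ q = x ^ q * y ^ q * w := by rw [hwdef]; group
    have hwS := hNS w hw
    have hd : ⁅y ^ q, x ^ q⁆ ∈ Npow := by
      rw [← QuotientGroup.ker_mk' Npow, MonoidHom.mem_ker, map_commutatorElement, map_pow,
        map_pow]
      have hAq : ∀ a b : G ⧸ Npow, ⁅a ^ p ^ n, b⁆ = 1 := by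
        cases n with
        | zero =>
          intro a b
          have hbot : powSubgroup (G ⧸ Npow) p = ⊥ := by
            rw [eq_bot_iff]
            refine powSubgroup_le fun g => ?_
            rw [Subgroup.mem_bot]
            simpa using hNexp g
          have : ⁅a, b⁆ ∈ (⊥ : Subgroup (G ⧸ Npow)) := by
            rw [← hbot]
            exact hNpow (Subgroup.commutator_mem_commutator (Subgroup.mem_top a)
              (Subgroup.mem_top b))
          rw [Subgroup.mem_bot] at this
          simpa using this
        | succ m =>
          exact A_odd p hp hodd (m + 1) (Nat.card (G ⧸ Npow)) (G ⧸ Npow) le_rfl hNpow hNexp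
      exact hAq (πN y) (πN x ^ q)
    have hdS := hNS _ hd
    have hdc : ∀ t : G, ⁅y ^ q, x ^ q⁆ * t = t * ⁅y ^ q, x ^ q⁆ := fun t =>
      (Subgroup.mem_center_iff.mp hdS.1 t).symm
    have hba : y ^ q * x ^ q = ⁅y ^ q, x ^ q⁆ * (x ^ q * y ^ q) := by
      simp only [commutatorElement_def]; group
    have hcw : Commute (x ^ q * y ^ q) w := (Subgroup.mem_center_iff.mp hwS.1 _)
    calc (x * y) ^ p ^ (n + 1) = ((x * y) ^ q) ^ p := by rw [← pow_mul, pow_succ]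
    _ = (x ^ q * y ^ q * w) ^ p := by rw [hxyq]
    _ = (x ^ q * y ^ q) ^ p * w ^ p := hcw.mul_pow p
    _ = (x ^ q * y ^ q) ^ p := by rw [hwS.2, mul_one]
    _ = (x ^ q) ^ p * (y ^ q) ^ p * ⁅y ^ q, x ^ q⁆ ^ (p.choose 2) := central_collect hdc hba p
    _ = x ^ p ^ (n + 1) * y ^ p ^ (n + 1) := by
        rw [choose_two_prime_odd hp hodd, pow_mul, hdS.2, one_pow, mul_one, ← pow_mul,
          ← pow_mul, ← pow_succ]

section maintwo

theorem A_two :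
    ∀ n N : ℕ, ∀ (G : Type u) [Group G] [Finite G], Nat.card G ≤ N →
      commutator G ≤ powSubgroup G 4 → (∀ g : G, g ^ 2 ^ (n + 2) = 1) →
      ∀ x y : G, ⁅x ^ 2 ^ n, y⁆ = 1 := by
  intro n
  induction n using Nat.strong_induction_on with
  | _ n ih =>
  cases n with
  | zero =>
    intro N G _ _ _ hpow hexp x y
    simp only [pow_zero, pow_one]
    have hbot : powSubgroup G 4 = ⊥ := by
      rw [eq_bot_iff]
      refine powSubgroup_le fun g => ?_
      rw [Subgroup.mem_bot]
      simpa using hexp g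
    have : ⁅x, y⁆ ∈ (⊥ : Subgroup G) := by
      rw [← hbot]
      exact hpow (Subgroup.commutator_mem_commutator (Subgroup.mem_top x) (Subgroup.mem_top y))
    simpa [Subgroup.mem_bot] using this
  | succ k =>
    intro N
    induction N with
    | zero =>
      intro G _ _ hcard
      have : 0 < Nat.card G := Nat.card_pos
      omega
    | succ N ihN =>
      intro G _ _ hcard hpow hexp x y
      by_cases hnt : Nontrivial G
      · have hPG : IsPGroup 2 G := fun g => ⟨k + 1 + 2, hexp g⟩
        obtain ⟨z, hzc, hzo⟩ := exists_central_of_order Nat.prime_two hPG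
        set Z : Subgroup G := Subgroup.zpowers z with hZdef
        have hZle : Z ≤ Subgroup.center G := Subgroup.zpowers_le.mpr hzc
        have hZnormal : Z.Normal := by
          refine ⟨fun a ha g => ?_⟩
          have hc := (Subgroup.mem_center_iff.mp (hZle ha)) g
          rw [hc, mul_assoc, mul_inv_cancel, mul_one]
          exact ha
        have hZp : ∀ a ∈ Z, a ^ 2 = 1 := by
          intro a ha
          obtain ⟨j, rfl⟩ := Subgroup.mem_zpowers_iff.mp ha
          rw [← zpow_natCast, ← zpow_mul, mul_comm, zpow_mul, zpow_natCast, ← hzo,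
            pow_orderOf_eq_one z, one_zpow]
        have hZc : ∀ a ∈ Z, ∀ t : G, a * t = t * a := fun a ha t =>
          ((Subgroup.mem_center_iff.mp (hZle ha)) t).symm
        let Q := G ⧸ Z
        let π : G →* Q := QuotientGroup.mk' Z
        have hπsurj : Function.Surjective π := QuotientGroup.mk'_surjective Z
        have hkerπ : ∀ w : G, π w = 1 ↔ w ∈ Z := by
          intro w
          rw [← MonoidHom.mem_ker, QuotientGroup.ker_mk']
        have hcardQ : Nat.card Q ≤ N := by
          have hmul := Subgroup.card_eq_card_quotient_mul_card_subgroup Z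
          have hZ2 : 2 ≤ Nat.card Z := by
            have : Nontrivial Z := by
              refine ⟨⟨1, ⟨z, Subgroup.mem_zpowers z⟩, ?_⟩⟩
              intro h
              have : (1 : G) = z := congrArg Subtype.val h
              rw [← this, orderOf_one] at hzo
              omega
            exact Finite.one_lt_card
          have hQpos : 0 < Nat.card Q := Nat.card_pos
          nlinarith [hmul, hcard]
        have hQexp : ∀ q : Q, q ^ 2 ^ (k + 1 + 2) = 1 := by
          intro q
          obtain ⟨g, rfl⟩ := hπsurj q
          rw [← map_pow, hexp g, map_one]
        have hQpow : commutator Q ≤ powSubgroup Q 4 :=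
          commutator_le_powSubgroup_map π hπsurj 4 hpow
        have hQ : ∀ a b : Q, ⁅a ^ 2 ^ (k + 1), b⁆ = 1 := ihN Q hcardQ hQpow hQexp
        have hQcen : ∀ u ∈ powSubgroup Q (2 ^ (k + 1)), u ∈ Subgroup.center Q := by
          intro u hu
          refine powSubgroup_le (fun a => ?_) hu
          rw [Subgroup.mem_center_iff]
          intro t
          exact (commutatorElement_eq_one_iff_mul_comm.mp (hQ a t)).symm
        have hN0Z : ∀ u ∈ powSubgroup G (2 ^ (k + 1)), ∀ g : G, ⁅u, g⁆ ∈ Z := by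
          intro u hu g
          rw [← hkerπ, map_commutatorElement]
          exact commutatorElement_eq_one_iff_mul_comm.mpr
            ((Subgroup.mem_center_iff.mp (hQcen (π u) (mem_powSubgroup_map π hu))) (π g)).symm
        set Np : Subgroup G := powSubgroup G (2 ^ (k + 2)) with hNpdef
        have hNple : Np ≤ powSubgroup G (2 ^ (k + 1)) := by
          have h2 : (2 : ℕ) ^ (k + 2) = 2 * 2 ^ (k + 1) := by ring
          rw [hNpdef, h2]
          exact powSubgroup_mul_le (2 ^ (k + 1)) 2
        -- squares of elements of (powSubgroup Q (2 ^ (k + 2))) are trivial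
        have hSQ1 : ∀ u ∈ powSubgroup Q (2 ^ (k + 2)), u ∈ Subgroup.center Q ∧ u ^ 2 = 1 := by
          intro u hu
          set SQ : Subgroup Q :=
            { carrier := {w : Q | w ∈ Subgroup.center Q ∧ w ^ 2 = 1}
              one_mem' := ⟨Subgroup.one_mem _, one_pow 2⟩
              mul_mem' := by
                rintro a b ⟨ha1, ha2⟩ ⟨hb1, hb2⟩
                refine ⟨Subgroup.mul_mem _ ha1 hb1, ?_⟩
                have hcomm : Commute a b := (Subgroup.mem_center_iff.mp ha1 b).symm
                rw [hcomm.mul_pow, ha2, hb2, one_mul]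
              inv_mem' := by
                rintro a ⟨ha1, ha2⟩
                exact ⟨Subgroup.inv_mem _ ha1, by rw [inv_pow, ha2, inv_one]⟩ } with hSQdef
          have hle : powSubgroup Q (2 ^ (k + 2)) ≤ SQ := by
            refine powSubgroup_le fun a => ?_
            constructor
            · have : a ^ 2 ^ (k + 2) = (a ^ 2 ^ (k + 1)) ^ 2 := by
                rw [← pow_mul, Nat.pow_succ]
              rw [this]
              exact Subgroup.pow_mem _ (hQcen _ (pow_mem_powSubgroup a _)) 2
            · rw [← pow_mul]
              have : 2 ^ (k + 2) * 2 = 2 ^ (k + 1 + 2) := by ring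
              rw [this]
              exact hQexp a
          exact hle hu
        -- part 1 : 2^(k+2) powers are central
        have part1 : ∀ a g : G, ⁅a ^ 2 ^ (k + 2), g⁆ = 1 := by
          intro a g
          set c : G := a ^ 2 ^ k with hcdef
          have hc4 : a ^ 2 ^ (k + 2) = c ^ 4 := by
            rw [hcdef, ← pow_mul]
            congr 1
            ring
          let πp : G →* G ⧸ Np := QuotientGroup.mk' Np
          have hπpsurj : Function.Surjective πp := QuotientGroup.mk'_surjective Np
          have hNpexp : ∀ q : G ⧸ Np, q ^ 2 ^ (k + 2) = 1 := by
            intro q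
            obtain ⟨g', rfl⟩ := hπpsurj q
            rw [← map_pow, ← MonoidHom.mem_ker, QuotientGroup.ker_mk']
            exact pow_mem_powSubgroup g' _
          have hNppow : commutator (G ⧸ Np) ≤ powSubgroup (G ⧸ Np) 4 :=
            commutator_le_powSubgroup_map πp hπpsurj 4 hpow
          have hkv := ih k (by omega) (Nat.card (G ⧸ Np)) (G ⧸ Np) le_rfl hNppow hNpexp
          set v : G := ⁅c, g⁆ with hvdef
          have hvNp : v ∈ Np := by
            rw [hNpdef, ← QuotientGroup.ker_mk' (powSubgroup G (2 ^ (k + 2))),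
              MonoidHom.mem_ker]
            show πp ⁅c, g⁆ = 1
            rw [map_commutatorElement, hcdef, map_pow]
            exact hkv (πp a) (πp g)
          have hz1Z : ⁅c, v⁆ ∈ Z := by
            have h1 : ⁅c, v⁆ = ⁅v, c⁆⁻¹ := by rw [commutatorElement_inv]
            rw [h1]
            exact Z.inv_mem (hN0Z v (hNple hvNp) c)
          have hz1c : ∀ t : G, ⁅c, v⁆ * t = t * ⁅c, v⁆ := hZc _ hz1Z
          have hv2Z : v ^ 2 ∈ Z := by
            rw [← hkerπ, map_pow]
            exact (hSQ1 (π v) (mem_powSubgroup_map π hvNp)).2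
          have hv4 : v ^ 4 = 1 := by
            have : v ^ 4 = (v ^ 2) ^ 2 := by rw [← pow_mul]
            rw [this, hZp _ hv2Z]
          have hkey := commutator_pow_left_collect (rfl : v = ⁅c, g⁆)
            (rfl : ⁅c, v⁆ = ⁅c, v⁆) hz1c 4
          have hch : Nat.choose 4 2 = 6 := by decide
          rw [hc4, hkey, hv4, hch, one_mul]
          have h6 : ⁅c, v⁆ ^ 6 = (⁅c, v⁆ ^ 2) ^ 3 := by rw [← pow_mul]
          rw [h6, hZp _ hz1Z, one_pow]
        -- part 2 : elements of Np are central with square one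
        have hPcen : ∀ u ∈ Np, u ∈ Subgroup.center G := by
          intro u hu
          refine powSubgroup_le (fun a => ?_) hu
          rw [Subgroup.mem_center_iff]
          intro t
          exact (commutatorElement_eq_one_iff_mul_comm.mp (part1 a t)).symm
        have hPsq : ∀ u ∈ Np, u ^ 2 = 1 := by
          intro u hu
          set SG : Subgroup G :=
            { carrier := {w : G | w ∈ Subgroup.center G ∧ w ^ 2 = 1}
              one_mem' := ⟨Subgroup.one_mem _, one_pow 2⟩
              mul_mem' := by
                rintro a b ⟨ha1, ha2⟩ ⟨hb1, hb2⟩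
                refine ⟨Subgroup.mul_mem _ ha1 hb1, ?_⟩
                have hcomm : Commute a b := (Subgroup.mem_center_iff.mp ha1 b).symm
                rw [hcomm.mul_pow, ha2, hb2, one_mul]
              inv_mem' := by
                rintro a ⟨ha1, ha2⟩
                exact ⟨Subgroup.inv_mem _ ha1, by rw [inv_pow, ha2, inv_one]⟩ } with hSGdef
          have hle : Np ≤ SG := by
            refine powSubgroup_le fun a => ?_
            constructor
            · exact hPcen _ (pow_mem_powSubgroup a _)
            · rw [← pow_mul]
              have : 2 ^ (k + 2) * 2 = 2 ^ (k + 1 + 2) := by ring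
              rw [this]
              exact hexp a
          exact (hle hu).2
        -- part 3 : the goal
        cases k with
        | zero =>
          have hv4mem : ⁅x, y⁆ ∈ Np := by
            have h4 : (2 : ℕ) ^ (0 + 2) = 4 := by norm_num
            rw [hNpdef, h4]
            exact hpow (Subgroup.commutator_mem_commutator (Subgroup.mem_top x)
              (Subgroup.mem_top y))
          set v : G := ⁅x, y⁆ with hvdef
          have hvcen := hPcen v hv4mem
          have hz1 : ⁅x, v⁆ = 1 := commutatorElement_eq_one_iff_mul_comm.mpr
            ((Subgroup.mem_center_iff.mp hvcen x))
          have hz1c : ∀ t : G, ⁅x, v⁆ * t = t * ⁅x, v⁆ := by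
            intro t; rw [hz1, one_mul, mul_one]
          have hkey := commutator_pow_left_collect (rfl : v = ⁅x, y⁆)
            (rfl : ⁅x, v⁆ = ⁅x, v⁆) hz1c 2
          have h21 : (2 : ℕ) ^ (0 + 1) = 2 := by norm_num
          rw [h21]
          rw [hkey, hz1, hPsq v hv4mem]
          simp
        | succ m =>
          set c : G := x ^ 2 ^ m with hcdef
          have hc4 : x ^ 2 ^ (m + 1 + 1) = c ^ 4 := by
            rw [hcdef, ← pow_mul]
            congr 1
            ring
          set N0 : Subgroup G := powSubgroup G (2 ^ (m + 1 + 1)) with hN0def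
          let π0 : G →* G ⧸ N0 := QuotientGroup.mk' N0
          have hπ0surj : Function.Surjective π0 := QuotientGroup.mk'_surjective N0
          have hN0exp : ∀ q : G ⧸ N0, q ^ 2 ^ (m + 2) = 1 := by
            intro q
            obtain ⟨g', rfl⟩ := hπ0surj q
            rw [← map_pow, ← MonoidHom.mem_ker, QuotientGroup.ker_mk']
            exact pow_mem_powSubgroup g' _
          have hN0pow : commutator (G ⧸ N0) ≤ powSubgroup (G ⧸ N0) 4 :=
            commutator_le_powSubgroup_map π0 hπ0surj 4 hpow
          have hkv := ih m (by omega) (Nat.card (G ⧸ N0)) (G ⧸ N0) le_rfl hN0pow hN0exp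
          set v : G := ⁅c, y⁆ with hvdef
          have hvN0 : v ∈ N0 := by
            rw [hN0def, ← QuotientGroup.ker_mk' (powSubgroup G (2 ^ (m + 1 + 1))),
              MonoidHom.mem_ker]
            show π0 ⁅c, y⁆ = 1
            rw [map_commutatorElement, hcdef, map_pow]
            exact hkv (π0 x) (π0 y)
          have hz1Z : ⁅c, v⁆ ∈ Z := by
            have h1 : ⁅c, v⁆ = ⁅v, c⁆⁻¹ := by rw [commutatorElement_inv]
            rw [h1]
            exact Z.inv_mem (hN0Z v hvN0 c)
          have hz1c : ∀ t : G, ⁅c, v⁆ * t = t * ⁅c, v⁆ := hZc _ hz1Z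
          -- v^2 belongs to Np modulo Z
          have hSQ2 : (π v) ^ 2 ∈ powSubgroup Q (2 ^ (m + 3)) := by
            set SQ2 : Subgroup Q :=
              { carrier := {w : Q | w ∈ Subgroup.center Q ∧ w ^ 2 ∈ powSubgroup Q (2 ^ (m + 3))}
                one_mem' := ⟨Subgroup.one_mem _, by
                  rw [one_pow]; exact Subgroup.one_mem _⟩
                mul_mem' := by
                  rintro a b ⟨ha1, ha2⟩ ⟨hb1, hb2⟩
                  refine ⟨Subgroup.mul_mem _ ha1 hb1, ?_⟩
                  have hcomm : Commute a b := (Subgroup.mem_center_iff.mp ha1 b).symm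
                  rw [hcomm.mul_pow]
                  exact Subgroup.mul_mem _ ha2 hb2
                inv_mem' := by
                  rintro a ⟨ha1, ha2⟩
                  refine ⟨Subgroup.inv_mem _ ha1, ?_⟩
                  rw [inv_pow]
                  exact Subgroup.inv_mem _ ha2 } with hSQ2def
            have hle : powSubgroup Q (2 ^ (m + 2)) ≤ SQ2 := by
              refine powSubgroup_le fun a => ?_
              constructor
              · exact hQcen _ (pow_mem_powSubgroup a _)
              · rw [← pow_mul]
                have he : 2 ^ (m + 2) * 2 = 2 ^ (m + 3) := by ring
                rw [he]
                exact pow_mem_powSubgroup a _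
            exact (hle (mem_powSubgroup_map π hvN0)).2
          have hmapNp : powSubgroup Q (2 ^ (m + 3)) = Subgroup.map π Np := by
            rw [hNpdef, map_powSubgroup π hπsurj]
          obtain ⟨u, huNp, huv⟩ : ∃ u ∈ Np, π u = (π v) ^ 2 := by
            rw [hmapNp] at hSQ2
            obtain ⟨u, hu, he⟩ := hSQ2
            exact ⟨u, hu, he⟩
          have hζZ : v ^ 2 * u⁻¹ ∈ Z := by
            rw [← hkerπ, map_mul, map_inv, map_pow, huv]
            group
          have hv2eq : v ^ 2 = (v ^ 2 * u⁻¹) * u := by group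
          have hv4 : v ^ 4 = 1 := by
            have h1 : v ^ 4 = (v ^ 2) ^ 2 := by rw [← pow_mul]
            rw [h1, hv2eq]
            have hcomm : Commute (v ^ 2 * u⁻¹) u :=
              (Subgroup.mem_center_iff.mp (hZle hζZ) u).symm
            rw [hcomm.mul_pow, hZp _ hζZ, hPsq u huNp, one_mul]
          have hkey := commutator_pow_left_collect (rfl : v = ⁅c, y⁆)
            (rfl : ⁅c, v⁆ = ⁅c, v⁆) hz1c 4
          have hch : Nat.choose 4 2 = 6 := by decide
          rw [hc4, hkey, hv4, hch, one_mul]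
          have h6 : ⁅c, v⁆ ^ 6 = (⁅c, v⁆ ^ 2) ^ 3 := by rw [← pow_mul]
          rw [h6, hZp _ hz1Z, one_pow]
      · have : Subsingleton G := not_nontrivial_iff_subsingleton.mp hnt
        exact Subsingleton.elim _ _

end maintwo

theorem B_two :
    ∀ n : ℕ, ∀ (G : Type u) [Group G] [Finite G],
      commutator G ≤ powSubgroup G 4 → (∀ g : G, g ^ 2 ^ (n + 1) = 1) →
      ∀ x y : G, (x * y) ^ 2 ^ n = x ^ 2 ^ n * y ^ 2 ^ n := by
  intro n
  induction n with
  | zero => intro G _ _ _ _ x y; simp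
  | succ n ihn =>
    intro G _ _ hpow hexp x y
    have hA : ∀ a b : G, ⁅a ^ 2 ^ n, b⁆ = 1 :=
      A_two n (Nat.card G) G le_rfl hpow hexp
    have hAcen : ∀ a : G, a ^ 2 ^ n ∈ Subgroup.center G := by
      intro a
      rw [Subgroup.mem_center_iff]
      intro t
      exact (commutatorElement_eq_one_iff_mul_comm.mp (hA a t)).symm
    set Npow : Subgroup G := powSubgroup G (2 ^ (n + 1)) with hNdef
    have hNS : ∀ w ∈ Npow, w ∈ Subgroup.center G ∧ w ^ 2 = 1 := by
      intro w hw
      set S : Subgroup G :=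
        { carrier := {u : G | u ∈ Subgroup.center G ∧ u ^ 2 = 1}
          one_mem' := ⟨Subgroup.one_mem _, one_pow 2⟩
          mul_mem' := by
            rintro u u' ⟨hu1, hu2⟩ ⟨hw1, hw2⟩
            refine ⟨Subgroup.mul_mem _ hu1 hw1, ?_⟩
            have hcomm : Commute u u' := (Subgroup.mem_center_iff.mp hu1 u').symm
            rw [hcomm.mul_pow, hu2, hw2, one_mul]
          inv_mem' := by
            rintro u ⟨hu1, hu2⟩
            exact ⟨Subgroup.inv_mem _ hu1, by rw [inv_pow, hu2, inv_one]⟩ } with hSdef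
      have hle : Npow ≤ S := by
        refine powSubgroup_le fun g => ?_
        constructor
        · have : g ^ 2 ^ (n + 1) = (g ^ 2 ^ n) ^ 2 := by rw [← pow_mul, Nat.pow_succ]
          rw [this]
          exact Subgroup.pow_mem _ (hAcen g) 2
        · rw [← pow_mul]
          have : 2 ^ (n + 1) * 2 = 2 ^ (n + 1 + 1) := by ring
          rw [this]
          exact hexp g
      exact hle hw
    let πN : G →* G ⧸ Npow := QuotientGroup.mk' Npow
    have hπNsurj : Function.Surjective πN := QuotientGroup.mk'_surjective Npow
    have hNexp : ∀ q : G ⧸ Npow, q ^ 2 ^ (n + 1) = 1 := by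
      intro q
      obtain ⟨g, rfl⟩ := hπNsurj q
      rw [← map_pow, ← MonoidHom.mem_ker, QuotientGroup.ker_mk']
      exact pow_mem_powSubgroup g _
    have hNpow : commutator (G ⧸ Npow) ≤ powSubgroup (G ⧸ Npow) 4 :=
      commutator_le_powSubgroup_map πN hπNsurj 4 hpow
    set q : ℕ := 2 ^ n with hqdef
    have hw : (x ^ q * y ^ q)⁻¹ * (x * y) ^ q ∈ Npow := by
      rw [← QuotientGroup.ker_mk' Npow, MonoidHom.mem_ker]
      have hb := ihn (G ⧸ Npow) hNpow hNexp (πN x) (πN y)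
      rw [map_mul, map_inv, map_mul, map_pow, map_pow, map_pow, map_mul, hb]
      exact inv_mul_cancel _
    set w : G := (x ^ q * y ^ q)⁻¹ * (x * y) ^ q with hwdef
    have hxyq : (x * y) ^ q = x ^ q * y ^ q * w := by rw [hwdef]; group
    have hwS := hNS w hw
    have hcw : Commute (x ^ q * y ^ q) w := (Subgroup.mem_center_iff.mp hwS.1 _)
    have hcxy : Commute (x ^ q) (y ^ q) := (Subgroup.mem_center_iff.mp (hAcen x) _).symm
    calc (x * y) ^ 2 ^ (n + 1) = ((x * y) ^ q) ^ 2 := by rw [← pow_mul, Nat.pow_succ]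
    _ = (x ^ q * y ^ q * w) ^ 2 := by rw [hxyq]
    _ = (x ^ q * y ^ q) ^ 2 * w ^ 2 := hcw.mul_pow 2
    _ = (x ^ q * y ^ q) ^ 2 := by rw [hwS.2, mul_one]
    _ = (x ^ q) ^ 2 * (y ^ q) ^ 2 := hcxy.mul_pow 2
    _ = x ^ 2 ^ (n + 1) * y ^ 2 ^ (n + 1) := by
        rw [← pow_mul, ← pow_mul, ← Nat.pow_succ]

theorem stmt_2 (p e : ℕ) (hp : p.Prime) (G : Type*) [Group G] [Finite G]
    (hG : IsPGroup p G) (he : 1 ≤ e) (hexp : Monoid.exponent G = p ^ e)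
    (hpowerful : (Odd p → commutator G ≤ powSubgroup G p) ∧
      (p = 2 → commutator G ≤ powSubgroup G 4)) :
    (∀ x y : G, (x * y) ^ p ^ (e - 1) = x ^ p ^ (e - 1) * y ^ p ^ (e - 1)) ∧
    ∃ K : Subgroup G, K.Normal ∧ (K : Set G) = {x : G | orderOf x < p ^ e} ∧
      commutator G ≤ K := by
  have hexp1 : ∀ g : G, g ^ p ^ e = 1 := fun g => by
    rw [← hexp]; exact Monoid.pow_exponent_eq_one g
  have he' : e - 1 + 1 = e := Nat.succ_pred_eq_of_pos he
  have hexp1' : ∀ g : G, g ^ p ^ (e - 1 + 1) = 1 := fun g => by rw [he']; exact hexp1 g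
  have hmain : ∀ x y : G, (x * y) ^ p ^ (e - 1) = x ^ p ^ (e - 1) * y ^ p ^ (e - 1) := by
    rcases hp.eq_two_or_odd' with h2 | hodd
    · subst h2
      exact fun x y => B_two (e - 1) G (hpowerful.2 rfl) hexp1' x y
    · exact fun x y => B_odd p hp hodd (e - 1) G (hpowerful.1 hodd) hexp1' x y
  refine ⟨hmain, ?_⟩
  let φ : G →* G :=
    { toFun := fun x => x ^ p ^ (e - 1)
      map_one' := one_pow _
      map_mul' := hmain }
  have hφ : ∀ x : G, φ x = x ^ p ^ (e - 1) := fun x => rfl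
  refine ⟨φ.ker, MonoidHom.normal_ker φ, ?_, ?_⟩
  · ext x
    simp only [SetLike.mem_coe, MonoidHom.mem_ker, hφ, Set.mem_setOf_eq]
    constructor
    · intro hx
      have hdvd : orderOf x ∣ p ^ (e - 1) := orderOf_dvd_of_pow_eq_one hx
      have hle : orderOf x ≤ p ^ (e - 1) := Nat.le_of_dvd (pow_pos hp.pos _) hdvd
      have hlt : p ^ (e - 1) < p ^ e := Nat.pow_lt_pow_right hp.one_lt (by omega)
      omega
    · intro hx
      have hdvd : orderOf x ∣ p ^ e := hexp ▸ Monoid.order_dvd_exponent x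
      obtain ⟨j, hj, horder⟩ := (Nat.dvd_prime_pow hp).mp hdvd
      have hje : j ≤ e - 1 := by
        by_contra hc
        have hje2 : j = e := by omega
        rw [hje2] at horder
        rw [horder] at hx
        exact lt_irrefl _ hx
      have : orderOf x ∣ p ^ (e - 1) := horder ▸ pow_dvd_pow p hje
      exact orderOf_dvd_iff_pow_eq_one.mp this
  · rcases hp.eq_two_or_odd' with h2 | hodd
    · subst h2
      refine le_trans (hpowerful.2 rfl) (powSubgroup_le fun g => ?_)
      rw [MonoidHom.mem_ker, hφ, ← pow_mul]
      have h1 : 4 * 2 ^ (e - 1) = 2 ^ e * 2 := by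
        calc 4 * 2 ^ (e - 1) = 2 ^ (e - 1) * 2 * 2 := by ring
        _ = 2 ^ e * 2 := by rw [← pow_succ, he']
      rw [h1, pow_mul, hexp1 g, one_pow]
    · refine le_trans (hpowerful.1 hodd) (powSubgroup_le fun g => ?_)
      rw [MonoidHom.mem_ker, hφ, ← pow_mul]
      have h1 : p * p ^ (e - 1) = p ^ e := by
        rw [← pow_succ', he']
      rw [h1]
      exact hexp1 g
end

section
/- Let p be a prime and G a finite p-group of GK type with GK kernel K. Then: (i) every x ∈ G \ K has order equal to exp(G); (ii) for every x ∈ G \ K, the subgroup generated by x together with K is all of G; (iii) exp(K) = exp(G)/p; (iv) |K| · exp(G) = |G| · exp(K), i.e. G and K have the same cyclic deficiency log_p(|G|/exp(G)). -/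
theorem stmt_3 (p : ℕ) (hp : p.Prime) (G : Type*) [Group G] [Finite G]
    (hG : IsPGroup p G) (K : Subgroup G) (hco : IsCoatom K)
    (hKset : (K : Set G) = {x : G | orderOf x < Monoid.exponent G}) :
    (∀ x : G, x ∉ K → orderOf x = Monoid.exponent G) ∧
    (∀ x : G, x ∉ K → Subgroup.zpowers x ⊔ K = ⊤) ∧
    Monoid.exponent K = Monoid.exponent G / p ∧
    Nat.card K * Monoid.exponent G = Nat.card G * Monoid.exponent K := by
  have hmem : ∀ x : G, x ∈ K ↔ orderOf x < Monoid.exponent G := by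
    intro x
    rw [← SetLike.mem_coe, hKset]; rfl
  have hexp_pos : 0 < Monoid.exponent G :=
    Monoid.ExponentExists.exponent_pos Monoid.ExponentExists.of_finite
  -- (i)
  have part1 : ∀ x : G, x ∉ K → orderOf x = Monoid.exponent G := by
    intro x hx
    have hdvd := Monoid.order_dvd_exponent x
    have hle := Nat.le_of_dvd hexp_pos hdvd
    have := (hmem x).not.mp hx
    omega
  -- (ii)
  have part2 : ∀ x : G, x ∉ K → Subgroup.zpowers x ⊔ K = ⊤ := by
    intro x hx
    refine hco.2 _ (lt_of_le_of_ne le_sup_right ?_)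
    intro h
    exact hx (h ▸ (le_sup_left : Subgroup.zpowers x ≤ _) (Subgroup.mem_zpowers x))
  -- get an element outside K
  obtain ⟨x0, -, hx0⟩ := SetLike.exists_of_lt (lt_top_iff_ne_top.mpr hco.1)
  have hx0ord : orderOf x0 = Monoid.exponent G := part1 x0 hx0
  -- exponent is a p-power
  obtain ⟨k, hk⟩ := hG x0
  obtain ⟨e, he, hpe⟩ := (Nat.dvd_prime_pow hp).mp (orderOf_dvd_of_pow_eq_one hk)
  have hexp : Monoid.exponent G = p ^ e := hx0ord ▸ hpe
  have he1 : 1 ≤ e := by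
    by_contra h
    have he0 : e = 0 := by omega
    subst he0
    simp only [pow_zero] at hpe
    exact hx0 (orderOf_eq_one_iff.mp hpe ▸ K.one_mem)
  -- every element of K has order dividing p^(e-1)
  have hKord : ∀ y : G, y ∈ K → orderOf y ∣ p ^ (e - 1) := by
    intro y hy
    obtain ⟨m, hm, hym⟩ := (Nat.dvd_prime_pow hp).mp
      ((hexp ▸ Monoid.order_dvd_exponent y) : orderOf y ∣ p ^ e)
    have hlt : orderOf y < p ^ e := hexp ▸ (hmem y).mp hy
    have hme : m ≠ e := by
      intro h; rw [h] at hym; omega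
    exact hym ▸ pow_dvd_pow p (by omega)
  -- x0^p has order p^(e-1) and lies in K
  have hx0p : orderOf (x0 ^ p) = p ^ (e - 1) := by
    rw [orderOf_pow, hx0ord, hexp]
    have : Nat.gcd (p ^ e) p = p := by
      rw [Nat.gcd_eq_right]
      exact dvd_pow_self p (by omega)
    rw [this, ← Nat.pow_div he1 hp.pos] -- p^e / p = p^(e-1)
    congr 1
    exact (pow_one p).symm
  have hx0pK : x0 ^ p ∈ K := by
    rw [hmem, hx0p, hexp]
    exact Nat.pow_lt_pow_right hp.one_lt (by omega)
  -- exponent of K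
  have hexpK : Monoid.exponent K = p ^ (e - 1) := by
    apply Nat.dvd_antisymm
    · rw [Monoid.exponent_dvd]
      intro g
      rw [← Subgroup.orderOf_coe]
      exact hKord g g.2
    · rw [← hx0p, ← Subgroup.orderOf_mk (H := K) (x0 ^ p) hx0pK]
      exact Monoid.order_dvd_exponent _
  have part3 : Monoid.exponent K = Monoid.exponent G / p := by
    rw [hexpK, hexp, ← Nat.pow_div he1 hp.pos, pow_one]
  -- K is normal
  have hnormal : K.Normal := by
    constructor
    intro n hn g
    rw [hmem] at hn ⊢
    have : orderOf (g * n * g⁻¹) = orderOf n := by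
      have h : SemiconjBy g n (g * n * g⁻¹) := by
        unfold SemiconjBy; group
      exact (SemiconjBy.orderOf_eq g h).symm
    rwa [this]
  -- the quotient has order p
  have hQ : Nat.card (G ⧸ K) = p := by
    have hmkne : (QuotientGroup.mk x0 : G ⧸ K) ≠ 1 := by
      rw [Ne, QuotientGroup.eq_one_iff]; exact hx0
    have hmkp : (QuotientGroup.mk x0 : G ⧸ K) ^ p = 1 := by
      rw [← QuotientGroup.mk_pow, QuotientGroup.eq_one_iff]
      exact hx0pK
    haveI := Fact.mk hp
    have hord : orderOf (QuotientGroup.mk x0 : G ⧸ K) = p := orderOf_eq_prime hmkp hmkne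
    have htop : Subgroup.zpowers (QuotientGroup.mk x0 : G ⧸ K) = ⊤ := by
      have := part2 x0 hx0
      have hmap := congrArg (Subgroup.map (QuotientGroup.mk' K)) this
      rw [Subgroup.map_sup, Subgroup.map_top_of_surjective _ (QuotientGroup.mk'_surjective K)] at hmap
      rw [eq_top_iff, ← hmap, sup_le_iff]
      constructor
      · rw [Subgroup.map_le_iff_le_comap]
        intro g hg
        obtain ⟨n, rfl⟩ := Subgroup.mem_zpowers_iff.mp hg
        exact Subgroup.mem_comap.mpr (Subgroup.zpow_mem _ (Subgroup.mem_zpowers _) n)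
      · rw [Subgroup.map_le_iff_le_comap]
        intro g hg
        simp only [Subgroup.mem_comap]
        have : (QuotientGroup.mk' K) g = 1 := (QuotientGroup.eq_one_iff g).mpr hg
        rw [this]; exact Subgroup.one_mem _
    calc Nat.card (G ⧸ K) = Nat.card (⊤ : Subgroup (G ⧸ K)) :=
          (Nat.card_congr Subgroup.topEquiv.toEquiv).symm
      _ = Nat.card (Subgroup.zpowers (QuotientGroup.mk x0 : G ⧸ K)) := by rw [htop]
      _ = p := by rw [Nat.card_zpowers, hord]
  have hindex : K.index = p := hQ
  have hcard : Nat.card K * p = Nat.card G := by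
    rw [← hindex]; exact Subgroup.card_mul_index K
  refine ⟨part1, part2, part3, ?_⟩
  rw [hexpK, hexp]
  calc Nat.card K * p ^ e = (Nat.card K * p) * p ^ (e - 1) := by
        rw [mul_assoc, ← pow_succ']
        congr 2
        omega
    _ = Nat.card G * p ^ (e - 1) := by rw [hcard]
end

section
/- Let p be a prime and G a finite p-group of GK type with GK kernel K, and suppose that K is itself of GK type. Then for every x ∈ G \ K the element x^p lies in K but not in the Frattini subgroup Φ(K) of K, and consequently the rank of G is at most the rank of K. -/
open Subgroup

/-- In a finite `p`-group, every maximal subgroup contains all `p`-th powers and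
all commutators. -/
lemma coatom_aux {p : ℕ} (hp : p.Prime) {H : Type*} [Group H] [Finite H]
    (hH : IsPGroup p H) {M : Subgroup H} (hM : IsCoatom M) :
    (∀ a : H, a ^ p ∈ M) ∧ (∀ a b : H, a * b * a⁻¹ * b⁻¹ ∈ M) := by
  haveI := Fact.mk hp
  haveI : Group.IsNilpotent H := hH.isNilpotent
  haveI hMn : M.Normal := NormalizerCondition.normal_of_coatom M
    normalizerCondition_of_isNilpotent hM
  have hQp : IsPGroup p (H ⧸ M) := hH.to_quotient M
  have hsurj := QuotientGroup.mk'_surjective M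
  have hdich : ∀ S : Subgroup (H ⧸ M), S = ⊥ ∨ S = ⊤ := by
    intro S
    have hle : M ≤ S.comap (QuotientGroup.mk' M) := by
      intro m hm
      have h1 : (QuotientGroup.mk' M) m = 1 := (QuotientGroup.eq_one_iff m).mpr hm
      simpa [Subgroup.mem_comap, h1] using S.one_mem
    have hms := Subgroup.map_comap_eq_self_of_surjective hsurj S
    rcases lt_or_eq_of_le hle with hlt | heq
    · right
      have htop := hM.2 _ hlt
      rw [← hms, htop]
      simpa [← MonoidHom.range_eq_map] using MonoidHom.range_eq_top.mpr hsurj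
    · left
      rw [← hms, ← heq]
      rw [Subgroup.map_eq_bot_iff, QuotientGroup.ker_mk']
  have hnt : Nontrivial (H ⧸ M) := by
    obtain ⟨a, ha⟩ : ∃ a, a ∉ M := by
      by_contra h
      push_neg at h
      exact hM.1 ((Subgroup.eq_top_iff' M).mpr h)
    exact ⟨QuotientGroup.mk a, 1, fun h => ha ((QuotientGroup.eq_one_iff a).mp h)⟩
  have hgen : ∀ g : H ⧸ M, g ≠ 1 → Subgroup.zpowers g = ⊤ := by
    intro g hg
    refine (hdich _).resolve_left ?_
    simpa [Subgroup.zpowers_eq_bot] using hg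
  have hpow : ∀ g : H ⧸ M, g ^ p = 1 := by
    intro g
    by_cases hg : g = 1
    · simp [hg]
    by_contra hgp
    have h1 := hgen g hg
    have h2 := hgen _ hgp
    have hcard : orderOf (g ^ p) = orderOf g := by
      rw [← Nat.card_zpowers, ← Nat.card_zpowers, h1, h2]
    obtain ⟨k, hk⟩ := hQp g
    obtain ⟨j, hjk, hj⟩ := (Nat.dvd_prime_pow hp).mp (orderOf_dvd_of_pow_eq_one hk)
    have hj0 : j ≠ 0 := by
      intro h
      rw [h, pow_zero] at hj
      exact hg (orderOf_eq_one_iff.mp hj)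
    have hpd : p ∣ orderOf g := hj ▸ dvd_pow_self p hj0
    have hord : orderOf (g ^ p) = orderOf g / p := orderOf_pow_of_dvd hp.ne_zero hpd
    rw [hord] at hcard
    have hpos : 0 < orderOf g := by
      rw [hj]; exact Nat.pow_pos hp.pos
    have : orderOf g / p < orderOf g := Nat.div_lt_self hpos hp.one_lt
    omega
  have hcomm : ∀ a b : H ⧸ M, a * b = b * a := by
    obtain ⟨g, hg⟩ := exists_ne (1 : H ⧸ M)
    have hgt := hgen g hg
    intro a b
    have ha : a ∈ Subgroup.zpowers g := hgt ▸ Subgroup.mem_top a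
    have hb : b ∈ Subgroup.zpowers g := hgt ▸ Subgroup.mem_top b
    obtain ⟨m, rfl⟩ := ha
    obtain ⟨n, rfl⟩ := hb
    rw [← zpow_add, ← zpow_add, add_comm]
  constructor
  · intro a
    have : QuotientGroup.mk (a ^ p) = (1 : H ⧸ M) := by
      rw [QuotientGroup.mk_pow]
      exact hpow _
    exact (QuotientGroup.eq_one_iff _).mp this
  · intro a b
    have : QuotientGroup.mk (a * b * a⁻¹ * b⁻¹) = (1 : H ⧸ M) := by
      rw [QuotientGroup.mk_mul, QuotientGroup.mk_mul, QuotientGroup.mk_mul,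
        QuotientGroup.mk_inv, QuotientGroup.mk_inv, hcomm (QuotientGroup.mk a)]
      group
    exact (QuotientGroup.eq_one_iff _).mp this

/-- In a finite `p`-group, the Frattini subgroup contains all `p`-th powers and
all commutators. -/
lemma frattini_aux {p : ℕ} (hp : p.Prime) {H : Type*} [Group H] [Finite H]
    (hH : IsPGroup p H) :
    (∀ a : H, a ^ p ∈ frattini H) ∧ (∀ a b : H, a * b * a⁻¹ * b⁻¹ ∈ frattini H) := by
  have hmem : ∀ x : H, (∀ M : Subgroup H, IsCoatom M → x ∈ M) → x ∈ frattini H := by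
    intro x hx
    rw [frattini, Order.radical]
    simp only [Subgroup.mem_iInf]
    exact fun M hM => hx M hM
  constructor
  · exact fun a => hmem _ (fun M hM => (coatom_aux hp hH hM).1 a)
  · exact fun a b => hmem _ (fun M hM => (coatom_aux hp hH hM).2 a b)

theorem stmt_4 (p : ℕ) (hp : p.Prime) (G : Type*) [Group G] [Finite G]
    (hG : IsPGroup p G) (K : Subgroup G) (hco : IsCoatom K)
    (hKset : (K : Set G) = {x : G | orderOf x < Monoid.exponent G})
    (hKGK : ∃ K' : Subgroup K, IsCoatom K' ∧
      (K' : Set K) = {x : K | orderOf x < Monoid.exponent K}) :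
    (∀ x : G, x ∉ K → ∃ hxp : x ^ p ∈ K, (⟨x ^ p, hxp⟩ : K) ∉ frattini K) ∧
    Group.rank G ≤ Group.rank K := by
  classical
  haveI := Fact.mk hp
  obtain ⟨K', hK'co, hK'set⟩ := hKGK
  have hmemK : ∀ y : G, y ∈ K ↔ orderOf y < Monoid.exponent G := fun y =>
    Set.ext_iff.mp hKset y
  have hmemK' : ∀ y : K, y ∈ K' ↔ orderOf y < Monoid.exponent K := fun y =>
    Set.ext_iff.mp hK'set y
  -- exponent of G is a power of p
  obtain ⟨n, hn⟩ := IsPGroup.iff_card.mp hG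
  have hdvd : Monoid.exponent G ∣ p ^ n := hn ▸ Group.exponent_dvd_nat_card
  obtain ⟨e, hen, he⟩ := (Nat.dvd_prime_pow hp).mp hdvd
  have hexp1 : 1 < Monoid.exponent G := by
    have h1 : (1 : G) ∈ K := K.one_mem
    have := (hmemK 1).mp h1
    simpa using this
  have he0 : e ≠ 0 := by
    intro h; rw [h, pow_zero] at he; omega
  obtain ⟨f, rfl⟩ := Nat.exists_eq_succ_of_ne_zero he0
  -- exponent of K divides p ^ f
  have hordlt : ∀ y : G, y ∈ K → orderOf y ∣ p ^ f := by
    intro y hy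
    have h2 : orderOf y ∣ p ^ (f + 1) := he ▸ Monoid.order_dvd_exponent y
    obtain ⟨j, hj1, hj2⟩ := (Nat.dvd_prime_pow hp).mp h2
    have hlt : orderOf y < Monoid.exponent G := (hmemK y).mp hy
    have hjne : j ≠ f + 1 := by
      intro h
      rw [h, ← he] at hj2
      omega
    rw [hj2]
    exact pow_dvd_pow p (by omega)
  have hexpKdvd : Monoid.exponent K ∣ p ^ f := by
    apply Monoid.exponent_dvd_of_forall_pow_eq_one
    intro k
    have h1 : orderOf k ∣ p ^ f := by
      rw [← Subgroup.orderOf_coe k]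
      exact hordlt _ k.2
    exact orderOf_dvd_iff_pow_eq_one.mp h1
  -- order of x^p for x outside K
  have hxp_facts : ∀ x : G, x ∉ K → x ^ p ∈ K ∧ orderOf (x ^ p) = p ^ f := by
    intro x hx
    have hordx : orderOf x = p ^ (f + 1) := by
      have h1 : ¬ orderOf x < Monoid.exponent G := fun h => hx ((hmemK x).mpr h)
      have h2 : orderOf x ∣ Monoid.exponent G := Monoid.order_dvd_exponent x
      have h3 : orderOf x ≤ Monoid.exponent G := Nat.le_of_dvd (by omega) h2
      rw [← he]
      omega
    have hord : orderOf (x ^ p) = p ^ f := by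
      have hpd : p ∣ orderOf x := hordx ▸ dvd_pow_self p (Nat.succ_ne_zero f)
      rw [orderOf_pow_of_dvd hp.ne_zero hpd, hordx, pow_succ,
        Nat.mul_div_cancel _ hp.pos]
    refine ⟨(hmemK _).mpr ?_, hord⟩
    rw [hord, he]
    exact Nat.pow_lt_pow_succ hp.one_lt
  -- the key part 1 statement
  have key : ∀ x : G, x ∉ K → ∃ hxp : x ^ p ∈ K, (⟨x ^ p, hxp⟩ : K) ∉ frattini K := by
    intro x hx
    obtain ⟨hxpK, hord⟩ := hxp_facts x hx
    refine ⟨hxpK, ?_⟩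
    have hordK : orderOf (⟨x ^ p, hxpK⟩ : K) = p ^ f := by
      rw [Subgroup.orderOf_mk, hord]
    have hexpK : Monoid.exponent K = p ^ f := by
      refine Nat.dvd_antisymm hexpKdvd ?_
      rw [← hordK]
      exact Monoid.order_dvd_exponent _
    have hnotK' : (⟨x ^ p, hxpK⟩ : K) ∉ K' := by
      intro h
      have := (hmemK' _).mp h
      rw [hordK, hexpK] at this
      exact lt_irrefl _ this
    exact fun h => hnotK' (frattini_le_coatom hK'co h)
  refine ⟨key, ?_⟩
  -- Now the rank inequality.
  obtain ⟨x, hx⟩ : ∃ x : G, x ∉ K := by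
    by_contra h
    push_neg at h
    exact hco.1 ((Subgroup.eq_top_iff' K).mpr h)
  obtain ⟨hxpK, hxpfrat⟩ := key x hx
  have hKp : IsPGroup p K := hG.to_subgroup K
  obtain ⟨hfp, hfc⟩ := frattini_aux hp hKp
  -- the Frattini quotient as a vector space over ZMod p
  letI cg : CommGroup (K ⧸ frattini K) :=
    { (inferInstance : Group (K ⧸ frattini K)) with
      mul_comm := by
        intro a b
        induction a using QuotientGroup.induction_on with | H a =>
        induction b using QuotientGroup.induction_on with | H b =>
        rw [← QuotientGroup.mk_mul, ← QuotientGroup.mk_mul]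
        apply QuotientGroup.eq.mpr
        have := hfc b⁻¹ a⁻¹
        simpa [mul_assoc] using this }
  haveI mod : Module (ZMod p) (Additive (K ⧸ frattini K)) := by
    apply AddCommMonoid.zmodModule
    intro v
    show Additive.ofMul ((Additive.toMul v) ^ p) = 0
    induction (Additive.toMul v) using QuotientGroup.induction_on with | H a =>
    have h1 : (QuotientGroup.mk (a ^ p) : K ⧸ frattini K) = 1 :=
      (QuotientGroup.eq_one_iff _).mpr (hfp a)
    rw [← QuotientGroup.mk_pow, h1]
    rfl
  set V := Additive (K ⧸ frattini K) with hV
  haveI hVfin : Finite V := by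
    have : Finite (K ⧸ frattini K) := Quotient.finite _
    exact this
  haveI := Fintype.ofFinite V
  -- the projection
  let π : K → V := fun k => Additive.ofMul (QuotientGroup.mk k : K ⧸ frattini K)
  have hπ1 : π 1 = 0 := rfl
  have hπmul : ∀ y z : K, π (y * z) = π y + π z := fun y z => rfl
  have hπinv : ∀ y : K, π y⁻¹ = - π y := fun y => rfl
  have hπsurj : Function.Surjective π := by
    intro v
    obtain ⟨a, ha⟩ := QuotientGroup.mk_surjective (Additive.toMul v)
    exact ⟨a, by simp only [π, ha]; rfl⟩
  -- subgroup closure maps into span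
  have hclos_span : ∀ (s : Set K), Subgroup.closure s = ⊤ →
      Submodule.span (ZMod p) (π '' s) = ⊤ := by
    intro s hs
    rw [eq_top_iff]
    intro v _
    obtain ⟨a, rfl⟩ := hπsurj v
    have ha : a ∈ Subgroup.closure s := hs ▸ Subgroup.mem_top a
    refine Subgroup.closure_induction
      (fun y hy => Submodule.subset_span ⟨y, hy, rfl⟩)
      (by rw [hπ1]; exact Submodule.zero_mem _)
      (fun y z _ _ hy hz => by rw [hπmul]; exact Submodule.add_mem _ hy hz)
      (fun y _ hy => by rw [hπinv]; exact Submodule.neg_mem _ hy) ha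
  -- w := image of x^p is nonzero
  set w : V := π ⟨x ^ p, hxpK⟩ with hw
  have hw0 : w ≠ 0 := by
    intro h
    apply hxpfrat
    have h1 : (QuotientGroup.mk (⟨x ^ p, hxpK⟩ : K) : K ⧸ frattini K) = 1 := h
    exact (QuotientGroup.eq_one_iff _).mp h1
  -- basis of V containing w
  have hli : LinearIndepOn (ZMod p) id ({w} : Set V) :=
    (linearIndepOn_singleton_iff (ZMod p)).mpr hw0
  set B : Set V := hli.extend (Set.subset_univ _) with hB
  have hwB : w ∈ B := hli.subset_extend _ rfl
  have hBspan : Submodule.span (ZMod p) B = ⊤ := by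
    rw [hB, hli.span_extend_eq_span, Submodule.span_univ]
  -- generating set of K of minimal size
  obtain ⟨SK, hSKcard, hSKgen⟩ := Group.rank_spec K
  -- finrank V ≤ |SK|
  have hfr1 : Module.finrank (ZMod p) V ≤ SK.card := by
    set T : Finset V := SK.image π with hT
    have hTspan : Submodule.span (ZMod p) (T : Set V) = ⊤ := by
      rw [hT, Finset.coe_image]
      exact hclos_span _ hSKgen
    have h1 : Module.finrank (ZMod p)
        (Submodule.span (ZMod p) (T : Set V)) ≤ (T : Set V).toFinset.card :=
      finrank_span_le_card _
    have h2 := congrArg (fun S : Submodule (ZMod p) V => Module.finrank (ZMod p) S) hTspan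
    rw [h2, finrank_top] at h1
    rw [Finset.toFinset_coe] at h1
    exact h1.trans Finset.card_image_le
  have hfr2 : B.toFinset.card = Module.finrank (ZMod p) V := by
    rw [Set.toFinset_card]
    exact (Module.finrank_eq_card_basis (Module.Basis.extend hli)).symm
  -- lift elements of V to K
  choose l hl using hπsurj
  -- generating set for G
  set S : Finset G := insert x ((B.toFinset.erase w).image
    (fun v => ((l v : K) : G))) with hS
  have hxS : x ∈ S := Finset.mem_insert_self _ _
  -- the subgroup of K generated by x^p and the lifts
  set gens : Set K := insert (⟨x ^ p, hxpK⟩ : K)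
    ((fun v => l v) '' ((B.toFinset.erase w : Finset V) : Set V)) with hgens
  have hL : Subgroup.closure gens = ⊤ := by
    apply frattini_nongenerating (G := K)
    set W : Subgroup (K ⧸ frattini K) :=
      Subgroup.map (QuotientGroup.mk' (frattini K)) (Subgroup.closure gens) with hW
    have hmapto : B ⊆ (AddSubgroup.toZModSubmodule p
        (Subgroup.toAddSubgroup W) : Set V) := by
      intro v hv
      rw [SetLike.mem_coe, AddSubgroup.mem_toZModSubmodule]
      show Additive.toMul v ∈ W
      by_cases hvw : v = w
      · subst hvw
        exact ⟨(⟨x ^ p, hxpK⟩ : K), Subgroup.subset_closure (by simp [hgens]), rfl⟩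
      · refine ⟨l v, Subgroup.subset_closure ?_, ?_⟩
        · rw [hgens]
          refine Set.mem_insert_iff.mpr (Or.inr ⟨v, ?_, rfl⟩)
          simp [hv, hvw]
        · exact congrArg Additive.toMul (hl v)
    have htop : AddSubgroup.toZModSubmodule p (Subgroup.toAddSubgroup W) = ⊤ := by
      rw [eq_top_iff, ← hBspan]
      exact Submodule.span_le.mpr hmapto
    have hWadd : Subgroup.toAddSubgroup W = ⊤ := by
      apply (AddSubgroup.toZModSubmodule p).injective
      rw [htop, map_top]
    have hWtop : W = ⊤ := by
      apply Subgroup.toAddSubgroup.injective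
      rw [hWadd, map_top]
    have := congrArg (Subgroup.comap (QuotientGroup.mk' (frattini K))) hWtop
    rw [hW, Subgroup.comap_map_eq, QuotientGroup.ker_mk', Subgroup.comap_top] at this
    exact this
  -- closure S contains K
  have hKle : K ≤ Subgroup.closure (S : Set G) := by
    have h1 : Subgroup.map K.subtype (Subgroup.closure gens) ≤
        Subgroup.closure (S : Set G) := by
      rw [MonoidHom.map_closure]
      refine (Subgroup.closure_le _).mpr ?_
      intro y hy
      obtain ⟨z, hz, rfl⟩ := hy
      rw [hgens] at hz
      rcases Set.mem_insert_iff.mp hz with h | ⟨v, hv, rfl⟩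
      · subst h
        show x ^ p ∈ _
        exact pow_mem (Subgroup.subset_closure hxS) p
      · apply Subgroup.subset_closure
        rw [hS]
        simp only [Finset.coe_insert, Set.mem_insert_iff, Finset.coe_image,
          Set.mem_image]
        exact Or.inr ⟨v, by simpa using hv, rfl⟩
    rw [hL] at h1
    have h2 : Subgroup.map K.subtype ⊤ = K := by
      rw [← MonoidHom.range_eq_map, Subgroup.range_subtype]
    rw [← h2]
    exact h1
  have hStop : Subgroup.closure (S : Set G) = ⊤ := by
    apply hco.2
    refine lt_of_le_of_ne hKle ?_
    intro h
    exact hx (h ▸ Subgroup.subset_closure hxS)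
  -- count
  have hcard : S.card ≤ SK.card := by
    calc S.card ≤ (B.toFinset.erase w).card + 1 := by
          rw [hS]
          refine (Finset.card_insert_le _ _).trans ?_
          have := Finset.card_image_le (s := B.toFinset.erase w)
            (f := fun v => ((l v : K) : G))
          omega
      _ = B.toFinset.card := by
          rw [Finset.card_erase_of_mem (Set.mem_toFinset.mpr hwB)]
          have h1 : 1 ≤ B.toFinset.card :=
            Finset.card_pos.mpr ⟨w, Set.mem_toFinset.mpr hwB⟩
          omega
      _ = Module.finrank (ZMod p) V := hfr2
      _ ≤ SK.card := hfr1
  calc Group.rank G ≤ S.card := Group.rank_le hStop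
    _ ≤ SK.card := hcard
    _ = Group.rank K := hSKcard
end

section
/- Let p be a prime and G a nontrivial finite abelian p-group. Then the set 𝒦(G) := {x ∈ G : orderOf x < exp(G)} is a subgroup of G, and G is of GK type (i.e. 𝒦(G) has index p in G) if and only if G is isomorphic to a direct product H × C, where C is cyclic of order exp(G) and H is an abelian p-group with exp(H) < exp(G). -/
open Monoid Multiplicative

/-- Split a pi type of commutative groups at an index, as a `MulEquiv`. -/
private def mulPiSplitAt {ι : Type} [DecidableEq ι] (i : ι) (M : ι → Type)
    [∀ j, CommGroup (M j)] :
    (∀ j, M j) ≃* M i × (∀ j : {j // j ≠ i}, M j) :=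
  { Equiv.piSplitAt i M with map_mul' := fun _ _ => rfl }

private lemma smul_zmod_eq_zero_iff {p t m : ℕ} (hp : 0 < p) (ht : 0 < t)
    (hm : m = p * t) (c : ZMod m) : t • c = 0 ↔ p ∣ c.val := by
  subst hm
  haveI : NeZero (p * t) := ⟨by positivity⟩
  have h1 : t • c = ((t * c.val : ℕ) : ZMod (p * t)) := by
    rw [Nat.cast_mul, ZMod.natCast_zmod_val, nsmul_eq_mul]
  obtain ⟨v, hv⟩ : ∃ v, c.val = v := ⟨_, rfl⟩
  rw [h1, ZMod.natCast_eq_zero_iff, hv, mul_comm p t]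
  exact Nat.mul_dvd_mul_iff_left ht

private lemma castHom_eq_zero_iff {p m : ℕ} [NeZero m] (h : p ∣ m) (c : ZMod m) :
    ZMod.castHom h (ZMod p) c = 0 ↔ p ∣ c.val := by
  rw [ZMod.castHom_apply, ← ZMod.natCast_val, ZMod.natCast_eq_zero_iff]

private lemma castHom_surj {p m : ℕ} [NeZero m] [NeZero p] (h : p ∣ m) :
    Function.Surjective (ZMod.castHom h (ZMod p)) := fun y => by
  obtain ⟨a, rfl⟩ := ZMod.natCast_zmod_surjective y
  exact ⟨(a : ZMod m), by rw [map_natCast]⟩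

private lemma orderOf_lt_exp_iff {G : Type} [Group G] {p E : ℕ} (hp : p.Prime) (hE : 1 ≤ E)
    (hexp : Monoid.exponent G = p ^ E) (x : G) :
    orderOf x < Monoid.exponent G ↔ x ^ (p ^ (E - 1)) = 1 := by
  obtain ⟨k, hk, hord⟩ := (Nat.dvd_prime_pow hp).mp (hexp ▸ Monoid.order_dvd_exponent x)
  rw [hexp, hord, ← orderOf_dvd_iff_pow_eq_one, hord,
    Nat.pow_dvd_pow_iff_le_right hp.one_lt, Nat.pow_lt_pow_iff_right hp.one_lt]
  omega

private lemma exp_mult_zmod (m : ℕ) :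
    Monoid.exponent (Multiplicative (ZMod m)) = m := by
  rw [Monoid.exponent_multiplicative, ZMod.exponent]

private lemma exp_p_pow {p : ℕ} (hp : p.Prime) (G : Type) [Group G] [Finite G]
    (hG : IsPGroup p G) : ∃ k, Monoid.exponent G = p ^ k := by
  haveI := Fact.mk hp
  cases nonempty_fintype G
  obtain ⟨n, hn⟩ := IsPGroup.iff_card.mp hG
  have hd : Monoid.exponent G ∣ p ^ n := by
    rw [← hn, Nat.card_eq_fintype_card]
    exact Group.exponent_dvd_card
  obtain ⟨k, _, hk⟩ := (Nat.dvd_prime_pow hp).mp hd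
  exact ⟨k, hk⟩

theorem stmt_5 (p : ℕ) (hp : p.Prime) (G : Type) [CommGroup G] [Finite G] [Nontrivial G]
    (hG : IsPGroup p G) :
    (∃ K : Subgroup G, (K : Set G) = {x : G | orderOf x < Monoid.exponent G}) ∧
    ((∃ K : Subgroup G, K.index = p ∧
        (K : Set G) = {x : G | orderOf x < Monoid.exponent G}) ↔
      ∃ (H : Type) (_ : CommGroup H) (_ : Finite H), IsPGroup p H ∧
        Monoid.exponent H < Monoid.exponent G ∧
        Nonempty (G ≃* H × Multiplicative (ZMod (Monoid.exponent G)))) := by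
  classical
  haveI := Fact.mk hp
  haveI := Fact.mk hp.one_lt
  obtain ⟨E, hexp⟩ := exp_p_pow hp G hG
  have hE : 1 ≤ E := by
    rcases Nat.eq_zero_or_pos E with h | h
    · exfalso
      have h2 := Monoid.one_lt_exponent (G := G)
      rw [hexp, h, pow_zero] at h2
      omega
    · exact h
  set N := p ^ (E - 1) with hN
  have hNpos : 0 < N := pow_pos hp.pos _
  have hpN : Monoid.exponent G = p * N := by
    rw [hexp, hN, ← pow_succ']
    congr 1
    omega
  have hchar : ∀ x : G, orderOf x < Monoid.exponent G ↔ x ^ N = 1 :=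
    orderOf_lt_exp_iff hp hE hexp
  have hKdef : (((powMonoidHom N : G →* G).ker : Subgroup G) : Set G)
      = {x : G | orderOf x < Monoid.exponent G} := by
    ext x
    simp only [SetLike.mem_coe, MonoidHom.mem_ker, powMonoidHom_apply, Set.mem_setOf_eq, hchar]
  refine ⟨⟨_, hKdef⟩, ?_, ?_⟩
  · -- forward: index p implies decomposition
    rintro ⟨K, hKidx, hKset⟩
    obtain ⟨ι, hι, nn, hnn, hfe⟩ := CommGroup.equiv_prod_multiplicative_zmod_of_finite G
    haveI := hι
    obtain ⟨f⟩ := hfe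
    haveI : ∀ i, NeZero (nn i) := fun i => ⟨by have := hnn i; omega⟩
    have hexpPi : Monoid.exponent G = Finset.univ.lcm nn := by
      rw [Monoid.exponent_eq_of_mulEquiv f, Monoid.exponent_pi]
      simp only [exp_mult_zmod]
    have hdvd : ∀ i, nn i ∣ p ^ E := fun i => by
      rw [← hexp]
      exact hexpPi ▸ Finset.dvd_lcm (Finset.mem_univ i)
    choose e he1 he2 using fun i => (Nat.dvd_prime_pow hp).mp (hdvd i)
    have he0 : ∀ i, 1 ≤ e i := fun i => by
      rcases Nat.eq_zero_or_pos (e i) with h | h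
      · exfalso
        have h2 := hnn i
        rw [he2 i, h, pow_zero] at h2
        omega
      · exact h
    have h0 : ∃ i, e i = E := by
      by_contra hcon
      push_neg at hcon
      have hall : Monoid.exponent G ∣ p ^ (E - 1) := by
        rw [hexpPi]
        refine Finset.lcm_dvd fun i _ => ?_
        rw [he2 i]
        exact pow_dvd_pow p (by have := he1 i; have := hcon i; omega)
      rw [hexp] at hall
      have h1 := Nat.le_of_dvd (by positivity) hall
      have h2 : p ^ (E - 1) < p ^ E :=
        (Nat.pow_lt_pow_iff_right hp.one_lt).mpr (by omega)
      omega
    obtain ⟨i₀, hi₀⟩ := h0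
    have hpdvd : ∀ i, p ∣ nn i := fun i => by
      rw [he2 i]
      exact dvd_pow_self p (by have := he0 i; omega)
    set χ : ∀ i, Multiplicative (ZMod (nn i)) →* Multiplicative (ZMod p) := fun i =>
      MonoidHom.mk' (fun c => Multiplicative.ofAdd (ZMod.castHom (hpdvd i) (ZMod p) c.toAdd))
        (fun a b => by
          simp only [toAdd_mul, map_add, ofAdd_add]) with hχ
    set ψ : ∀ i, G →* Multiplicative (ZMod p) := fun i =>
      (χ i).comp ((Pi.evalMonoidHom _ i).comp f.toMonoidHom) with hψ
    have hψ_apply : ∀ i (x : G),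
        ψ i x = Multiplicative.ofAdd (ZMod.castHom (hpdvd i) (ZMod p) (f x i).toAdd) := by
      intro i x
      rfl
    have hker : ∀ i, e i = E → K = (ψ i).ker := by
      intro i hiE
      have hle : K ≤ (ψ i).ker := by
        intro x hx
        have hx' : orderOf x < Monoid.exponent G := by
          rw [← SetLike.mem_coe, hKset] at hx
          exact hx
        have hxN : x ^ N = 1 := (hchar x).mp hx'
        have hfN : (f x) ^ N = 1 := by rw [← map_pow, hxN, map_one]
        have hfi : (f x i) ^ N = 1 := by
          have h3 := congrFun hfN i
          rwa [Pi.pow_apply, Pi.one_apply] at h3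
        have hsm : N • (f x i).toAdd = 0 := by
          have h4 := congrArg Multiplicative.toAdd hfi
          rwa [toAdd_pow, toAdd_one] at h4
        have hm : nn i = p * N := by
          rw [he2 i, hiE, hN, ← pow_succ']
          congr 1
          omega
        have hv : p ∣ (f x i).toAdd.val :=
          (smul_zmod_eq_zero_iff hp.pos hNpos hm _).mp hsm
        have h5 : ZMod.castHom (hpdvd i) (ZMod p) (f x i).toAdd = 0 :=
          (castHom_eq_zero_iff _ _).mpr hv
        show ψ i x = 1
        rw [hψ_apply, h5, ofAdd_zero]
      have hsurj : Function.Surjective (ψ i) := by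
        intro y
        obtain ⟨c, hc⟩ := castHom_surj (hpdvd i) y.toAdd
        refine ⟨f.symm (Pi.mulSingle i (Multiplicative.ofAdd c)), ?_⟩
        rw [hψ_apply, f.apply_symm_apply, Pi.mulSingle_eq_same, toAdd_ofAdd, hc, ofAdd_toAdd]
      have hidx : (ψ i).ker.index = p := by
        rw [Subgroup.index_ker, MonoidHom.range_eq_top.mpr hsurj, Subgroup.card_top,
          Nat.card_congr Multiplicative.toAdd, Nat.card_zmod]
      have h1 := Subgroup.relIndex_mul_index hle
      rw [hidx, hKidx] at h1
      have h2 : K.relIndex (ψ i).ker = 1 :=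
        Nat.eq_of_mul_eq_mul_right hp.pos (by rw [h1, one_mul])
      exact le_antisymm hle (Subgroup.relIndex_eq_one.mp h2)
    have huniq : ∀ j : ι, j ≠ i₀ → e j < E := by
      intro j hj
      by_contra h
      have hjE : e j = E := le_antisymm (he1 j) (by omega)
      have h1 : K = (ψ i₀).ker := hker i₀ hi₀
      have h2 : K = (ψ j).ker := hker j hjE
      set x := f.symm (Pi.mulSingle i₀ (Multiplicative.ofAdd (1 : ZMod (nn i₀)))) with hx
      have hxj : x ∈ (ψ j).ker := by
        rw [MonoidHom.mem_ker, hψ_apply, hx, f.apply_symm_apply,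
          Pi.mulSingle_eq_of_ne hj, toAdd_one, map_zero, ofAdd_zero]
      have hxi : x ∉ (ψ i₀).ker := by
        rw [MonoidHom.mem_ker, hψ_apply, hx, f.apply_symm_apply,
          Pi.mulSingle_eq_same, toAdd_ofAdd, map_one, ofAdd_eq_one]
        exact one_ne_zero
      rw [← h2, h1] at hxj
      exact hxi hxj
    refine ⟨∀ j : {j // j ≠ i₀}, Multiplicative (ZMod (nn j)), inferInstance, inferInstance,
      ?_, ?_, ?_⟩
    · rw [IsPGroup.iff_card]
      refine ⟨∑ j : {j // j ≠ i₀}, e j, ?_⟩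
      rw [Nat.card_pi, ← Finset.prod_pow_eq_pow_sum]
      refine Finset.prod_congr rfl fun j _ => ?_
      rw [Nat.card_congr Multiplicative.toAdd, Nat.card_zmod, he2 j]
    · have hH : Monoid.exponent (∀ j : {j // j ≠ i₀}, Multiplicative (ZMod (nn j)))
          ∣ p ^ (E - 1) := by
        rw [Monoid.exponent_pi]
        refine Finset.lcm_dvd fun j _ => ?_
        rw [exp_mult_zmod, he2 j]
        exact pow_dvd_pow p (by have := huniq j j.2; omega)
      calc Monoid.exponent (∀ j : {j // j ≠ i₀}, Multiplicative (ZMod (nn j)))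
          ≤ p ^ (E - 1) := Nat.le_of_dvd (by positivity) hH
        _ < p ^ E := (Nat.pow_lt_pow_iff_right hp.one_lt).mpr (by omega)
        _ = Monoid.exponent G := hexp.symm
    · have hnn₀ : Monoid.exponent G = nn i₀ := by rw [hexp, he2 i₀, hi₀]
      rw [hnn₀]
      exact ⟨f.trans ((mulPiSplitAt i₀ _).trans MulEquiv.prodComm)⟩
  · -- reverse: decomposition implies index p
    rintro ⟨H, hCG, hF, hHp, hHlt, hfe⟩
    letI := hCG
    letI := hF
    obtain ⟨f⟩ := hfe
    refine ⟨(powMonoidHom N : G →* G).ker, ?_, hKdef⟩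
    obtain ⟨k, hk⟩ := exp_p_pow hp H hHp
    have hkE : k ≤ E - 1 := by
      rw [hk, hexp] at hHlt
      have := (Nat.pow_lt_pow_iff_right hp.one_lt).mp hHlt
      omega
    have hHN : ∀ h : H, h ^ N = 1 := fun h =>
      orderOf_dvd_iff_pow_eq_one.mp
        (dvd_trans (Monoid.order_dvd_exponent h) (hk ▸ pow_dvd_pow p hkE))
    haveI : NeZero (Monoid.exponent G) := ⟨Monoid.exponent_ne_zero_of_finite⟩
    have hdvd : p ∣ Monoid.exponent G := ⟨N, hpN⟩
    set χ : Multiplicative (ZMod (Monoid.exponent G)) →* Multiplicative (ZMod p) :=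
      MonoidHom.mk' (fun c => Multiplicative.ofAdd (ZMod.castHom hdvd (ZMod p) c.toAdd))
        (fun a b => by simp only [toAdd_mul, map_add, ofAdd_add]) with hχ
    set ψ : G →* Multiplicative (ZMod p) :=
      χ.comp ((MonoidHom.snd H _).comp f.toMonoidHom) with hψ
    have hψ_apply : ∀ x : G,
        ψ x = Multiplicative.ofAdd (ZMod.castHom hdvd (ZMod p) (f x).2.toAdd) := fun x => rfl
    have hker : (powMonoidHom N : G →* G).ker = ψ.ker := by
      ext x
      rw [MonoidHom.mem_ker, MonoidHom.mem_ker, powMonoidHom_apply]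
      have h1 : x ^ N = 1 ↔ (f x) ^ N = 1 := by
        rw [← map_pow]
        exact ⟨fun h => by rw [h, map_one],
          fun h => f.injective (by rw [h, map_one])⟩
      have h2 : (f x) ^ N = 1 ↔ (f x).2 ^ N = 1 := by
        constructor
        · intro h
          exact congrArg Prod.snd h
        · intro h
          exact Prod.ext (hHN _) h
      have h3 : (f x).2 ^ N = 1 ↔ N • (f x).2.toAdd = 0 := by
        constructor
        · intro h
          have h4 := congrArg Multiplicative.toAdd h
          rwa [toAdd_pow, toAdd_one] at h4
        · intro h
          have h4 : ((f x).2 ^ N).toAdd = (1 : Multiplicative (ZMod _)).toAdd := by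
            rw [toAdd_pow, toAdd_one, h]
          exact Multiplicative.toAdd.injective h4
      rw [h1, h2, h3, smul_zmod_eq_zero_iff hp.pos hNpos hpN, hψ_apply,
        ← castHom_eq_zero_iff hdvd, ofAdd_eq_one]
    have hsurj : Function.Surjective ψ := by
      intro y
      obtain ⟨c, hc⟩ := castHom_surj hdvd y.toAdd
      refine ⟨f.symm (1, Multiplicative.ofAdd c), ?_⟩
      rw [hψ_apply, f.apply_symm_apply]
      show Multiplicative.ofAdd (ZMod.castHom hdvd (ZMod p) (Multiplicative.ofAdd c).toAdd) = y
      rw [toAdd_ofAdd, hc, ofAdd_toAdd]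
    rw [hker, Subgroup.index_ker, MonoidHom.range_eq_top.mpr hsurj, Subgroup.card_top,
      Nat.card_congr Multiplicative.toAdd, Nat.card_zmod]
end

section
/- Let G be a finite group, H a normal subgroup with G/H cyclic of order d, and g ∈ G such that G is generated by g together with H. Let k be the smallest positive integer such that the conjugation automorphism of H induced by g^k is an inner automorphism of H. Then: k divides d; the subgroup T generated by g^k together with H is normal in G with [G : T] = k and T/H cyclic of order d/k; T is a trivial extension of H, i.e. there exists y ∈ H such that g^k·y⁻¹ centralizes H; and G is a faithful extension of T, i.e. for every integer j, if conjugation by g^j induces an inner automorphism of T then k divides j. -/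
open scoped Pointwise

theorem stmt_6 (G : Type*) [Group G] [Finite G] (H : Subgroup G) [H.Normal]
    (d : ℕ) (hcyc : IsCyclic (G ⧸ H)) (hd : H.index = d)
    (g : G) (hgen : Subgroup.zpowers g ⊔ H = ⊤)
    (k : ℕ) (hk : 0 < k)
    (hinner : ∃ y ∈ H, ∀ z ∈ H, (g ^ k)⁻¹ * z * g ^ k = y⁻¹ * z * y)
    (hmin : ∀ m : ℕ, 0 < m →
      (∃ y ∈ H, ∀ z ∈ H, (g ^ m)⁻¹ * z * g ^ m = y⁻¹ * z * y) → k ≤ m) :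
    k ∣ d ∧
    ∀ T : Subgroup G, T = Subgroup.zpowers (g ^ k) ⊔ H →
      T.Normal ∧ T.index = k ∧
      IsCyclic (T ⧸ H.subgroupOf T) ∧ Nat.card (T ⧸ H.subgroupOf T) = d / k ∧
      (∃ y ∈ H, ∀ z ∈ H, (g ^ k * y⁻¹) * z = z * (g ^ k * y⁻¹)) ∧
      (∀ j : ℤ, (∃ y ∈ T, ∀ z ∈ T, (g ^ j)⁻¹ * z * g ^ j = y⁻¹ * z * y) →
        (k : ℤ) ∣ j) := by
  classical
  haveI : Finite (G ⧸ H) := Quotient.finite _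
  -- the predicate "conjugation by g^m is inner on H"
  set P : ℤ → Prop := fun m => ∃ y ∈ H, ∀ z ∈ H, (g ^ m)⁻¹ * z * g ^ m = y⁻¹ * z * y
    with hPdef
  have Padd : ∀ a b : ℤ, P a → P b → P (a + b) := by
    rintro a b ⟨y1, hy1, h1⟩ ⟨y2, hy2, h2⟩
    refine ⟨y1 * y2, mul_mem hy1 hy2, fun z hz => ?_⟩
    have hz1 : y1⁻¹ * z * y1 ∈ H := mul_mem (mul_mem (inv_mem hy1) hz) hy1
    calc (g ^ (a + b))⁻¹ * z * g ^ (a + b)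
        = (g ^ b)⁻¹ * ((g ^ a)⁻¹ * z * g ^ a) * g ^ b := by
          rw [zpow_add]; group
      _ = (g ^ b)⁻¹ * (y1⁻¹ * z * y1) * g ^ b := by rw [h1 z hz]
      _ = y2⁻¹ * (y1⁻¹ * z * y1) * y2 := h2 _ hz1
      _ = (y1 * y2)⁻¹ * z * (y1 * y2) := by group
  have Pneg : ∀ a : ℤ, P a → P (-a) := by
    rintro a ⟨y, hy, h⟩
    refine ⟨y⁻¹, inv_mem hy, fun z hz => ?_⟩
    have hz' : g ^ a * z * (g ^ a)⁻¹ ∈ H := by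
      have := Subgroup.Normal.conj_mem ‹H.Normal› z hz (g ^ a)
      exact this
    have h2 := h _ hz'
    have h3 : z = y⁻¹ * (g ^ a * z * (g ^ a)⁻¹) * y := by
      rw [← h2]; group
    conv_rhs => rw [h3]
    group
  have Pk : P (k : ℤ) := by
    obtain ⟨y, hy, h⟩ := hinner
    exact ⟨y, hy, fun z hz => by rw [zpow_natCast]; exact h z hz⟩
  have P0 : P 0 := ⟨1, one_mem H, fun z hz => by simp⟩
  have Pmul : ∀ t : ℤ, P ((k : ℤ) * t) := by
    intro t
    induction t using Int.induction_on with
    | zero => simpa using P0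
    | succ i ih =>
        have := Padd _ _ ih Pk
        have he : (k : ℤ) * (i + 1) = (k : ℤ) * i + k := by ring
        rwa [he]
    | pred i ih =>
        have := Padd _ _ ih (Pneg _ Pk)
        have he : (k : ℤ) * (-i - 1) = (k : ℤ) * (-i) + -(k : ℤ) := by ring
        rwa [he]
  have Pdvd : ∀ m : ℤ, P m → (k : ℤ) ∣ m := by
    intro m hm
    have hk0 : (k : ℤ) ≠ 0 := by exact_mod_cast hk.ne'
    set r := m % (k : ℤ) with hr
    have hr0 : 0 ≤ r := Int.emod_nonneg m hk0
    have hrk : r < k := Int.emod_lt_of_pos m (by exact_mod_cast hk)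
    have hPr : P r := by
      have he : r = m + (k : ℤ) * (-(m / k)) := by
        rw [hr, Int.emod_def]; ring
      rw [he]; exact Padd _ _ hm (Pmul _)
    rcases eq_or_lt_of_le hr0 with h0 | h0
    · exact Int.dvd_of_emod_eq_zero h0.symm
    · exfalso
      obtain ⟨y, hy, hyz⟩ := hPr
      have htn : (r.toNat : ℤ) = r := Int.toNat_of_nonneg hr0
      have hle := hmin r.toNat (by omega)
        ⟨y, hy, fun z hz => by rw [← zpow_natCast, htn]; exact hyz z hz⟩
      omega
  -- k divides d
  have hgd : g ^ d ∈ H := by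
    rw [← QuotientGroup.eq_one_iff]
    have : ((g : G ⧸ H) : G ⧸ H) ^ d = 1 := by
      rw [← hd]
      exact pow_card_eq_one'
    simpa using this
  have Pd : P (d : ℤ) := ⟨g ^ d, hgd, fun z hz => by rw [zpow_natCast]⟩
  have hkd : k ∣ d := by exact_mod_cast Pdvd _ Pd
  refine ⟨hkd, ?_⟩
  rintro T rfl
  set T := Subgroup.zpowers (g ^ k) ⊔ H with hT
  have hHT : H ≤ T := le_sup_right
  set π := QuotientGroup.mk' H with hπ
  have hπsurj : Function.Surjective π := QuotientGroup.mk'_surjective H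
  have hmapH : H.map π = ⊥ := by
    rw [eq_bot_iff]
    rintro x ⟨h, hh, rfl⟩
    simp only [Subgroup.mem_bot]
    exact (QuotientGroup.eq_one_iff h).mpr hh
  have hmapT : T.map π = Subgroup.zpowers ((π g) ^ k) := by
    rw [hT, Subgroup.map_sup, hmapH, sup_bot_eq, MonoidHom.map_zpowers, map_pow]
  have hcomap : (T.map π).comap π = T := by
    rw [Subgroup.comap_map_eq, QuotientGroup.ker_mk', sup_of_le_left hHT]
  -- G/H is commutative since cyclic
  have hcomm : ∀ a b : G ⧸ H, a * b = b * a := by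
    obtain ⟨ζ, hζ⟩ := hcyc
    intro a b
    obtain ⟨i, rfl⟩ := hζ a
    obtain ⟨j, rfl⟩ := hζ b
    rw [← zpow_add, ← zpow_add, add_comm]
  have hNnormal : (T.map π).Normal := by
    constructor
    intro n hn x
    rw [hcomm x n, mul_assoc, mul_inv_cancel, mul_one]
    exact hn
  have hTnormal : T.Normal := by
    rw [← hcomap]
    exact hNnormal.comap π
  -- order of π g is d
  have hzg : Subgroup.zpowers (π g) = ⊤ := by
    have h := congrArg (Subgroup.map π) hgen
    rw [Subgroup.map_sup, hmapH, sup_bot_eq, MonoidHom.map_zpowers,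
      Subgroup.map_top_of_surjective π hπsurj] at h
    exact h
  have hdpos : 0 < d := by
    rw [← hd]
    exact Nat.pos_of_ne_zero Subgroup.index_ne_zero_of_finite
  have hordg : orderOf (π g) = d := by
    rw [← Nat.card_zpowers, hzg, Subgroup.card_top, ← hd, Subgroup.index_eq_card]
  have hordgk : orderOf ((π g) ^ k) = d / k := by
    rw [orderOf_pow, hordg, Nat.gcd_eq_right hkd]
  have hcardN : Nat.card (T.map π) = d / k := by
    rw [hmapT, Nat.card_zpowers, hordgk]
  -- index of T
  have hTindex : T.index = k := by
    have h1 : T.index = (T.map π).index := by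
      conv_lhs => rw [← hcomap]
      exact Subgroup.index_comap_of_surjective _ hπsurj
    have h2 : Nat.card (T.map π) * (T.map π).index = Nat.card (G ⧸ H) :=
      Subgroup.card_mul_index _
    have h3 : Nat.card (G ⧸ H) = d := by rw [← hd, Subgroup.index_eq_card]
    rw [hcardN, h3] at h2
    have hdk : 0 < d / k := Nat.div_pos (Nat.le_of_dvd hdpos hkd) hk
    have h4 : d / k * (T.map π).index = d / k * k := by
      rw [h2, Nat.div_mul_cancel hkd]
    rw [h1, Nat.eq_of_mul_eq_mul_left hdk h4]
  -- the quotient T / (H.subgroupOf T)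
  set φ : T →* G ⧸ H := π.comp T.subtype with hφ
  have hkerφ : φ.ker = H.subgroupOf T := by
    rw [hφ, ← MonoidHom.comap_ker, QuotientGroup.ker_mk']
    rfl
  have hrangeφ : φ.range = T.map π := by
    rw [hφ, MonoidHom.range_comp, Subgroup.range_subtype]
  haveI : (H.subgroupOf T).Normal := Subgroup.Normal.subgroupOf ‹H.Normal› T
  have hequiv : (T ⧸ H.subgroupOf T) ≃* φ.range :=
    (QuotientGroup.quotientMulEquivOfEq hkerφ.symm).trans
      (QuotientGroup.quotientKerEquivRange φ)
  have hcyc' : IsCyclic (T ⧸ H.subgroupOf T) := by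
    haveI : IsCyclic φ.range := by
      rw [hrangeφ]
      infer_instance
    exact isCyclic_of_surjective hequiv.symm hequiv.symm.surjective
  have hcard' : Nat.card (T ⧸ H.subgroupOf T) = d / k := by
    rw [Nat.card_congr hequiv.toEquiv, ← hcardN, hrangeφ]
  -- trivial extension
  have htrivial : ∃ y ∈ H, ∀ z ∈ H, (g ^ k * y⁻¹) * z = z * (g ^ k * y⁻¹) := by
    obtain ⟨y, hy, h⟩ := hinner
    refine ⟨y, hy, fun z hz => ?_⟩
    have h2 := h z hz
    have h3 : z * g ^ k = g ^ k * (y⁻¹ * z * y) := by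
      rw [← h2]; group
    calc g ^ k * y⁻¹ * z = g ^ k * (y⁻¹ * z * y) * y⁻¹ := by group
      _ = z * g ^ k * y⁻¹ := by rw [← h3]
      _ = z * (g ^ k * y⁻¹) := by group
  refine ⟨hTnormal, hTindex, hcyc', hcard', htrivial, ?_⟩
  -- faithfulness
  rintro j ⟨y, hyT, hy⟩
  have hymem : y ∈ (Subgroup.zpowers (g ^ k) : Set G) * (H : Set G) := by
    rw [← Subgroup.mul_normal]
    exact hyT
  obtain ⟨a, ha, h, hh, rfl⟩ := hymem
  obtain ⟨n, rfl⟩ := Subgroup.mem_zpowers_iff.mp ha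
  have hP : P (j - (k : ℤ) * n) := by
    refine ⟨g ^ ((k : ℤ) * n) * h * (g ^ ((k : ℤ) * n))⁻¹,
      Subgroup.Normal.conj_mem ‹H.Normal› h hh _, fun z hz => ?_⟩
    have hzT : z ∈ T := hHT hz
    have h2 := hy z hzT
    have hgkn : (g ^ k : G) ^ n = g ^ ((k : ℤ) * n) := by
      rw [← zpow_natCast, ← zpow_mul]
    rw [hgkn] at h2
    have h4 : (g ^ (j - (k : ℤ) * n))⁻¹ * z * g ^ (j - (k : ℤ) * n)
        = g ^ ((k : ℤ) * n) * ((g ^ j)⁻¹ * z * g ^ j) * (g ^ ((k : ℤ) * n))⁻¹ := by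
      rw [zpow_sub]; group
    rw [h4, h2]
    group
  have h5 := dvd_add (Pdvd _ hP) (dvd_mul_right (k : ℤ) n)
  simpa using h5
end

section
/- Let p be a prime, G a finite p-group, H a normal subgroup of G, and g ∈ G centralizing H such that G is generated by g together with H (so G is a trivial extension of H). Then the Frattini subgroup of G is generated by g^p together with the Frattini subgroup of H: Φ(G) = ⟨g^p⟩·Φ(H). -/
open Subgroup

section Aux
variable {p : ℕ} {G : Type*} [Group G] [Finite G]

lemma coatom_index (hp : p.Prime) (hG : IsPGroup p G) {M : Subgroup G} (hM : IsCoatom M)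
    [hMn : M.Normal] : Nat.card (G ⧸ M) = p := by
  haveI : Fact p.Prime := ⟨hp⟩
  obtain ⟨n, hn⟩ := IsPGroup.iff_card.mp (hG.to_quotient M)
  rcases n with _ | _ | n
  · exfalso
    apply hM.1
    rw [pow_zero] at hn
    have hsub : Subsingleton (G ⧸ M) := (Nat.card_eq_one_iff_unique.mp hn).1
    ext x
    simp only [mem_top, iff_true]
    exact (QuotientGroup.eq_one_iff x).mp (Subsingleton.elim _ _)
  · simpa using hn
  · exfalso
    obtain ⟨K, hK⟩ := Sylow.exists_subgroup_card_pow_prime (G := G ⧸ M) p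
      (n := 1) (by rw [hn]; exact pow_dvd_pow p (by omega))
    rw [pow_one] at hK
    have hKbot : K ≠ ⊥ := by
      intro h; rw [h, card_bot] at hK; exact hp.one_lt.ne hK
    have hKtop : K ≠ ⊤ := by
      intro h; rw [h, card_top, hn] at hK
      have h2 : p * p ∣ p ^ (n + 1 + 1) := by
        rw [← pow_two]; exact pow_dvd_pow p (by omega)
      rw [hK] at h2
      have := Nat.le_of_dvd hp.pos h2
      nlinarith [hp.one_lt]
    set π := QuotientGroup.mk' M with hπdef
    have hπ : Function.Surjective π := QuotientGroup.mk'_surjective M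
    have hle : M ≤ comap π K := by
      intro x hx
      have : π x = 1 := (QuotientGroup.eq_one_iff x).mpr hx
      simp only [mem_comap, this]
      exact K.one_mem
    have hne : M ≠ comap π K := by
      intro h
      apply hKbot
      apply (Subgroup.eq_bot_iff_forall _).mpr
      intro z hz
      obtain ⟨x, rfl⟩ := hπ z
      have : x ∈ M := h ▸ (mem_comap.mpr hz)
      exact (QuotientGroup.eq_one_iff x).mpr this
    have htop := hM.2 _ (lt_of_le_of_ne hle hne)
    apply hKtop
    rw [← map_comap_eq_self_of_surjective hπ K, htop]
    exact (map_top_of_surjective π hπ)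

/-- p-th powers lie in the Frattini subgroup of a finite p-group. -/
lemma pow_mem_frattini (hp : p.Prime) (hG : IsPGroup p G) (x : G) : x ^ p ∈ frattini G := by
  rw [frattini, Order.radical]
  simp only [Subgroup.mem_iInf]
  intro M hM
  haveI : M.Normal := by
    haveI : Fact p.Prime := ⟨hp⟩
    haveI := hG.isNilpotent
    exact Subgroup.NormalizerCondition.normal_of_coatom M normalizerCondition_of_isNilpotent hM
  have hidx : M.index = p := coatom_index hp hG hM
  simpa [hidx] using M.pow_index_mem x

/-- commutators lie in the Frattini subgroup of a finite p-group. -/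
lemma commutator_mem_frattini (hp : p.Prime) (hG : IsPGroup p G) (x y : G) :
    x * y * x⁻¹ * y⁻¹ ∈ frattini G := by
  rw [frattini, Order.radical]
  simp only [Subgroup.mem_iInf]
  intro M hM
  haveI : M.Normal := by
    haveI : Fact p.Prime := ⟨hp⟩
    haveI := hG.isNilpotent
    exact Subgroup.NormalizerCondition.normal_of_coatom M normalizerCondition_of_isNilpotent hM
  haveI : Fact p.Prime := ⟨hp⟩
  have hidx : Nat.card (G ⧸ M) = p := coatom_index hp hG hM
  have hcyc : IsCyclic (G ⧸ M) := isCyclic_of_prime_card hidx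
  letI : CommGroup (G ⧸ M) := hcyc.commGroup
  rw [← QuotientGroup.eq_one_iff]
  have : ((x : G ⧸ M) * y * (x : G ⧸ M)⁻¹ * (y : G ⧸ M)⁻¹ : G ⧸ M) = 1 := by
    rw [mul_comm (x : G ⧸ M) (y : G ⧸ M)]
    group
  simpa using this

end Aux

section Aux2
variable {p : ℕ} {G : Type*} [Group G] [Finite G]

lemma frattini_le_of_pow_comm (hp : p.Prime) {K : Subgroup G} [K.Normal]
    (hpow : ∀ x : G, x ^ p ∈ K) (hcomm : ∀ x y : G, x * y * x⁻¹ * y⁻¹ ∈ K) :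
    frattini G ≤ K := by
  intro x hx
  by_contra hxK
  set π := QuotientGroup.mk' K with hπdef
  have hπ : Function.Surjective π := QuotientGroup.mk'_surjective K
  set Q := G ⧸ K with hQdef
  have hQcomm : ∀ a b : Q, a * b = b * a := by
    intro a b
    obtain ⟨a, rfl⟩ := hπ a
    obtain ⟨b, rfl⟩ := hπ b
    rw [← map_mul, ← map_mul]
    rw [QuotientGroup.mk'_eq_mk' K]
    refine ⟨(a * b)⁻¹ * (b * a), ?_, by group⟩
    convert hcomm b⁻¹ a⁻¹ using 1
    group
  have hQpow : ∀ z : Q, z ^ p = 1 := by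
    intro z
    obtain ⟨a, rfl⟩ := hπ z
    rw [← map_pow]
    exact (QuotientGroup.eq_one_iff _).mpr (hpow a)
  have hnormal : ∀ S : Subgroup Q, S.Normal := by
    intro S
    constructor
    intro n hn q
    rw [hQcomm q n, mul_assoc, mul_inv_cancel, mul_one]
    exact hn
  set xq := π x with hxq
  have hxq1 : xq ∉ (⊥ : Subgroup Q) := by
    simp only [Subgroup.mem_bot]
    intro h
    exact hxK ((QuotientGroup.eq_one_iff x).mp h)
  obtain ⟨M₀, hM₀mem, hM₀max⟩ : ∃ M₀ ∈ {S : Subgroup Q | xq ∉ S}, ∀ a' ∈ {S : Subgroup Q | xq ∉ S},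
      id M₀ ≤ id a' → id M₀ = id a' := by
    obtain ⟨M, hM1, hM2⟩ := Set.Finite.exists_maximalFor (id : Subgroup Q → Subgroup Q)
      {S : Subgroup Q | xq ∉ S} (Set.toFinite _) ⟨⊥, hxq1⟩
    exact ⟨M, hM1, fun a' ha h => le_antisymm h (hM2 ha h)⟩
  simp only [Set.mem_setOf_eq, id_eq] at hM₀mem hM₀max
  -- step 1/2 : every z ∉ M₀ lies in M₀ ⊔ zpowers xq
  have step2 : ∀ z : Q, z ∉ M₀ → z ∈ M₀ ⊔ Subgroup.zpowers xq := by
    intro z hz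
    have h1 : xq ∈ M₀ ⊔ Subgroup.zpowers z := by
      by_contra hc
      have := hM₀max _ hc le_sup_left
      exact hz (this ▸ (mem_sup_right (mem_zpowers z)))
    haveI := hnormal (Subgroup.zpowers z)
    rw [← SetLike.mem_coe, mul_normal] at h1
    obtain ⟨m, hm, w, hw, hmw⟩ := h1
    obtain ⟨k, rfl⟩ := hw
    have hmw : m * z ^ k = xq := hmw
    by_cases hdvd : (p : ℤ) ∣ k
    · exfalso
      obtain ⟨c, rfl⟩ := hdvd
      rw [zpow_mul, zpow_natCast, hQpow z, one_zpow, mul_one] at hmw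
      exact hM₀mem (hmw ▸ hm)
    · have hcop : IsCoprime (p : ℤ) k := by
        rw [Int.isCoprime_iff_gcd_eq_one]
        have hnc : Nat.Coprime p k.natAbs :=
          (Nat.Prime.coprime_iff_not_dvd hp).mpr (fun h => hdvd (Int.natCast_dvd.mpr h))
        simpa [Int.gcd] using hnc
      obtain ⟨a, b, hab⟩ := hcop
      have hzk : z ^ k ∈ M₀ ⊔ Subgroup.zpowers xq := by
        have : z ^ k = m⁻¹ * xq := by
          rw [← hmw]; group
        rw [this]
        exact mul_mem (mem_sup_left (inv_mem hm)) (mem_sup_right (mem_zpowers xq))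
      have : z = (z ^ k) ^ b := by
        calc z = z ^ (a * (p:ℤ) + b * k) := by rw [hab, zpow_one]
        _ = (z ^ (p:ℤ)) ^ a * (z ^ k) ^ b := by
              rw [mul_comm a ((p:ℤ)), mul_comm b k, zpow_add, zpow_mul, zpow_mul]
        _ = (z ^ k) ^ b := by rw [zpow_natCast, hQpow z, one_zpow, one_mul]
      rw [this]
      exact zpow_mem hzk b
  -- step 3 : M₀ is a coatom
  have hco : IsCoatom M₀ := by
    constructor
    · intro h
      exact hM₀mem (h ▸ Subgroup.mem_top xq)
    · intro N hN
      obtain ⟨y, hyN, hyM⟩ := SetLike.exists_of_lt hN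
      have hxqN : xq ∈ N := by
        have h1 : xq ∈ M₀ ⊔ Subgroup.zpowers y := by
          by_contra hc
          have := hM₀max _ hc le_sup_left
          exact hyM (this ▸ (mem_sup_right (mem_zpowers y)))
        exact (sup_le hN.le (Subgroup.zpowers_le.mpr hyN)) h1
      rw [eq_top_iff']
      intro z
      by_cases hz : z ∈ M₀
      · exact hN.le hz
      · exact (sup_le hN.le (Subgroup.zpowers_le.mpr hxqN)) (step2 z hz)
  -- step 4 : pull back to G
  have hKle : K ≤ Subgroup.comap π M₀ := by
    intro y hy
    have h1 : π y = 1 := (QuotientGroup.eq_one_iff y).mpr hy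
    simp only [Subgroup.mem_comap, h1]
    exact M₀.one_mem
  have hco' : IsCoatom (Subgroup.comap π M₀) := by
    constructor
    · intro h
      exact hM₀mem (Subgroup.mem_comap.mp (h ▸ Subgroup.mem_top x))
    · intro N' hN'
      have hKN' : K ≤ N' := hKle.trans hN'.le
      have hmap : M₀ < Subgroup.map π N' := by
        constructor
        · rw [← map_comap_eq_self_of_surjective hπ M₀]
          exact Subgroup.map_mono hN'.le
        · intro hle
          obtain ⟨y, hyN, hyM⟩ := SetLike.exists_of_lt hN'
          exact hyM (Subgroup.mem_comap.mpr (hle (Subgroup.mem_map_of_mem π hyN)))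
      have := hco.2 _ hmap
      have h2 : Subgroup.comap π (Subgroup.map π N') = N' := by
        rw [Subgroup.comap_map_eq, QuotientGroup.ker_mk', sup_of_le_left hKN']
      rw [← h2, this, Subgroup.comap_top]
  have : x ∈ Subgroup.comap π M₀ := frattini_le_coatom hco' hx
  exact hM₀mem (Subgroup.mem_comap.mp this)

end Aux2

section Main

lemma central_aux {G : Type*} [Group G] (u v h k : G)
    (hu : ∀ w, u * w = w * u) (hv : ∀ w, v * w = w * v) :
    (u * h) * (v * k) * (u * h)⁻¹ * (v * k)⁻¹ = h * k * h⁻¹ * k⁻¹ := by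
  have c1 : ∀ x : G, u * x * u⁻¹ = x := fun x => by
    rw [hu x, mul_assoc, mul_inv_cancel, mul_one]
  have c2 : ∀ x : G, v * x * v⁻¹ = x := fun x => by
    rw [hv x, mul_assoc, mul_inv_cancel, mul_one]
  calc (u*h)*(v*k)*(u*h)⁻¹*(v*k)⁻¹
      = (u * (h*(v*k)*h⁻¹) * u⁻¹) * (v*k)⁻¹ := by group
    _ = (h*(v*k)*h⁻¹) * (v*k)⁻¹ := by rw [c1]
    _ = (v*(h*k)*h⁻¹) * (v*k)⁻¹ := by rw [← mul_assoc h v k, ← hv h]; group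
    _ = v * (h*k*h⁻¹*k⁻¹) * v⁻¹ := by group
    _ = h*k*h⁻¹*k⁻¹ := c2 _

theorem stmt_9 (p : ℕ) (hp : p.Prime) (G : Type*) [Group G] [Finite G]
    (hG : IsPGroup p G) (H : Subgroup G) [H.Normal]
    (g : G) (hcen : ∀ x ∈ H, g * x = x * g)
    (hgen : Subgroup.zpowers g ⊔ H = ⊤) :
    frattini G = Subgroup.zpowers (g ^ p) ⊔ Subgroup.map H.subtype (frattini H) := by
  haveI : Fact p.Prime := ⟨hp⟩
  have hH : IsPGroup p H := hG.to_subgroup H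
  have hdec : ∀ x : G, ∃ (a : ℤ) (h : G), h ∈ H ∧ x = g ^ a * h := by
    intro x
    have hx : x ∈ Subgroup.zpowers g ⊔ H := hgen ▸ Subgroup.mem_top x
    rw [← SetLike.mem_coe, mul_normal] at hx
    obtain ⟨y, hy, h, hh, hyh⟩ := hx
    obtain ⟨a, ha⟩ := hy
    have ha : g ^ a = y := ha
    exact ⟨a, h, hh, by rw [← hyh, ha]⟩
  have hgc : ∀ x : G, g * x = x * g := by
    intro x
    obtain ⟨a, h, hh, rfl⟩ := hdec x
    have h1 : g * g ^ a = g ^ a * g := ((Commute.refl g).zpow_right a).eq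
    rw [← mul_assoc, h1, mul_assoc, hcen h hh, ← mul_assoc]
  have hcentral : ∀ (a : ℤ) (w : G), g ^ a * w = w * g ^ a := by
    intro a w
    exact ((show Commute g w from hgc w).zpow_left a).eq
  set R := Subgroup.zpowers (g ^ p) ⊔ Subgroup.map H.subtype (frattini H) with hR
  haveI hmapn : (Subgroup.map H.subtype (frattini H)).Normal := by
    constructor
    intro n hn c
    obtain ⟨m, hm, rfl⟩ := hn
    refine ⟨(MulAut.conjNormal c) m, ?_, ?_⟩
    · have hchar : (frattini H).Characteristic := frattini_characteristic
      exact (Subgroup.characteristic_iff_map_le.mp hchar (MulAut.conjNormal c))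
        ⟨m, hm, rfl⟩
    · simp [MulAut.conjNormal_apply]
  haveI hzn : (Subgroup.zpowers (g ^ p)).Normal := by
    constructor
    intro n hn c
    obtain ⟨k, hk⟩ := hn
    have hk : (g ^ p) ^ k = n := hk
    have hcom : Commute c n := by
      rw [← hk]
      exact (((show Commute g c from hgc c).symm).pow_right p).zpow_right k
    have : c * n * c⁻¹ = n := by rw [hcom.eq, mul_assoc, mul_inv_cancel, mul_one]
    rw [this, ← hk]
    exact zpow_mem (Subgroup.mem_zpowers _) k
  haveI hRn : R.Normal := Subgroup.sup_normal _ _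
  apply le_antisymm
  · -- frattini G ≤ R
    apply frattini_le_of_pow_comm hp
    · intro x
      obtain ⟨a, h, hh, rfl⟩ := hdec x
      have hcom : Commute (g ^ a) h := (show Commute g h from hcen h hh).zpow_left a
      rw [hcom.mul_pow]
      have h1 : (g ^ a) ^ p = (g ^ p) ^ a := by
        rw [← zpow_natCast (g ^ a) p, ← zpow_mul, mul_comm a (p : ℤ), zpow_mul, zpow_natCast]
      rw [h1]
      apply mul_mem
      · exact Subgroup.mem_sup_left (zpow_mem (Subgroup.mem_zpowers _) a)
      · refine Subgroup.mem_sup_right ⟨(⟨h, hh⟩ : H) ^ p, pow_mem_frattini hp hH _, by simp⟩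
    · intro x y
      obtain ⟨a, h, hh, rfl⟩ := hdec x
      obtain ⟨b, k, hk, rfl⟩ := hdec y
      rw [central_aux (g ^ a) (g ^ b) h k (hcentral a) (hcentral b)]
      refine Subgroup.mem_sup_right
        ⟨(⟨h, hh⟩ : H) * ⟨k, hk⟩ * (⟨h, hh⟩ : H)⁻¹ * (⟨k, hk⟩ : H)⁻¹,
          commutator_mem_frattini hp hH _ _, by simp⟩
  · -- R ≤ frattini G
    apply sup_le
    · exact Subgroup.zpowers_le.mpr (pow_mem_frattini hp hG g)
    · rw [Subgroup.map_le_iff_le_comap]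
      haveI : (frattini G).Normal := Subgroup.normal_of_characteristic _
      haveI : (Subgroup.comap H.subtype (frattini G)).Normal := Subgroup.Normal.comap ‹_› _
      apply frattini_le_of_pow_comm hp
      · intro x
        rw [Subgroup.mem_comap]
        show H.subtype (x ^ p) ∈ frattini G
        rw [map_pow]
        exact pow_mem_frattini hp hG _
      · intro x y
        rw [Subgroup.mem_comap]
        show H.subtype (x * y * x⁻¹ * y⁻¹) ∈ frattini G
        simp only [map_mul, map_inv]
        exact commutator_mem_frattini hp hG _ _

end Main
end

section
/- Let G be a finite group, H a normal subgroup of G, and g ∈ G centralizing H such that G is generated by g together with H; let d := [G : H] and h := g^d. Then h lies in the center Z(H) of H, the order of g equals d·|h|, and G is isomorphic to the quotient of the direct product Ĝ := C × H, where C is cyclic of order d·|h| with generator ĝ, by the cyclic central subgroup generated by (ĝ^d, h⁻¹). -/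
theorem stmt_11 (G : Type*) [Group G] [Finite G] (H : Subgroup G) [H.Normal]
    (g : G) (hcen : ∀ x ∈ H, g * x = x * g)
    (hgen : Subgroup.zpowers g ⊔ H = ⊤)
    (d : ℕ) (hd : d = H.index) (h : G) (hh : h = g ^ d) :
    ∃ hmem : h ∈ H, (∀ x ∈ H, x * h = h * x) ∧
      orderOf g = d * orderOf h ∧
      ∃ φ : (Multiplicative (ZMod (d * orderOf h)) × H) →* G,
        Function.Surjective φ ∧
        φ.ker = Subgroup.zpowers
          ((Multiplicative.ofAdd (1 : ZMod (d * orderOf h))) ^ d, (⟨h, hmem⟩ : H)⁻¹) := by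
  have hsurj : Function.Surjective (QuotientGroup.mk' H) := QuotientGroup.mk'_surjective H
  have htop : Subgroup.zpowers ((QuotientGroup.mk' H) g) = ⊤ := by
    have := congrArg (Subgroup.map (QuotientGroup.mk' H)) hgen
    rwa [Subgroup.map_sup, MonoidHom.map_zpowers, Subgroup.map_top_of_surjective _ hsurj,
      QuotientGroup.map_mk'_self, sup_bot_eq] at this
  -- order of the image of g is d
  have hod : orderOf ((QuotientGroup.mk' H) g) = d := by
    rw [← Nat.card_zpowers, htop, hd, Subgroup.index_eq_card, Subgroup.card_top]
  have hmem : h ∈ H := by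
    rw [hh, ← QuotientGroup.eq_one_iff]
    show (QuotientGroup.mk' H) (g ^ d) = 1
    rw [map_pow, ← hod]
    exact pow_orderOf_eq_one _
  have hdvd : d ∣ orderOf g := hod ▸ orderOf_map_dvd (QuotientGroup.mk' H) g
  have horder : orderOf g = d * orderOf h := by
    rw [hh, orderOf_pow, Nat.gcd_eq_right hdvd, Nat.mul_div_cancel' hdvd]
  have hcomm : ∀ x ∈ H, x * h = h * x := fun x hx => by
    rw [hh]; exact ((Commute.pow_right ((hcen x hx).symm) d))
  refine ⟨hmem, hcomm, horder, ?_⟩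
  haveI : NeZero (d * orderOf h) := ⟨horder ▸ (orderOf_pos g).ne'⟩
  have hn1 : g ^ (d * orderOf h) = 1 := horder ▸ pow_orderOf_eq_one g
  have hf : (zmultiplesHom (Additive G) (Additive.ofMul g)) ((d * orderOf h : ℕ) : ℤ) = 0 := by
    simp only [zmultiplesHom_apply, ← ofMul_zpow, zpow_natCast, hn1]
    rfl
  set ψ : Multiplicative (ZMod (d * orderOf h)) →* G :=
    AddMonoidHom.toMultiplicativeLeft
      (ZMod.lift (d * orderOf h) ⟨zmultiplesHom (Additive G) (Additive.ofMul g), hf⟩) with hψdef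
  have hψ : ∀ m : ℕ, ψ (Multiplicative.ofAdd ((m : ZMod (d * orderOf h)))) = g ^ m := by
    intro m
    have hc : ((m : ℕ) : ZMod (d * orderOf h)) = ((m : ℤ) : ZMod (d * orderOf h)) := by
      push_cast; rfl
    rw [hψdef]
    simp only [AddMonoidHom.coe_toMultiplicativeLeft, Function.comp_apply, toAdd_ofAdd, hc,
      ZMod.lift_coe, zmultiplesHom_apply, toMul_zsmul, toMul_ofMul, zpow_natCast]
  have hrep : ∀ a : Multiplicative (ZMod (d * orderOf h)),
      ψ a = g ^ (Multiplicative.toAdd a).val := by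
    intro a
    conv_lhs => rw [show a = Multiplicative.ofAdd
        (((Multiplicative.toAdd a).val : ZMod (d * orderOf h))) from
      by rw [ZMod.natCast_rightInverse _]; rfl]
    exact hψ _
  have hcom : ∀ a x, Commute (ψ a) (H.subtype x) := by
    intro a x
    rw [hrep a]
    exact (Commute.pow_left ((hcen x x.2)) _)
  refine ⟨ψ.noncommCoprod H.subtype hcom, ?_, ?_⟩
  · rw [← MonoidHom.range_eq_top, eq_top_iff, ← hgen]
    refine sup_le (Subgroup.zpowers_le.2 ⟨(Multiplicative.ofAdd 1, 1), ?_⟩) ?_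
    · rw [MonoidHom.noncommCoprod_apply]
      simp only [map_one, mul_one]
      rw [show (1 : ZMod (d * orderOf h)) = ((1:ℕ) : ZMod (d * orderOf h)) by rw [Nat.cast_one],
        hψ 1, pow_one]
    · intro x hx
      exact ⟨(1, ⟨x, hx⟩), by simp [MonoidHom.noncommCoprod_apply]⟩
  · apply le_antisymm
    · rintro ⟨a, x⟩ hk
      rw [MonoidHom.mem_ker, MonoidHom.noncommCoprod_apply, hrep a] at hk
      set m := (Multiplicative.toAdd a).val with hm
      have hxv : (x : G) = (g ^ m)⁻¹ := eq_inv_of_mul_eq_one_right hk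
      have hgm : g ^ m ∈ H := by rw [← inv_inv (g ^ m), ← hxv]; exact inv_mem x.2
      have hdm : d ∣ m := by
        rw [← hod]
        apply orderOf_dvd_of_pow_eq_one
        rw [← map_pow]
        exact (QuotientGroup.eq_one_iff _).2 hgm
      obtain ⟨k, hk2⟩ := hdm
      refine ⟨(k : ℤ), ?_⟩
      show ((Multiplicative.ofAdd (1 : ZMod (d * orderOf h))) ^ d,
        (⟨h, hmem⟩ : H)⁻¹) ^ (k : ℤ) = (a, x)
      rw [zpow_natCast]
      refine Prod.ext ?_ ?_
      · show ((Multiplicative.ofAdd (1 : ZMod (d * orderOf h))) ^ d) ^ k = a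
        rw [← pow_mul, ← ofAdd_nsmul, ← hk2]
        have : (m • (1 : ZMod (d * orderOf h))) = ((m : ZMod (d * orderOf h))) := by
          rw [nsmul_eq_mul, mul_one]
        rw [this, hm, ZMod.natCast_rightInverse _]
        rfl
      · show ((⟨h, hmem⟩ : H)⁻¹) ^ k = x
        refine Subtype.ext ?_
        push_cast
        rw [inv_pow, hxv, hk2, pow_mul, hh]
    · rw [Subgroup.zpowers_le, MonoidHom.mem_ker, MonoidHom.noncommCoprod_apply]
      simp only [map_pow]
      rw [show (1 : ZMod (d * orderOf h)) = ((1:ℕ) : ZMod (d * orderOf h)) by rw [Nat.cast_one],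
        hψ 1, pow_one]
      simp [hh]
end

section
/- Let H be a finite group, h an element of the center Z(H), and d ≥ 1. Let Ĝ := C × H, where C is cyclic of order d·|h| with generator ĝ, and let K := ⟨(ĝ^d, h⁻¹)⟩ ≤ Ĝ. Then K is a central cyclic subgroup of Ĝ of order |h|; the composite map H → Ĝ → Ĝ/K is injective with normal image; the image of ĝ in Ĝ/K centralizes the image of H, generates Ĝ/K together with it, satisfies (image of ĝ)^d = image of h, and the quotient of Ĝ/K by the image of H is cyclic of order d. Thus Ĝ/K is a trivial extension of H of degree d. -/
theorem stmt_12 (H : Type*) [Group H] [Finite H] (h : H) (hh : h ∈ Subgroup.center H)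
    (d : ℕ) (hd : 1 ≤ d)
    (K : Subgroup (Multiplicative (ZMod (d * orderOf h)) × H))
    (hK : K = Subgroup.zpowers
      ((Multiplicative.ofAdd (1 : ZMod (d * orderOf h))) ^ d, h⁻¹))
    [K.Normal] :
    K ≤ Subgroup.center (Multiplicative (ZMod (d * orderOf h)) × H) ∧
    IsCyclic K ∧ Nat.card K = orderOf h ∧
    Function.Injective
      ((QuotientGroup.mk' K).comp (MonoidHom.inr (Multiplicative (ZMod (d * orderOf h))) H)) ∧
    (((QuotientGroup.mk' K).comp
      (MonoidHom.inr (Multiplicative (ZMod (d * orderOf h))) H)).range).Normal ∧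
    (∀ x ∈ ((QuotientGroup.mk' K).comp
        (MonoidHom.inr (Multiplicative (ZMod (d * orderOf h))) H)).range,
      QuotientGroup.mk' K (Multiplicative.ofAdd (1 : ZMod (d * orderOf h)), 1) * x =
        x * QuotientGroup.mk' K (Multiplicative.ofAdd (1 : ZMod (d * orderOf h)), 1)) ∧
    Subgroup.zpowers (QuotientGroup.mk' K (Multiplicative.ofAdd (1 : ZMod (d * orderOf h)), 1)) ⊔
      ((QuotientGroup.mk' K).comp
        (MonoidHom.inr (Multiplicative (ZMod (d * orderOf h))) H)).range = ⊤ ∧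
    (QuotientGroup.mk' K (Multiplicative.ofAdd (1 : ZMod (d * orderOf h)), 1)) ^ d =
      ((QuotientGroup.mk' K).comp
        (MonoidHom.inr (Multiplicative (ZMod (d * orderOf h))) H)) h ∧
    ∃ ψ : ((Multiplicative (ZMod (d * orderOf h)) × H) ⧸ K) →* Multiplicative (ZMod d),
      Function.Surjective ψ ∧
      ψ.ker = ((QuotientGroup.mk' K).comp
        (MonoidHom.inr (Multiplicative (ZMod (d * orderOf h))) H)).range := by
  subst hK
  have hm1 : 0 < orderOf h := orderOf_pos h
  haveI : NeZero (d * orderOf h) := ⟨by positivity⟩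
  haveI : NeZero d := ⟨by omega⟩
  set m := orderOf h with hm
  set G := Multiplicative (ZMod (d * m)) with hG
  set g : G := Multiplicative.ofAdd (1 : ZMod (d * m)) with hg
  set z : G × H := (g ^ d, h⁻¹) with hz
  have hog : orderOf g = d * m := by
    rw [hg, orderOf_ofAdd_eq_addOrderOf, ZMod.addOrderOf_one]
  have hogd : orderOf (g ^ d) = m := by
    rw [orderOf_pow, hog, Nat.gcd_eq_right (dvd_mul_right d m),
      Nat.mul_div_cancel_left _ (by omega)]
  have hoz : orderOf z = m := by
    rw [hz, Prod.orderOf, hogd, orderOf_inv, ← hm, Nat.lcm_self]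
  have hpow : ∀ k : ℕ, g ^ k = Multiplicative.ofAdd ((k : ZMod (d * m))) := by
    intro k
    rw [hg, ← ofAdd_nsmul, Nat.smul_one_eq_cast]
  have hcent : ∀ (k : ℤ) (b : H), b * h ^ k = h ^ k * b := fun k b =>
    Subgroup.mem_center_iff.mp (Subgroup.zpow_mem (Subgroup.center H) hh k) b
  -- centrality of K
  have hzc : z ∈ Subgroup.center (G × H) := by
    rw [Subgroup.mem_center_iff]
    rintro ⟨c, b⟩
    ext
    · exact mul_comm c (g ^ d)
    · exact Subgroup.mem_center_iff.mp (Subgroup.inv_mem _ hh) b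
  have c1 : Subgroup.zpowers z ≤ Subgroup.center (G × H) := Subgroup.zpowers_le.mpr hzc
  have c2 : IsCyclic (Subgroup.zpowers z) := by
    refine ⟨⟨⟨z, Subgroup.mem_zpowers z⟩, ?_⟩⟩
    rintro ⟨x, hx⟩
    obtain ⟨k, rfl⟩ := Subgroup.mem_zpowers_iff.mp hx
    exact ⟨k, rfl⟩
  have c3 : Nat.card (Subgroup.zpowers z) = m := by
    rw [Nat.card_zpowers, hoz]
  set K := Subgroup.zpowers z with hK
  have c4 : Function.Injective ((QuotientGroup.mk' K).comp (MonoidHom.inr G H)) := by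
    rw [injective_iff_map_eq_one]
    intro a ha
    rw [MonoidHom.comp_apply, QuotientGroup.mk'_apply, QuotientGroup.eq_one_iff, hK] at ha
    obtain ⟨k, hk⟩ := Subgroup.mem_zpowers_iff.mp ha
    have hk1 : (g ^ d) ^ k = 1 := congrArg Prod.fst hk
    have hk2 : (h⁻¹) ^ k = a := congrArg Prod.snd hk
    have hdk : (m : ℤ) ∣ k := by
      rw [← hogd]
      exact orderOf_dvd_iff_zpow_eq_one.mpr hk1
    have he : (h⁻¹) ^ k = 1 := by
      apply orderOf_dvd_iff_zpow_eq_one.mp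
      rwa [orderOf_inv, ← hm]
    rw [he] at hk2
    exact hk2.symm
  have hNinr : (MonoidHom.inr G H).range.Normal := by
    constructor
    rintro x ⟨a, rfl⟩ gb
    exact ⟨gb.2 * a * gb.2⁻¹, by ext <;> simp⟩
  have c5 : (((QuotientGroup.mk' K).comp (MonoidHom.inr G H)).range).Normal := by
    rw [MonoidHom.range_comp]
    exact hNinr.map _ (QuotientGroup.mk'_surjective K)
  have c6 : ∀ x ∈ ((QuotientGroup.mk' K).comp (MonoidHom.inr G H)).range,
      QuotientGroup.mk' K (g, 1) * x = x * QuotientGroup.mk' K (g, 1) := by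
    rintro x ⟨a, rfl⟩
    rw [MonoidHom.comp_apply, ← map_mul, ← map_mul]
    congr 1
    ext <;> simp
  have c7 : Subgroup.zpowers (QuotientGroup.mk' K (g, 1)) ⊔
      ((QuotientGroup.mk' K).comp (MonoidHom.inr G H)).range = ⊤ := by
    rw [eq_top_iff]
    rintro x -
    induction x using QuotientGroup.induction_on with
    | H x =>
      obtain ⟨c, a⟩ := x
      have hc : (c, a) = (g, 1) ^ (Multiplicative.toAdd c).val * ((1 : G), a) := by
        ext
        · show c = g ^ (Multiplicative.toAdd c).val * 1
          rw [mul_one, hpow, ZMod.natCast_val, ZMod.cast_id]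
          rfl
        · show a = 1 ^ (Multiplicative.toAdd c).val * a
          rw [one_pow, one_mul]
      show QuotientGroup.mk' K (c, a) ∈ _
      rw [hc, map_mul, map_pow]
      exact Subgroup.mul_mem _
        (Subgroup.mem_sup_left (Subgroup.pow_mem _ (Subgroup.mem_zpowers _) _))
        (Subgroup.mem_sup_right ⟨a, rfl⟩)
  have c8 : (QuotientGroup.mk' K (g, 1)) ^ d
      = ((QuotientGroup.mk' K).comp (MonoidHom.inr G H)) h := by
    rw [← map_pow, MonoidHom.comp_apply]
    rw [QuotientGroup.mk'_eq_mk']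
    refine ⟨z⁻¹, Subgroup.inv_mem _ (Subgroup.mem_zpowers _), ?_⟩
    simp [hz, Prod.ext_iff, Prod.pow_fst, Prod.pow_snd]
    exact mul_inv_cancel (g ^ d)
  -- construct ψ
  set φ : G × H →* Multiplicative (ZMod d) :=
    (AddMonoidHom.toMultiplicative
      ((ZMod.castHom (dvd_mul_right d m) (ZMod d)).toAddMonoidHom)).comp
      (MonoidHom.fst G H) with hφ
  have hφ_apply : ∀ p : G × H,
      φ p = Multiplicative.ofAdd
        ((ZMod.castHom (dvd_mul_right d m) (ZMod d)) (Multiplicative.toAdd p.1)) := by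
    intro p; rfl
  have hφz : z ∈ φ.ker := by
    rw [MonoidHom.mem_ker, hφ_apply, hz]
    show Multiplicative.ofAdd ((ZMod.castHom (dvd_mul_right d m) (ZMod d))
      (Multiplicative.toAdd (g ^ d))) = 1
    rw [hpow d]
    simp
  have hle : K ≤ φ.ker := Subgroup.zpowers_le.mpr hφz
  set ψ : ((G × H) ⧸ K) →* Multiplicative (ZMod d) := QuotientGroup.lift K φ hle with hψ
  have hψ_mk : ∀ p : G × H, ψ (QuotientGroup.mk p) = φ p := fun p => rfl
  have hsurj : Function.Surjective ψ := by
    intro y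
    refine ⟨QuotientGroup.mk
      ((Multiplicative.ofAdd (((Multiplicative.toAdd y).val : ZMod (d * m)))), 1), ?_⟩
    rw [hψ_mk, hφ_apply]
    show Multiplicative.ofAdd ((ZMod.castHom (dvd_mul_right d m) (ZMod d))
      (Multiplicative.toAdd (Multiplicative.ofAdd (((Multiplicative.toAdd y).val : ZMod (d * m)))))) = y
    rw [toAdd_ofAdd, map_natCast, ZMod.natCast_val, ZMod.cast_id, ofAdd_toAdd]
  have hker : ψ.ker = ((QuotientGroup.mk' K).comp (MonoidHom.inr G H)).range := by
    apply le_antisymm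
    · intro x hx
      induction x using QuotientGroup.induction_on with
      | H p =>
        obtain ⟨c, a⟩ := p
        rw [MonoidHom.mem_ker, hψ_mk, hφ_apply] at hx
        have hx0 : ((Multiplicative.toAdd c).val : ZMod d) = 0 := by
          have : (ZMod.castHom (dvd_mul_right d m) (ZMod d)) (Multiplicative.toAdd c) = 0 := by
            simpa using hx
          rwa [show (Multiplicative.toAdd c)
              = (((Multiplicative.toAdd c).val : ℕ) : ZMod (d * m)) by
              rw [ZMod.natCast_val, ZMod.cast_id], map_natCast] at this
        obtain ⟨k, hkv⟩ := (ZMod.natCast_eq_zero_iff _ _).mp hx0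
        refine ⟨h ^ k * a, ?_⟩
        rw [MonoidHom.comp_apply]
        show QuotientGroup.mk' K ((MonoidHom.inr G H) (h ^ k * a)) = QuotientGroup.mk' K (c, a)
        rw [QuotientGroup.mk'_eq_mk']
        refine ⟨z ^ k, Subgroup.pow_mem _ (Subgroup.mem_zpowers _) k, ?_⟩
        have hz1 : (z ^ k).1 = (g ^ d) ^ k := by rw [hz, Prod.pow_fst]
        have hz2 : (z ^ k).2 = (h ^ k)⁻¹ := by rw [hz, Prod.pow_snd, inv_pow]
        ext
        · show 1 * (z ^ k).1 = c
          rw [one_mul, hz1, ← pow_mul, hpow, ← hkv, ZMod.natCast_val, ZMod.cast_id,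
            ofAdd_toAdd]
        · show h ^ k * a * (z ^ k).2 = a
          rw [hz2, show h ^ k * a = a * h ^ k from
            (Subgroup.mem_center_iff.mp (Subgroup.pow_mem _ hh k) a).symm,
            mul_inv_cancel_right]
    · rintro x ⟨a, rfl⟩
      rw [MonoidHom.mem_ker, MonoidHom.comp_apply, QuotientGroup.mk'_apply, hψ_mk, hφ_apply]
      show Multiplicative.ofAdd ((ZMod.castHom (dvd_mul_right d m) (ZMod d))
        (Multiplicative.toAdd ((1 : G)))) = 1
      simp
  exact ⟨c1, c2, c3, c4, c5, c6, c7, c8, ψ, hsurj, hker⟩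
end

section
/- For every l ≥ 2, the dihedral group of order 2^(l+2) and the generalized quaternion group of order 2^(l+2) are not of GK type: in each case the set of elements of non-maximal order (elements of order strictly less than the exponent 2^(l+1)) is not the underlying set of any maximal subgroup. -/
theorem stmt_13 (l : ℕ) (hl : 2 ≤ l) :
    Monoid.exponent (DihedralGroup (2 ^ (l + 1))) = 2 ^ (l + 1) ∧
    ¬ IsGKType (DihedralGroup (2 ^ (l + 1))) ∧
    Monoid.exponent (QuaternionGroup (2 ^ l)) = 2 ^ (l + 1) ∧
    ¬ IsGKType (QuaternionGroup (2 ^ l)) := by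
  have h2 : (2 : ℕ) ∣ 2 ^ (l + 1) := dvd_pow_self 2 (Nat.succ_ne_zero l)
  have hD : Monoid.exponent (DihedralGroup (2 ^ (l + 1))) = 2 ^ (l + 1) := by
    rw [DihedralGroup.exponent]
    exact (lcm_eq_left_iff _ _ (normalize_eq _)).mpr h2
  have h2l : (2 : ℕ) ∣ 2 ^ l := dvd_pow_self 2 (by omega)
  have hQ : Monoid.exponent (QuaternionGroup (2 ^ l)) = 2 ^ (l + 1) := by
    rw [QuaternionGroup.exponent, (lcm_eq_left_iff _ _ (normalize_eq _)).mpr h2l, pow_succ, mul_comm]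
  have hlt : (4 : ℕ) < 2 ^ (l + 1) := by
    calc (4 : ℕ) = 2 ^ 2 := rfl
    _ < 2 ^ (l + 1) := Nat.pow_lt_pow_right (by norm_num) (by omega)
  refine ⟨hD, ?_, hQ, ?_⟩
  · rintro ⟨K, -, hK⟩
    have hmem : ∀ i : ZMod (2 ^ (l + 1)), DihedralGroup.sr i ∈ K := by
      intro i
      have : DihedralGroup.sr i ∈ (K : Set (DihedralGroup (2 ^ (l + 1)))) := by
        rw [hK]
        simp only [Set.mem_setOf_eq, DihedralGroup.orderOf_sr, hD]
        omega
      exact this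
    have hr : DihedralGroup.r (1 : ZMod (2 ^ (l + 1))) ∈ K := by
      have := mul_mem (hmem 0) (hmem 1)
      rwa [DihedralGroup.sr_mul_sr, sub_zero] at this
    have : DihedralGroup.r (1 : ZMod (2 ^ (l + 1))) ∈ (K : Set (DihedralGroup (2 ^ (l + 1)))) := hr
    rw [hK] at this
    simp only [Set.mem_setOf_eq, DihedralGroup.orderOf_r_one, hD] at this
    exact lt_irrefl _ this
  · rintro ⟨K, -, hK⟩
    haveI : NeZero (2 ^ l) := ⟨(pow_pos (by norm_num : (0:ℕ) < 2) l).ne'⟩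
    have hmem : ∀ i : ZMod (2 * 2 ^ l), QuaternionGroup.xa i ∈ K := by
      intro i
      have : QuaternionGroup.xa i ∈ (K : Set (QuaternionGroup (2 ^ l))) := by
        rw [hK]
        simp only [Set.mem_setOf_eq, QuaternionGroup.orderOf_xa, hQ]
        exact hlt
      exact this
    have ha : QuaternionGroup.a ((2 ^ l : ℕ) + 1 : ZMod (2 * 2 ^ l)) ∈ K := by
      have := mul_mem (hmem 0) (hmem 1)
      rwa [QuaternionGroup.xa_mul_xa, sub_zero] at this
    have hmemset : QuaternionGroup.a ((2 ^ l : ℕ) + 1 : ZMod (2 * 2 ^ l)) ∈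
        (K : Set (QuaternionGroup (2 ^ l))) := ha
    rw [hK] at hmemset
    simp only [Set.mem_setOf_eq, QuaternionGroup.orderOf_a, hQ] at hmemset
    have hval : (((2 ^ l : ℕ) + 1 : ZMod (2 * 2 ^ l))).val = 2 ^ l + 1 := by
      have : ((2 ^ l : ℕ) + 1 : ZMod (2 * 2 ^ l)) = ((2 ^ l + 1 : ℕ) : ZMod (2 * 2 ^ l)) := by
        push_cast; ring
      rw [this, ZMod.val_natCast, Nat.mod_eq_of_lt]
      have : 1 < 2 ^ l := Nat.one_lt_two_pow_iff.mpr (by omega)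
      omega
    have hcop : Nat.gcd (2 * 2 ^ l) (2 ^ l + 1) = 1 := by
      have hodd : ¬ (2 ∣ 2 ^ l + 1) := by
        intro h
        rcases h2l with ⟨c, hc⟩
        omega
      have : Nat.Coprime (2 ^ (l + 1)) (2 ^ l + 1) :=
        Nat.Coprime.pow_left _ (Nat.coprime_two_left.mpr (Nat.odd_iff.mpr (by omega)))
      rw [show 2 * 2 ^ l = 2 ^ (l + 1) by ring]
      exact this
    rw [hval, hcop, Nat.div_one] at hmemset
    have : 2 * 2 ^ l = 2 ^ (l + 1) := by ring
    omega
end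

section
/- Let p be a prime and H a finite p-group with exp(Z(H)) = exp(H) = p^e, let h ∈ Z(H) with orderOf h = p^e, and let l ≥ 1. Let Ĝ := C × H, where C is cyclic of order p^(e+l) with generator ĝ, and let G := Ĝ/⟨(ĝ^(p^l), h⁻¹)⟩. Then exp(G) = p^(e+l); for each i ∈ {1,…,l}, the set {y ∈ G : orderOf y divides p^(e+l-i)} is a subgroup of G of index p^i, equal to the image in G of ⟨ĝ^(p^i)⟩ × H; in particular G is of GK type with i-th iterated GK kernel equal to the image of ⟨ĝ^(p^i)⟩ × H, its l-th iterated GK kernel is the (injective) image of H, and G is a trivial GK extension of H of degree p^l. Consequently, any finite p-group H with exp(Z(H)) = exp(H) has proper trivial GK extensions of every p-power degree. -/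
lemma aux_coatom {G : Type*} [Group G] {q : ℕ} (hq : q.Prime) {S : Subgroup G}
    (hS : S.index = q) : IsCoatom S := by
  constructor
  · intro htop
    rw [htop, Subgroup.index_top] at hS
    exact hq.one_lt.ne hS
  · intro T hT
    have hle : S ≤ T := hT.le
    have hmul := Subgroup.relIndex_mul_index hle
    rw [hS] at hmul
    have hdvd : T.index ∣ q := Dvd.intro_left _ hmul
    rcases (Nat.Prime.eq_one_or_self_of_dvd hq _ hdvd) with h1 | h2
    · exact Subgroup.index_eq_one.mp h1
    · rw [h2] at hmul
      have : S.relIndex T = 1 := Nat.eq_of_mul_eq_mul_right hq.pos (by simpa using hmul)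
      exact absurd (Subgroup.relIndex_eq_one.mp this) hT.not_ge

theorem stmt_14 (p e l : ℕ) (hp : p.Prime) (H : Type*) [Group H] [Finite H]
    (hH : IsPGroup p H)
    (hZexp : Monoid.exponent (Subgroup.center H) = p ^ e)
    (hexp : Monoid.exponent H = p ^ e)
    (h : H) (hhZ : h ∈ Subgroup.center H) (hord : orderOf h = p ^ e)
    (hl : 1 ≤ l)
    (K : Subgroup (Multiplicative (ZMod (p ^ (e + l))) × H))
    (hK : K = Subgroup.zpowers
      ((Multiplicative.ofAdd (1 : ZMod (p ^ (e + l)))) ^ p ^ l, h⁻¹))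
    [K.Normal] :
    ∀ ι : H →* (Multiplicative (ZMod (p ^ (e + l))) × H) ⧸ K,
      ι = (QuotientGroup.mk' K).comp (MonoidHom.inr (Multiplicative (ZMod (p ^ (e + l)))) H) →
    ∀ gbar : (Multiplicative (ZMod (p ^ (e + l))) × H) ⧸ K,
      gbar = QuotientGroup.mk' K (Multiplicative.ofAdd (1 : ZMod (p ^ (e + l))), 1) →
    Monoid.exponent ((Multiplicative (ZMod (p ^ (e + l))) × H) ⧸ K) = p ^ (e + l) ∧
    (∀ i : ℕ, 1 ≤ i → i ≤ l →
      ∃ S : Subgroup ((Multiplicative (ZMod (p ^ (e + l))) × H) ⧸ K),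
        (S : Set ((Multiplicative (ZMod (p ^ (e + l))) × H) ⧸ K)) =
          {y | orderOf y ∣ p ^ (e + l - i)} ∧
        S.index = p ^ i ∧
        S = Subgroup.map (QuotientGroup.mk' K)
          ((Subgroup.zpowers ((Multiplicative.ofAdd (1 : ZMod (p ^ (e + l)))) ^ p ^ i)).prod ⊤)) ∧
    IsGKType ((Multiplicative (ZMod (p ^ (e + l))) × H) ⧸ K) ∧
    Function.Injective ι ∧
    Subgroup.map (QuotientGroup.mk' K)
      ((Subgroup.zpowers ((Multiplicative.ofAdd (1 : ZMod (p ^ (e + l)))) ^ p ^ l)).prod ⊤) =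
      ι.range ∧
    (∀ y ∈ ι.range, gbar * y = y * gbar) ∧
    Subgroup.zpowers gbar ⊔ ι.range = ⊤ := by
  intro ι hι gbar hgbar
  have hNpos : 0 < p ^ (e + l) := pow_pos hp.pos _
  haveI : NeZero (p ^ (e + l)) := ⟨hNpos.ne'⟩
  set g : Multiplicative (ZMod (p ^ (e + l))) := Multiplicative.ofAdd (1 : ZMod (p ^ (e + l)))
    with hg
  set mkq := QuotientGroup.mk' K with hmkq
  have hgord : orderOf g = p ^ (e + l) := by
    rw [hg, orderOf_ofAdd_eq_addOrderOf, ZMod.addOrderOf_one]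
  -- membership in K
  have memK : ∀ z : Multiplicative (ZMod (p ^ (e + l))) × H,
      z ∈ K ↔ ∃ n : ℤ, z = (g ^ ((p : ℤ) ^ l * n), h ^ (-n)) := by
    intro z
    rw [hK, Subgroup.mem_zpowers_iff]
    constructor
    · rintro ⟨n, rfl⟩
      refine ⟨n, ?_⟩
      rw [Prod.pow_def]
      congr 1
      · rw [← zpow_natCast, ← zpow_mul]
        push_cast
        ring_nf
      · rw [inv_zpow, ← zpow_neg]
    · rintro ⟨n, rfl⟩
      refine ⟨n, ?_⟩
      rw [Prod.pow_def]
      congr 1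
      · rw [← zpow_natCast, ← zpow_mul]
        push_cast
        ring_nf
      · rw [inv_zpow, ← zpow_neg]
  -- equality to 1 in the quotient
  have E : ∀ (a : ℤ) (x : H), mkq (g ^ a, x) = 1 ↔
      ∃ n : ℤ, ((p : ℤ) ^ (e + l)) ∣ a - (p : ℤ) ^ l * n ∧ x = h ^ (-n) := by
    intro a x
    rw [QuotientGroup.mk'_apply, QuotientGroup.eq_one_iff, memK]
    constructor
    · rintro ⟨n, hn⟩
      rw [Prod.mk.injEq] at hn
      refine ⟨n, ?_, hn.2⟩
      have : g ^ (a - (p : ℤ) ^ l * n) = 1 := by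
        rw [zpow_sub, hn.1, mul_inv_cancel]
      rw [← orderOf_dvd_iff_zpow_eq_one, hgord] at this
      exact_mod_cast this
    · rintro ⟨n, hd, hx⟩
      refine ⟨n, ?_⟩
      rw [Prod.mk.injEq]
      refine ⟨?_, hx⟩
      have : g ^ (a - (p : ℤ) ^ l * n) = 1 := by
        rw [← orderOf_dvd_iff_zpow_eq_one, hgord]
        exact_mod_cast hd
      rw [zpow_sub, mul_inv_eq_one] at this
      exact this
  -- central order of h facts
  have hcancel : ∀ n : ℤ, ((p : ℤ) ^ (e + l)) ∣ (p : ℤ) ^ l * n ↔ ((p : ℤ) ^ e) ∣ n := by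
    intro n
    rw [pow_add, mul_comm ((p:ℤ)^e)]
    exact mul_dvd_mul_iff_left (pow_ne_zero l (by exact_mod_cast hp.pos.ne'))
  have hhn : ∀ n : ℤ, h ^ (-n) = 1 ↔ ((p : ℤ) ^ e) ∣ n := by
    intro n
    rw [← orderOf_dvd_iff_zpow_eq_one, hord]
    push_cast
    exact ⟨fun hh => (dvd_neg.mp hh), fun hh => dvd_neg.mpr hh⟩
  -- simplified equality to 1 when second coordinate is 1
  have E1 : ∀ a : ℤ, mkq (g ^ a, (1 : H)) = 1 ↔ ((p : ℤ) ^ (e + l)) ∣ a := by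
    intro a
    rw [E]
    constructor
    · rintro ⟨n, hd, hx⟩
      have hn : ((p : ℤ) ^ e) ∣ n := (hhn n).mp hx.symm
      have : ((p : ℤ) ^ (e + l)) ∣ (p : ℤ) ^ l * n := (hcancel n).mpr hn
      have := dvd_add hd this
      simpa using this
    · intro hd
      exact ⟨0, by simpa using hd, by simp⟩
  -- every element of the cyclic factor is a power of g
  have hsurjgN : ∀ c : Multiplicative (ZMod (p ^ (e + l))),
      c = g ^ (ZMod.val (Multiplicative.toAdd c)) := by
    intro c
    apply Multiplicative.toAdd.injective
    rw [toAdd_pow]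
    show Multiplicative.toAdd c = (Multiplicative.toAdd c).val • (1 : ZMod (p ^ (e + l)))
    rw [nsmul_eq_mul, mul_one, ZMod.natCast_zmod_val]
  have hsurjg : ∀ c : Multiplicative (ZMod (p ^ (e + l))), ∃ a : ℤ, c = g ^ a := fun c =>
    ⟨((Multiplicative.toAdd c).val : ℤ), by rw [zpow_natCast]; exact hsurjgN c⟩

  -- powers in the quotient
  have hpow : ∀ (a : ℤ) (x : H) (m : ℕ), mkq (g ^ a, x) ^ m = mkq (g ^ (a * m), x ^ m) := by
    intro a x m
    rw [← map_pow]
    congr 1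
    rw [Prod.pow_def]
    congr 1
    rw [← zpow_natCast (g ^ a), ← zpow_mul]
  have hxpow : ∀ i : ℕ, i ≤ l → ∀ x : H, x ^ (p ^ (e + l - i)) = 1 := by
    intro i hi x
    have hsplit : e + l - i = e + (l - i) := by omega
    rw [hsplit, pow_add, pow_mul]
    have hx1 : x ^ p ^ e = 1 := by rw [← hexp]; exact Monoid.pow_exponent_eq_one x
    rw [hx1, one_pow]
  have hpne : (p : ℤ) ≠ 0 := by exact_mod_cast hp.pos.ne'
  have L1 : ∀ i : ℕ, i ≤ l → ∀ (a : ℤ) (x : H),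
      mkq (g ^ a, x) ^ (p ^ (e + l - i)) = 1 ↔ ((p : ℤ) ^ i) ∣ a := by
    intro i hi a x
    rw [hpow, hxpow i hi x, E1]
    constructor
    · intro hd
      have heq : ((p : ℤ)) ^ (e + l) = (p : ℤ) ^ (e + l - i) * (p : ℤ) ^ i := by
        rw [← pow_add]; congr 1; omega
      rw [heq] at hd
      have hd' : (p : ℤ) ^ (e + l - i) * (p : ℤ) ^ i ∣ (p : ℤ) ^ (e + l - i) * a := by
        refine dvd_trans hd ?_
        refine Dvd.intro 1 ?_
        push_cast
        ring
      exact (mul_dvd_mul_iff_left (pow_ne_zero _ hpne)).mp hd'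
    · rintro ⟨b, rfl⟩
      refine ⟨b, ?_⟩
      have heq : ((p : ℤ)) ^ (e + l) = (p : ℤ) ^ i * (p : ℤ) ^ (e + l - i) := by
        rw [← pow_add]; congr 1; omega
      push_cast
      rw [heq]
      ring
  have L2 : ∀ (i : ℕ) (q : (Multiplicative (ZMod (p ^ (e + l))) × H) ⧸ K),
      q ∈ Subgroup.map mkq ((Subgroup.zpowers (g ^ p ^ i)).prod ⊤) ↔
      ∃ (a : ℤ) (x : H), ((p : ℤ) ^ i) ∣ a ∧ q = mkq (g ^ a, x) := by
    intro i q
    rw [Subgroup.mem_map]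
    constructor
    · rintro ⟨⟨c, x⟩, hz, rfl⟩
      rw [Subgroup.mem_prod] at hz
      obtain ⟨k, hk⟩ := Subgroup.mem_zpowers_iff.mp hz.1
      have hk' : (g ^ p ^ i) ^ k = c := hk
      refine ⟨(p : ℤ) ^ i * k, x, Dvd.intro k rfl, ?_⟩
      congr 1
      rw [Prod.mk.injEq]
      refine ⟨?_, rfl⟩
      rw [← hk', ← zpow_natCast g (p ^ i), ← zpow_mul]
      congr 1
    · rintro ⟨a, x, ⟨b, rfl⟩, rfl⟩
      refine ⟨(g ^ ((p : ℤ) ^ i * b), x), ?_, rfl⟩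
      rw [Subgroup.mem_prod]
      refine ⟨?_, trivial⟩
      rw [Subgroup.mem_zpowers_iff]
      refine ⟨b, ?_⟩
      rw [← zpow_natCast g (p ^ i), ← zpow_mul]
      congr 1
  -- index computation
  have hTindex : ∀ i : ℕ, i ≤ l →
      (Subgroup.map mkq ((Subgroup.zpowers (g ^ p ^ i)).prod ⊤)).index = p ^ i := by
    intro i hi
    have hKle : K ≤ (Subgroup.zpowers (g ^ p ^ i)).prod ⊤ := by
      rw [hK, Subgroup.zpowers_le, Subgroup.mem_prod]
      refine ⟨?_, trivial⟩
      have hgen : g ^ p ^ l = (g ^ p ^ i) ^ p ^ (l - i) := by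
        rw [← pow_mul, ← pow_add, Nat.add_sub_cancel' hi]
      rw [hgen]
      exact Subgroup.pow_mem _ (Subgroup.mem_zpowers _) _
    rw [hmkq, Subgroup.index_map, QuotientGroup.ker_mk',
      (QuotientGroup.mk' K).range_eq_top_of_surjective (QuotientGroup.mk'_surjective K),
      Subgroup.index_top, mul_one, sup_of_le_left hKle, Subgroup.index_prod,
      Subgroup.index_top, mul_one]
    have hcard : Nat.card (Subgroup.zpowers (g ^ p ^ i)) = p ^ (e + l - i) := by
      rw [Nat.card_zpowers, orderOf_pow, hgord,
        Nat.gcd_eq_right (pow_dvd_pow p (by omega)),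
        Nat.pow_div (by omega) hp.pos]
    have hcardM : Nat.card (Multiplicative (ZMod (p ^ (e + l)))) = p ^ (e + l) := by
      simp [Nat.card_eq_fintype_card, ZMod.card]
    have hmul := Subgroup.card_mul_index (Subgroup.zpowers (g ^ p ^ i))
    rw [hcard, hcardM] at hmul
    have hfin : p ^ (e + l - i) * (Subgroup.zpowers (g ^ p ^ i)).index
        = p ^ (e + l - i) * p ^ i := by
      rw [hmul, ← pow_add]
      congr 1
      omega
    exact Nat.eq_of_mul_eq_mul_left (pow_pos hp.pos _) hfin
  -- conjunct 2
  have conj2 : ∀ i : ℕ, 1 ≤ i → i ≤ l →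
      ∃ S : Subgroup ((Multiplicative (ZMod (p ^ (e + l))) × H) ⧸ K),
        (S : Set ((Multiplicative (ZMod (p ^ (e + l))) × H) ⧸ K)) =
          {y | orderOf y ∣ p ^ (e + l - i)} ∧
        S.index = p ^ i ∧
        S = Subgroup.map mkq ((Subgroup.zpowers (g ^ p ^ i)).prod ⊤) := by
    intro i h1i hil
    refine ⟨Subgroup.map mkq ((Subgroup.zpowers (g ^ p ^ i)).prod ⊤), ?_, hTindex i hil, rfl⟩
    ext q
    simp only [Set.mem_setOf_eq, SetLike.mem_coe]
    rw [orderOf_dvd_iff_pow_eq_one, L2]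
    constructor
    · rintro ⟨a, x, hd, rfl⟩
      exact (L1 i hil a x).mpr hd
    · intro hq
      obtain ⟨z, rfl⟩ := QuotientGroup.mk'_surjective K q
      rw [← hmkq] at hq ⊢
      obtain ⟨a, ha⟩ := hsurjg z.1
      have hz : z = (g ^ a, z.2) := by rw [← ha]
      rw [hz] at hq ⊢
      exact ⟨a, z.2, (L1 i hil a z.2).mp hq, rfl⟩
  -- exponent
  have hall : ∀ q : (Multiplicative (ZMod (p ^ (e + l))) × H) ⧸ K, q ^ p ^ (e + l) = 1 := by
    intro q
    obtain ⟨z, rfl⟩ := QuotientGroup.mk'_surjective K q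
    rw [← hmkq]
    obtain ⟨a, ha⟩ := hsurjg z.1
    have hz : z = (g ^ a, z.2) := by rw [← ha]
    rw [hz, hpow]
    have hz2 : z.2 ^ p ^ (e + l) = 1 := by simpa using hxpow 0 (Nat.zero_le l) z.2
    rw [hz2, E1]
    exact Dvd.intro a (by push_cast; ring)
  have Lg : ∀ m : ℕ, gbar ^ m = 1 ↔ p ^ (e + l) ∣ m := by
    intro m
    have hgb : gbar = mkq (g ^ (1 : ℤ), (1 : H)) := by rw [hgbar, zpow_one]
    rw [hgb, hpow, one_mul, one_pow, E1]
    constructor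
    · intro hd; exact_mod_cast hd
    · intro hd; exact_mod_cast hd
  have hordg : orderOf gbar = p ^ (e + l) :=
    Nat.dvd_antisymm (orderOf_dvd_of_pow_eq_one ((Lg _).mpr dvd_rfl))
      ((Lg _).mp (pow_orderOf_eq_one gbar))
  have conj1 : Monoid.exponent ((Multiplicative (ZMod (p ^ (e + l))) × H) ⧸ K) = p ^ (e + l) :=
    Nat.dvd_antisymm (Monoid.exponent_dvd_of_forall_pow_eq_one hall)
      (by have hdd := Monoid.order_dvd_exponent gbar; rwa [hordg] at hdd)
  -- GK type
  have conj3 : IsGKType ((Multiplicative (ZMod (p ^ (e + l))) × H) ⧸ K) := by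
    obtain ⟨S, hS1, hS2, _⟩ := conj2 1 le_rfl hl
    refine ⟨S, aux_coatom hp (by simpa using hS2), ?_⟩
    rw [hS1, conj1]
    ext y
    simp only [Set.mem_setOf_eq]
    have hy : orderOf y ∣ p ^ (e + l) := orderOf_dvd_of_pow_eq_one (hall y)
    obtain ⟨m, hm, hym⟩ := (Nat.dvd_prime_pow hp).mp hy
    rw [hym, Nat.pow_dvd_pow_iff_le_right hp.one_lt, Nat.pow_lt_pow_iff_right hp.one_lt]
    omega
  -- injectivity
  have conj4 : Function.Injective ι := by
    refine (injective_iff_map_eq_one ι).mpr ?_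
    intro x hx
    rw [hι] at hx
    have hx' : mkq (g ^ (0 : ℤ), x) = 1 := by simpa using hx
    obtain ⟨n, hd, hxh⟩ := (E 0 x).mp hx'
    have hn : ((p : ℤ) ^ e) ∣ n := by
      refine (hcancel n).mp (dvd_neg.mp ?_)
      simpa using hd
    rw [hxh]
    exact (hhn n).mpr hn
  -- range
  have conj5 : Subgroup.map mkq ((Subgroup.zpowers (g ^ p ^ l)).prod ⊤) = ι.range := by
    ext q
    rw [L2 l]
    constructor
    · rintro ⟨a, x, ⟨k, rfl⟩, rfl⟩
      refine ⟨x * h ^ k, ?_⟩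
      rw [hι]
      simp only [MonoidHom.comp_apply, MonoidHom.inr_apply]
      rw [hmkq, QuotientGroup.mk'_eq_mk']
      refine ⟨(g ^ ((p : ℤ) ^ l * k), h ^ (-k)), (memK _).mpr ⟨k, rfl⟩, ?_⟩
      rw [Prod.mk_mul_mk, one_mul, Prod.mk.injEq]
      refine ⟨rfl, ?_⟩
      rw [mul_assoc, ← zpow_add]
      simp
    · rintro ⟨x, rfl⟩
      refine ⟨0, x, dvd_zero _, ?_⟩
      rw [hι, hmkq]
      simp
  -- commuting
  have conj6 : ∀ y ∈ ι.range, gbar * y = y * gbar := by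
    rintro y ⟨x, rfl⟩
    rw [hι, hgbar]
    simp only [MonoidHom.comp_apply, MonoidHom.inr_apply]
    rw [← map_mul, ← map_mul, Prod.mk_mul_mk, Prod.mk_mul_mk, one_mul, mul_one, one_mul, mul_one]
  -- generation
  have conj7 : Subgroup.zpowers gbar ⊔ ι.range = ⊤ := by
    rw [eq_top_iff]
    rintro q -
    obtain ⟨z, hzq⟩ := QuotientGroup.mk'_surjective K q
    have hm : z.1 = g ^ (ZMod.val (Multiplicative.toAdd z.1)) := hsurjgN z.1
    have hdecomp : q = gbar ^ (ZMod.val (Multiplicative.toAdd z.1)) * ι z.2 := by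
      rw [← hzq, ← hmkq, hgbar, hι]
      simp only [MonoidHom.comp_apply, MonoidHom.inr_apply]
      rw [← map_pow, ← map_mul]
      congr 1
      rw [Prod.pow_def, Prod.mk_mul_mk, one_pow, mul_one, one_mul, ← hm]
    rw [hdecomp]
    exact Subgroup.mul_mem _
      (Subgroup.mem_sup_left (Subgroup.pow_mem _ (Subgroup.mem_zpowers _) _))
      (Subgroup.mem_sup_right ⟨z.2, rfl⟩)
  exact ⟨conj1, conj2, conj3, conj4, conj5, conj6, conj7⟩
end

section
/- Let p be a prime and R a finite abelian p-group. Then the automorphism group of R acts transitively on the set of elements of maximal order: for any z, z' ∈ R with orderOf z = orderOf z' = exp(R), there exists an automorphism α of R with α(z) = z'. -/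
lemma zmod_baer (n : ℕ) [NeZero n] : Module.Baer (ZMod n) (ZMod n) := by
  have hpir : IsPrincipalIdealRing (ZMod n) :=
    IsPrincipalIdealRing.of_surjective (Int.castRingHom (ZMod n)) ZMod.intCast_surjective
  intro I g
  obtain ⟨a, rfl⟩ : ∃ a, I = Ideal.span {a} := (hpir.principal I).principal
  have hmem : a ∈ Ideal.span {a} := Ideal.mem_span_singleton_self a
  set y : ZMod n := g ⟨a, hmem⟩ with hy
  obtain ⟨A, hA⟩ := ZMod.natCast_zmod_surjective (n := n) a
  set d : ℕ := Nat.gcd A n with hd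
  have hdA : d ∣ A := Nat.gcd_dvd_left A n
  have hdn : d ∣ n := Nat.gcd_dvd_right A n
  have hn0 : n ≠ 0 := NeZero.ne n
  have hd0 : d ≠ 0 := Nat.gcd_ne_zero_right hn0
  have hnd0 : n / d ≠ 0 := by
    have : d ≤ n := Nat.le_of_dvd (Nat.pos_of_ne_zero hn0) hdn
    exact Nat.div_ne_zero_iff.mpr ⟨hd0, this⟩
  -- (n/d) * a = 0 in ZMod n
  have hna : ((n / d : ℕ) : ZMod n) * a = 0 := by
    have : ((n / d : ℕ) : ZMod n) * a = (((n / d) * A : ℕ) : ZMod n) := by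
      rw [Nat.cast_mul, hA]
    rw [this, ZMod.natCast_eq_zero_iff]
    obtain ⟨A', hA'⟩ := hdA
    refine ⟨A', ?_⟩
    rw [hA', ← mul_assoc, Nat.div_mul_cancel hdn]
  -- hence (n/d) * y = 0
  have hny : ((n / d : ℕ) : ZMod n) * y = 0 := by
    have : ((n / d : ℕ) : ZMod n) • (⟨a, hmem⟩ : Ideal.span {a}) = 0 := by
      ext
      simpa [smul_eq_mul] using hna
    rw [← smul_eq_mul, hy, ← map_smul, this, map_zero]
  -- so d ∣ y.val
  have hdY : d ∣ (y.val : ℕ) := by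
    have h1 : (((n / d) * y.val : ℕ) : ZMod n) = 0 := by
      rw [Nat.cast_mul, ZMod.natCast_zmod_val, hny]
    rw [ZMod.natCast_eq_zero_iff] at h1
    have h2 : d * (n / d) ∣ y.val * (n / d) := by
      rw [Nat.mul_div_cancel' hdn, mul_comm]
      exact h1
    exact (Nat.mul_dvd_mul_iff_right (Nat.pos_of_ne_zero hnd0)).mp h2
  obtain ⟨t, ht⟩ := hdY
  -- Bezout: (d : ZMod n) = a * u
  have hbez : (d : ZMod n) = a * ((Nat.gcdA A n : ℤ) : ZMod n) := by
    have := Nat.gcd_eq_gcd_ab A n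
    have : ((d : ℤ) : ZMod n) = ((A * Nat.gcdA A n + n * Nat.gcdB A n : ℤ) : ZMod n) := by
      rw [hd]; exact_mod_cast congrArg (fun x : ℤ => ((x : ZMod n))) this
    simpa [hA] using this
  set u : ZMod n := ((Nat.gcdA A n : ℤ) : ZMod n)
  have hya : y = a * (u * t) := by
    have : y = ((d * t : ℕ) : ZMod n) := by rw [← ht, ZMod.natCast_zmod_val]
    rw [this, Nat.cast_mul, hbez]; ring
  refine ⟨LinearMap.toSpanSingleton (ZMod n) (ZMod n) (u * t), fun x hx => ?_⟩
  obtain ⟨s, rfl⟩ := Ideal.mem_span_singleton'.mp hx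
  have : (⟨s * a, hx⟩ : Ideal.span {a}) = s • ⟨a, hmem⟩ := by
    ext; simp [smul_eq_mul]
  rw [this, map_smul, ← hy, hya, LinearMap.toSpanSingleton_apply]
  simp [smul_eq_mul]; ring

lemma exists_dual (n : ℕ) [NeZero n] {M : Type*} [AddCommGroup M] [Module (ZMod n) M]
    (z : M) (hz : addOrderOf z = n) :
    ∃ h : M →ₗ[ZMod n] ZMod n, h z = 1 := by
  have hinj : Function.Injective (LinearMap.toSpanSingleton (ZMod n) M z) := by
    rw [injective_iff_map_eq_zero]
    intro c hc
    rw [LinearMap.toSpanSingleton_apply] at hc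
    have h1 : (c.val : ZMod n) • z = 0 := by rwa [ZMod.natCast_zmod_val]
    rw [Nat.cast_smul_eq_nsmul] at h1
    have h2 : n ∣ c.val := hz ▸ (addOrderOf_dvd_of_nsmul_eq_zero h1 : addOrderOf z ∣ c.val)
    have h3 : c.val = 0 := Nat.eq_zero_of_dvd_of_lt h2 (ZMod.val_lt c)
    exact (ZMod.val_eq_zero c).mp h3
  obtain ⟨h, hh⟩ := (zmod_baer n).extension_property
    (LinearMap.toSpanSingleton (ZMod n) M z) hinj LinearMap.id
  refine ⟨h, ?_⟩
  have := congrArg (fun f => f 1) hh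
  simpa using this

lemma aux_equiv {p n e : ℕ} (hp : p.Prime) (hn : n = p ^ e) [NeZero n]
    {M : Type*} [AddCommGroup M] [Finite M] [Module (ZMod n) M]
    (z z' : M) (hz : addOrderOf z = n) (hz' : addOrderOf z' = n) :
    ∃ α : M ≃+ M, α z = z' := by
  subst hn
  -- trivial case e = 0
  rcases Nat.eq_zero_or_pos e with rfl | he
  · have hall : ∀ x : M, x = 0 := by
      intro x
      have h1 : (1 : ZMod (p ^ 0)) • x = x := one_smul _ _
      haveI : Subsingleton (ZMod (p ^ 0)) := by rw [pow_zero]; infer_instance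
      have h2 : (1 : ZMod (p ^ 0)) = 0 := Subsingleton.elim _ _
      rw [h2, zero_smul] at h1
      exact h1.symm
    exact ⟨AddEquiv.refl M, by rw [hall z, hall z', AddEquiv.refl_apply]⟩
  -- key step: build equiv from injective linear endo
  have key : ∀ ee : M →ₗ[ZMod (p ^ e)] M, Function.Injective ee → ee z = z' →
      ∃ α : M ≃+ M, α z = z' := by
    intro ee hinj hval
    have hbij : Function.Bijective ee := Finite.injective_iff_bijective.mp hinj
    exact ⟨AddEquiv.ofBijective ee.toAddMonoidHom hbij, hval⟩
  obtain ⟨h, hh⟩ := exists_dual (p ^ e) z hz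
  set a : ZMod (p ^ e) := h z' with ha
  set k : M := z' - a • z with hk
  have hzk : z' = a • z + k := by rw [hk]; abel
  have hk0 : h k = 0 := by
    rw [hk, map_sub, map_smul, hh, smul_eq_mul, mul_one, sub_self]
  by_cases hu : IsUnit a
  · -- case 1 : a is a unit
    refine key (LinearMap.id + (LinearMap.toSpanSingleton (ZMod (p ^ e)) M (z' - z)).comp h) ?_ ?_
    · rw [injective_iff_map_eq_zero]
      intro x hx
      have hee : x + h x • (z' - z) = 0 := hx
      have h1 : h x + h x * (h z' - h z) = 0 := by
        have := congrArg h hee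
        simpa [map_add, map_smul, smul_eq_mul, map_sub] using this
      have h2 : h x * a = 0 := by
        rw [hh, ← ha] at h1
        linear_combination h1
      have h3 : h x = 0 := (hu.mul_left_eq_zero).mp h2
      rw [h3, zero_smul, add_zero] at hee
      exact hee
    · show z + h z • (z' - z) = z'
      rw [hh, one_smul]; abel
  · -- case 2 : p ∣ a
    have hpa : p ∣ a.val := by
      by_contra hpa
      apply hu
      have hcop : Nat.Coprime a.val (p ^ e) := by
        rw [Nat.coprime_pow_right_iff he]
        exact Nat.coprime_comm.mp (hp.coprime_iff_not_dvd.mpr hpa)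
      have := (ZMod.isUnit_iff_coprime a.val (p ^ e)).mpr hcop
      rwa [ZMod.natCast_zmod_val] at this
    obtain ⟨b', hb'⟩ := hpa
    set b : ZMod (p ^ e) := ((b' : ℕ) : ZMod (p ^ e)) with hb
    have hab : a = (p : ZMod (p ^ e)) * b := by
      rw [hb, ← Nat.cast_mul, ← hb', ZMod.natCast_zmod_val]
    -- the p^(e-1) multiple of z' is nonzero
    have hpz' : ((p ^ (e - 1) : ℕ) : ZMod (p ^ e)) • z' ≠ 0 := by
      rw [Nat.cast_smul_eq_nsmul]
      intro h0
      have hdvd : addOrderOf z' ∣ p ^ (e - 1) := addOrderOf_dvd_of_nsmul_eq_zero h0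
      rw [hz'] at hdvd
      have hle : p ^ e ≤ p ^ (e - 1) := Nat.le_of_dvd (pow_pos hp.pos _) hdvd
      have hlt : p ^ (e - 1) < p ^ e := Nat.pow_lt_pow_right hp.one_lt (by omega)
      omega
    have hcastpe : ((p ^ (e - 1) : ℕ) : ZMod (p ^ e)) * a = 0 := by
      rw [hab, ← mul_assoc]
      have h1 : ((p ^ (e - 1) : ℕ) : ZMod (p ^ e)) * (p : ZMod (p ^ e)) = ((p ^ e : ℕ) : ZMod (p ^ e)) := by
        push_cast
        rw [← pow_succ]
        congr 1
        omega
      rw [h1, ZMod.natCast_self, zero_mul]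
    have hsmulk : ((p ^ (e - 1) : ℕ) : ZMod (p ^ e)) • k = ((p ^ (e - 1) : ℕ) : ZMod (p ^ e)) • z' := by
      rw [hk, smul_sub, smul_smul, hcastpe, zero_smul, sub_zero]
    have hkord : addOrderOf k = p ^ e := by
      have h2 : addOrderOf k ∣ p ^ e := by
        apply addOrderOf_dvd_of_nsmul_eq_zero
        have : ((p ^ e : ℕ) : ZMod (p ^ e)) • k = 0 := by rw [ZMod.natCast_self, zero_smul]
        rwa [Nat.cast_smul_eq_nsmul] at this
      obtain ⟨j, hj, hjk⟩ := (Nat.dvd_prime_pow hp).mp h2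
      rw [hjk]
      congr 1
      by_contra hje
      have hj' : j ≤ e - 1 := by omega
      have hkz : (p ^ (e - 1)) • k = 0 := by
        apply addOrderOf_dvd_iff_nsmul_eq_zero.mp
        rw [hjk]
        exact pow_dvd_pow p hj'
      apply hpz'
      rw [← hsmulk, Nat.cast_smul_eq_nsmul, hkz]
    obtain ⟨h₂, hh₂⟩ := exists_dual (p ^ e) k hkord
    set c : ZMod (p ^ e) := h₂ z with hc
    set u : M := (a - 1 + c) • z + (1 - c * c) • k with hu_def
    set v : M := c • k - z with hv_def
    have hhu : h u = a - 1 + c := by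
      rw [hu_def, map_add, map_smul, map_smul, hh, hk0, smul_eq_mul, smul_eq_mul]
      ring
    have hhv : h v = -1 := by
      rw [hv_def, map_sub, map_smul, hh, hk0, smul_eq_mul]
      ring
    have hh2u : h₂ u = (a - 1 + c) * c + (1 - c * c) := by
      rw [hu_def, map_add, map_smul, map_smul, hh₂, ← hc, smul_eq_mul, smul_eq_mul]
      ring
    have hh2v : h₂ v = 0 := by
      rw [hv_def, map_sub, map_smul, hh₂, ← hc, smul_eq_mul]
      ring
    -- the unit
    have hunit : IsUnit (a * c + a + 1) := by
      have hnotdvd : ¬ p ∣ (a * c + a + 1).val := by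
        intro hdvd
        haveI : Fact p.Prime := ⟨hp⟩
        have hpn : p ∣ p ^ e := dvd_pow_self p (by omega : e ≠ 0)
        set φ := ZMod.castHom hpn (ZMod p) with hφ
        have h1 : φ (a * c + a + 1) = 1 := by
          rw [map_add, map_add, map_mul, map_one, hab, map_mul]
          rw [map_natCast]
          simp
        have h2 : (((a * c + a + 1).val : ℕ) : ZMod p) = φ (a * c + a + 1) := by
          conv_rhs => rw [← ZMod.natCast_zmod_val (a * c + a + 1)]
          rw [map_natCast]
        rw [h1] at h2
        rw [(ZMod.natCast_eq_zero_iff _ _).mpr hdvd] at h2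
        exact zero_ne_one h2
      rw [← ZMod.natCast_zmod_val (a * c + a + 1)]
      apply (ZMod.isUnit_iff_coprime _ (p ^ e)).mpr
      rw [Nat.coprime_pow_right_iff he]
      exact Nat.coprime_comm.mp (hp.coprime_iff_not_dvd.mpr hnotdvd)
    refine key (LinearMap.id + (LinearMap.toSpanSingleton (ZMod (p ^ e)) M u).comp h
      + (LinearMap.toSpanSingleton (ZMod (p ^ e)) M v).comp h₂) ?_ ?_
    · rw [injective_iff_map_eq_zero]
      intro x hx
      have hee : x + h x • u + h₂ x • v = 0 := hx
      set s : ZMod (p ^ e) := h x with hs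
      set t : ZMod (p ^ e) := h₂ x with ht
      have e1 : s + s * (a - 1 + c) + t * (-1) = 0 := by
        have := congrArg h hee
        simpa [map_add, map_smul, smul_eq_mul, hhu, hhv, ← hs, ← ht] using this
      have e2 : t + s * ((a - 1 + c) * c + (1 - c * c)) + t * 0 = 0 := by
        have := congrArg h₂ hee
        simpa [map_add, map_smul, smul_eq_mul, hh2u, hh2v, ← hs, ← ht] using this
      have hs0 : s * (a * c + a + 1) = 0 := by linear_combination e1 + e2
      have hs1 : s = 0 := (hunit.mul_left_eq_zero).mp hs0
      have ht1 : t = 0 := by linear_combination -e1 + (a + c) * hs1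
      rw [hs1, ht1, zero_smul, zero_smul, add_zero, add_zero] at hee
      exact hee
    · show z + h z • u + h₂ z • v = z'
      rw [hh, ← hc, one_smul, hzk, hu_def, hv_def]
      rw [smul_sub, smul_smul]
      module

theorem stmt_17 (p : ℕ) (hp : p.Prime) (R : Type*) [CommGroup R] [Finite R]
    (hR : IsPGroup p R) (z z' : R)
    (hz : orderOf z = Monoid.exponent R) (hz' : orderOf z' = Monoid.exponent R) :
    ∃ α : R ≃* R, α z = z' := by
  haveI : Fact p.Prime := ⟨hp⟩
  set n := Monoid.exponent R with hn
  haveI : NeZero n := ⟨Monoid.exponent_ne_zero_of_finite⟩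
  obtain ⟨e, he⟩ : ∃ e, n = p ^ e := by
    cases nonempty_fintype R
    obtain ⟨m, hm⟩ := IsPGroup.iff_card.mp hR
    rw [Nat.card_eq_fintype_card] at hm
    have hdvd : n ∣ p ^ m := hm ▸ Group.exponent_dvd_card
    obtain ⟨e, _, hee⟩ := (Nat.dvd_prime_pow hp).mp hdvd
    exact ⟨e, hee⟩
  letI : Module (ZMod n) (Additive R) := AddCommGroup.zmodModule (by
    intro x
    show Additive.ofMul (x.toMul ^ n) = 0
    rw [Monoid.pow_exponent_eq_one]
    rfl)
  obtain ⟨α, hα⟩ := aux_equiv hp he (M := Additive R) (Additive.ofMul z) (Additive.ofMul z')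
    (by rw [addOrderOf_ofMul_eq_orderOf, hz]) (by rw [addOrderOf_ofMul_eq_orderOf, hz'])
  exact ⟨AddEquiv.toMultiplicative α, hα⟩
end

section
/- Let p be a prime, H a finite p-group with exp(Z(H)) = exp(H) = p^e, and l ≥ 1. Let h ∈ Z(H) with orderOf h = p^e, let α be an automorphism of H, let k be an integer coprime to p, and let z ∈ Z(H); set h' := α(h)^k · z^(p^l). Then h' ∈ Z(H) also has order p^e, and the two centrally amalgamated products Ĝ/⟨(ĝ^(p^l), h⁻¹)⟩ and Ĝ/⟨(ĝ^(p^l), h'⁻¹)⟩ are isomorphic as groups, where Ĝ := C × H with C cyclic of order p^(e+l) and generator ĝ. -/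
private lemma aux_pow_mod {G : Type*} [Group G] (w : G) (N m : ℕ) (hw : w ^ N = 1) :
    w ^ (m % N) = w ^ m := by
  conv_rhs => rw [← Nat.div_add_mod m N]
  rw [pow_add, pow_mul, hw, one_pow, one_mul]

private lemma aux_zpow {G : Type*} [Group G] (y : G) {N : ℕ} {a b t : ℤ}
    (hy : y ^ N = 1) (hab : a * b = 1 + N * t) : (y ^ a) ^ b = y := by
  rw [← zpow_mul, hab, zpow_add, zpow_one, zpow_mul, zpow_natCast, hy, one_zpow, mul_one]

theorem stmt_18 (p e l : ℕ) (hp : p.Prime) (H : Type*) [Group H] [Finite H]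
    (hH : IsPGroup p H)
    (hZexp : Monoid.exponent (Subgroup.center H) = p ^ e)
    (hexp : Monoid.exponent H = p ^ e)
    (h : H) (hhZ : h ∈ Subgroup.center H) (hord : orderOf h = p ^ e)
    (hl : 1 ≤ l)
    (α : H ≃* H) (k : ℤ) (hk : Int.gcd k p = 1)
    (z : H) (hz : z ∈ Subgroup.center H)
    (h' : H) (hh' : h' = (α h) ^ k * z ^ p ^ l)
    (K K' : Subgroup (Multiplicative (ZMod (p ^ (e + l))) × H))
    (hK : K = Subgroup.zpowers
      ((Multiplicative.ofAdd (1 : ZMod (p ^ (e + l)))) ^ p ^ l, h⁻¹))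
    (hK' : K' = Subgroup.zpowers
      ((Multiplicative.ofAdd (1 : ZMod (p ^ (e + l)))) ^ p ^ l, h'⁻¹))
    [K.Normal] [K'.Normal] :
    h' ∈ Subgroup.center H ∧ orderOf h' = p ^ e ∧
    Nonempty (((Multiplicative (ZMod (p ^ (e + l))) × H) ⧸ K) ≃*
      ((Multiplicative (ZMod (p ^ (e + l))) × H) ⧸ K')) := by
  subst hh' hK hK'
  haveI : Fact p.Prime := ⟨hp⟩
  set N : ℕ := p ^ (e + l) with hN
  haveI : NeZero N := ⟨pow_ne_zero _ hp.pos.ne'⟩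
  -- center membership
  have hαZ : α h ∈ Subgroup.center H := by
    rw [Subgroup.mem_center_iff]
    intro g
    have hc := Subgroup.mem_center_iff.mp hhZ (α.symm g)
    calc g * α h = α (α.symm g) * α h := by rw [MulEquiv.apply_symm_apply]
      _ = α (α.symm g * h) := by rw [map_mul]
      _ = α (h * α.symm g) := by rw [hc]
      _ = α h * g := by rw [map_mul, MulEquiv.apply_symm_apply]
  have hh'Z : (α h) ^ k * z ^ p ^ l ∈ Subgroup.center H :=
    mul_mem (zpow_mem hαZ k) (pow_mem hz _)
  -- exponent facts
  have uniH : ∀ x : H, x ^ N = 1 := by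
    intro x
    rw [hN, pow_add, pow_mul, ← hexp, Monoid.pow_exponent_eq_one, one_pow]
  have uniC : ∀ c : Multiplicative (ZMod N), c ^ N = 1 := by
    intro c
    rw [← ofAdd_toAdd c, ← ofAdd_nsmul, nsmul_eq_mul, ZMod.natCast_self, zero_mul, ofAdd_zero]
  have uni : ∀ y : Multiplicative (ZMod N) × H, y ^ N = 1 := by
    intro y
    exact Prod.ext (by rw [Prod.pow_fst, Prod.fst_one]; exact uniC _)
      (by rw [Prod.pow_snd, Prod.snd_one]; exact uniH _)
  have hzpe : z ^ p ^ e = 1 := by rw [← hexp]; exact Monoid.pow_exponent_eq_one z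
  have hA : (α h) ^ p ^ e = 1 := by rw [← hexp]; exact Monoid.pow_exponent_eq_one _
  have ordA : orderOf (α h) = p ^ e := by
    rw [show α h = α.toMonoidHom h from rfl, orderOf_injective α.toMonoidHom α.injective h, hord]
  -- coprimality
  have hcop : IsCoprime k (p : ℤ) := Int.isCoprime_iff_gcd_eq_one.mpr hk
  have hcopN : IsCoprime k ((N : ℕ) : ℤ) := by
    rw [hN]; push_cast; exact hcop.pow_right
  have hunit : IsUnit ((k : ZMod N)) := by
    have := hcopN.map (Int.castRingHom (ZMod N))
    simp only [map_intCast, map_natCast, ZMod.natCast_self, isCoprime_zero_right] at this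
    simpa using this
  set k' : ℕ := ((k : ZMod N)⁻¹).val with hk'
  have hkk'1 : ((k * (k' : ℤ) : ℤ) : ZMod N) = 1 := by
    push_cast
    rw [ZMod.natCast_val, ZMod.cast_id]
    exact ZMod.mul_inv_of_unit _ hunit
  have hdvd : (N : ℤ) ∣ k * (k' : ℤ) - 1 := by
    rw [← ZMod.intCast_zmod_eq_zero_iff_dvd]
    push_cast
    rw [sub_eq_zero]
    push_cast at hkk'1
    rw [hkk'1]
  obtain ⟨t, ht⟩ := hdvd
  have hmt : k * (k' : ℤ) = 1 + N * t := by linarith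
  have hmt' : (k' : ℤ) * k = 1 + N * t := by linarith [mul_comm k (k' : ℤ)]
  -- order of h'
  have hcz : ∀ x : H, Commute x z := fun x => Subgroup.mem_center_iff.mp hz x
  have c1 : Commute ((α h) ^ k) (z ^ p ^ l) := ((hcz (α h)).pow_right (p ^ l)).zpow_left k
  have hpe1 : ((α h) ^ k * z ^ p ^ l) ^ p ^ e = 1 := by
    rw [c1.mul_pow]
    have t1 : ((α h) ^ k) ^ p ^ e = 1 := by
      rw [← zpow_natCast ((α h) ^ k) (p ^ e), ← zpow_mul, mul_comm, zpow_mul,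
        zpow_natCast, hA, one_zpow]
    have t2 : (z ^ p ^ l) ^ p ^ e = 1 := by
      rw [← pow_mul, mul_comm, pow_mul, hzpe, one_pow]
    rw [t1, t2, one_mul]
  have ordh' : orderOf ((α h) ^ k * z ^ p ^ l) = p ^ e := by
    rcases Nat.eq_zero_or_pos e with he | he
    · subst he
      rw [pow_zero] at hpe1 ⊢
      rw [pow_one] at hpe1
      rw [orderOf_eq_one_iff.mpr hpe1]
    · obtain ⟨n, rfl⟩ : ∃ n, e = n + 1 := ⟨e - 1, by omega⟩
      refine orderOf_eq_prime_pow ?_ hpe1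
      intro hcon
      rw [c1.mul_pow] at hcon
      have t2 : (z ^ p ^ l) ^ p ^ n = 1 := by
        rw [← pow_mul, show p ^ l * p ^ n = p ^ (n + 1) * p ^ (l - 1) by
          rw [← pow_add, ← pow_add]; congr 1; omega, pow_mul, hzpe, one_pow]
      rw [t2, mul_one] at hcon
      have hz1 : (α h) ^ (k * (p ^ n : ℕ) : ℤ) = 1 := by
        rw [zpow_mul, zpow_natCast] at *
        exact hcon
      have hdvd2 : ((p : ℤ) ^ (n + 1)) ∣ k * (p ^ n : ℕ) := by
        have := orderOf_dvd_iff_zpow_eq_one.mpr hz1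
        rw [ordA] at this
        exact_mod_cast (by push_cast at this ⊢; exact this)
      have hdvd3 : ((p : ℤ) ^ (n + 1)) ∣ ((p ^ n : ℕ) : ℤ) :=
        (hcop.pow_right (n := n + 1)).symm.dvd_of_dvd_mul_left hdvd2
      have : p ^ (n + 1) ∣ p ^ n := by exact_mod_cast hdvd3
      have := (Nat.pow_dvd_pow_iff_le_right hp.one_lt).mp this
      omega
  refine ⟨hh'Z, ordh', ?_⟩
  -- the isomorphism
  set w : H := (z ^ k')⁻¹ with hwdef
  have hwZ : w ∈ Subgroup.center H := inv_mem (pow_mem hz k')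
  have hwN : w ^ N = 1 := by
    rw [hwdef, inv_pow, pow_right_comm, uniH, one_pow, inv_one]
  have hcw : ∀ x : H, Commute x w := fun x => Subgroup.mem_center_iff.mp hwZ x
  set φ : Multiplicative (ZMod N) × H →* Multiplicative (ZMod N) × H :=
    { toFun := fun y => (y.1 ^ k', α y.2 * w ^ (Multiplicative.toAdd y.1).val)
      map_one' := by simp
      map_mul' := by
        intro a b
        refine Prod.ext ?_ ?_
        · exact mul_pow _ _ _
        · show α (a.2 * b.2) * w ^ (Multiplicative.toAdd (a.1 * b.1)).val =
            (α a.2 * w ^ (Multiplicative.toAdd a.1).val) *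
            (α b.2 * w ^ (Multiplicative.toAdd b.1).val)
          have hc := (hcw (α b.2)).pow_right ((Multiplicative.toAdd a.1).val)
          rw [toAdd_mul, ZMod.val_add, aux_pow_mod w N _ hwN, pow_add, map_mul]
          calc α a.2 * α b.2 *
              (w ^ (Multiplicative.toAdd a.1).val * w ^ (Multiplicative.toAdd b.1).val)
              = α a.2 * (α b.2 * w ^ (Multiplicative.toAdd a.1).val) *
                w ^ (Multiplicative.toAdd b.1).val := by
                simp only [mul_assoc]
            _ = α a.2 * (w ^ (Multiplicative.toAdd a.1).val * α b.2) *
                w ^ (Multiplicative.toAdd b.1).val := by rw [hc.eq]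
            _ = α a.2 * w ^ (Multiplicative.toAdd a.1).val *
                (α b.2 * w ^ (Multiplicative.toAdd b.1).val) := by
                simp only [mul_assoc] } with hφ
  have hinj : Function.Injective φ := by
    refine (injective_iff_map_eq_one φ).mpr ?_
    intro y hy
    have h1 : y.1 ^ k' = 1 := congrArg Prod.fst hy
    have hy1 : y.1 = 1 := by
      have := aux_zpow y.1 (uniC y.1) hmt'
      calc y.1 = (y.1 ^ (k' : ℤ)) ^ (k : ℤ) := this.symm
        _ = (y.1 ^ k') ^ (k : ℤ) := by rw [zpow_natCast]
        _ = 1 := by rw [h1, one_zpow]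
    have h2 : α y.2 * w ^ (Multiplicative.toAdd y.1).val = 1 := congrArg Prod.snd hy
    rw [hy1] at h2
    simp only [toAdd_one, ZMod.val_zero, pow_zero, mul_one] at h2
    have hy2 : y.2 = 1 := α.injective (by simpa using h2)
    exact Prod.ext hy1 hy2
  set φe : (Multiplicative (ZMod N) × H) ≃* (Multiplicative (ZMod N) × H) :=
    MulEquiv.ofBijective φ (Finite.injective_iff_bijective.mp hinj) with hφe
  set g₁ : Multiplicative (ZMod N) := Multiplicative.ofAdd (1 : ZMod N) with hg₁
  set gen : Multiplicative (ZMod N) × H := (g₁ ^ p ^ l, h⁻¹) with hgen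
  set gen' : Multiplicative (ZMod N) × H := (g₁ ^ p ^ l, ((α h) ^ k * z ^ p ^ l)⁻¹) with hgen'
  have hφgen : φ gen = gen' ^ k' := by
    refine Prod.ext ?_ ?_
    · rw [Prod.pow_fst]; rfl
    · rw [Prod.pow_snd]
      show α h⁻¹ * w ^ (Multiplicative.toAdd (g₁ ^ p ^ l)).val =
        (((α h) ^ k * z ^ p ^ l)⁻¹) ^ k'
      have hv : (Multiplicative.toAdd (g₁ ^ p ^ l)).val = p ^ l % N := by
        rw [toAdd_pow, hg₁, toAdd_ofAdd, nsmul_eq_mul, mul_one, ZMod.val_natCast]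
      rw [hv, aux_pow_mod w N _ hwN, map_inv]
      -- compute in the (commutative) center
      set Zc := Subgroup.center H
      set A₀ : Zc := ⟨α h, hαZ⟩ with hA₀
      set z₀ : Zc := ⟨z, hz⟩ with hz₀
      have hA₀N : A₀ ^ N = 1 := by
        ext
        push_cast [hA₀]
        exact uniH (α h)
      have e1 : (A₀ ^ k) ^ (k' : ℤ) = A₀ := aux_zpow A₀ hA₀N hmt
      have main : ((A₀ ^ k * z₀ ^ p ^ l)⁻¹) ^ k' = A₀⁻¹ * ((z₀ ^ k')⁻¹) ^ p ^ l := by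
        calc ((A₀ ^ k * z₀ ^ p ^ l)⁻¹) ^ k'
            = ((A₀ ^ k * z₀ ^ p ^ l) ^ k')⁻¹ := inv_pow _ _
          _ = ((A₀ ^ k) ^ k' * (z₀ ^ p ^ l) ^ k')⁻¹ := by
              rw [(show Commute (A₀ ^ k) (z₀ ^ p ^ l) from Subtype.ext
                (Subgroup.mem_center_iff.mp (z₀ ^ p ^ l).2 ((A₀ ^ k : Zc) : H))).mul_pow]
          _ = (A₀ * (z₀ ^ k') ^ p ^ l)⁻¹ := by
              rw [← zpow_natCast (A₀ ^ k) k', e1, pow_right_comm]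
          _ = A₀⁻¹ * ((z₀ ^ k')⁻¹) ^ p ^ l := by
              rw [(show Commute A₀ ((z₀ ^ k') ^ p ^ l) from Subtype.ext
                (Subgroup.mem_center_iff.mp ((z₀ ^ k') ^ p ^ l).2 (A₀ : H))).mul_inv, inv_pow]
      have := congrArg (Subtype.val) main
      push_cast [hA₀, hz₀] at this
      rw [this.symm]
  have hmap : Subgroup.map (φe : (Multiplicative (ZMod N) × H) →* (Multiplicative (ZMod N) × H))
      (Subgroup.zpowers gen) = Subgroup.zpowers gen' := by
    rw [MonoidHom.map_zpowers]
    have : (φe : (Multiplicative (ZMod N) × H) →* (Multiplicative (ZMod N) × H)) gen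
        = gen' ^ k' := by exact hφgen
    rw [this]
    apply le_antisymm
    · exact Subgroup.zpowers_le.mpr (Subgroup.mem_zpowers_iff.mpr ⟨(k' : ℤ), zpow_natCast _ _⟩)
    · refine Subgroup.zpowers_le.mpr (Subgroup.mem_zpowers_iff.mpr ⟨k, ?_⟩)
      rw [← zpow_natCast gen' k']
      exact aux_zpow gen' (uni gen') hmt'
  exact ⟨QuotientGroup.congr _ _ φe hmap⟩
end
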